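/- arXiv:2503.08863 — 5 statements merged into one kernel-verified Lean document; each statement's English description precedes it below -/
import Mathlib

section
/- Let T be a finite set of 3D items whose widths and depths all lie in (0,1] and whose heights are all at most h_max, for some h_max ∈ (0,1]. Then all items of T can be packed into the strip [0,1]×[0,1]×[0, 4·v(T) + 8·h_max]. -/
/-- The open region occupied by a 3D item of width `w`, depth `d`, height `h`
placed with its bottom-left-back corner at `(x, y, z)`. -/
def ItemRegion (w d h x y z : ℝ) : Set (ℝ × ℝ × ℝ) :=
  Set.Ioo x (x + w) ×ˢ (Set.Ioo y (y + d) ×ˢ Set.Ioo z (z + h))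

/-- `IsPacking T w d h W D H x y z` : the placement `(x, y, z)` is a feasible
axis-aligned non-overlapping packing of the items of `T` (with dimensions
`w`, `d`, `h`) into the box `[0,W] × [0,D] × [0,H]`. -/
def IsPacking {ι : Type*} (T : Finset ι) (w d h : ι → ℝ) (W D H : ℝ)
    (x y z : ι → ℝ) : Prop :=
  (∀ i ∈ T, 0 ≤ x i ∧ x i + w i ≤ W ∧ 0 ≤ y i ∧ y i + d i ≤ D ∧
      0 ≤ z i ∧ z i + h i ≤ H) ∧
  (∀ i ∈ T, ∀ j ∈ T, i ≠ j →
    Disjoint (ItemRegion (w i) (d i) (h i) (x i) (y i) (z i))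
             (ItemRegion (w j) (d j) (h j) (x j) (y j) (z j)))

/-- The items of `T` can be packed into the box `[0,W] × [0,D] × [0,H]`. -/
def CanPack {ι : Type*} (T : Finset ι) (w d h : ι → ℝ) (W D H : ℝ) : Prop :=
  ∃ x y z : ι → ℝ, IsPacking T w d h W D H x y z

namespace Stmt0Aux

lemma mem_itemRegion {w d h x y z : ℝ} {p : ℝ × ℝ × ℝ} :
    p ∈ ItemRegion w d h x y z ↔
      (x < p.1 ∧ p.1 < x + w) ∧ (y < p.2.1 ∧ p.2.1 < y + d) ∧ (z < p.2.2 ∧ p.2.2 < z + h) := by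
  simp [ItemRegion, Set.mem_prod, Set.mem_Ioo, and_assoc]

lemma disjoint_sep_x {w d h x y z w' d' h' x' y' z' : ℝ} (hs : x + w ≤ x') :
    Disjoint (ItemRegion w d h x y z) (ItemRegion w' d' h' x' y' z') := by
  rw [Set.disjoint_left]; intro p hp hp'
  rw [mem_itemRegion] at hp hp'; linarith [hp.1.2, hp'.1.1]

lemma disjoint_sep_y {w d h x y z w' d' h' x' y' z' : ℝ} (hs : y + d ≤ y') :
    Disjoint (ItemRegion w d h x y z) (ItemRegion w' d' h' x' y' z') := by
  rw [Set.disjoint_left]; intro p hp hp'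
  rw [mem_itemRegion] at hp hp'; linarith [hp.2.1.2, hp'.2.1.1]

lemma disjoint_sep_z {w d h x y z w' d' h' x' y' z' : ℝ} (hs : z + h ≤ z') :
    Disjoint (ItemRegion w d h x y z) (ItemRegion w' d' h' x' y' z') := by
  rw [Set.disjoint_left]; intro p hp hp'
  rw [mem_itemRegion] at hp hp'; linarith [hp.2.2.2, hp'.2.2.1]

lemma disjoint_translate {w d h x y z w' d' h' x' y' z' a b c : ℝ}
    (hd : Disjoint (ItemRegion w d h x y z) (ItemRegion w' d' h' x' y' z')) :
    Disjoint (ItemRegion w d h (x + a) (y + b) (z + c))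
      (ItemRegion w' d' h' (x' + a) (y' + b) (z' + c)) := by
  rw [Set.disjoint_left] at hd ⊢
  intro p hp hp'
  rw [mem_itemRegion] at hp hp'
  have h1 : (p.1 - a, p.2.1 - b, p.2.2 - c) ∈ ItemRegion w d h x y z := by
    rw [mem_itemRegion]; dsimp only; refine ⟨⟨?_, ?_⟩, ⟨?_, ?_⟩, ⟨?_, ?_⟩⟩ <;> linarith [hp.1.1, hp.1.2, hp.2.1.1, hp.2.1.2, hp.2.2.1, hp.2.2.2]
  have h2 := hd h1
  rw [mem_itemRegion] at h2
  apply h2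
  dsimp only
  refine ⟨⟨?_, ?_⟩, ⟨?_, ?_⟩, ⟨?_, ?_⟩⟩ <;> linarith [hp'.1.1, hp'.1.2, hp'.2.1.1, hp'.2.1.2, hp'.2.2.1, hp'.2.2.2]

variable {ι : Type*}

/-- packing of all items of the list `L` into box `[0,W]×[0,D]×[0,H]`. -/
def LP (w d h : ι → ℝ) (W D H : ℝ) (L : List ι) : Prop :=
  ∃ x y z : ι → ℝ,
    (∀ i ∈ L, 0 ≤ x i ∧ x i + w i ≤ W ∧ 0 ≤ y i ∧ y i + d i ≤ D ∧
        0 ≤ z i ∧ z i + h i ≤ H) ∧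
    (∀ i ∈ L, ∀ j ∈ L, i ≠ j →
      Disjoint (ItemRegion (w i) (d i) (h i) (x i) (y i) (z i))
               (ItemRegion (w j) (d j) (h j) (x j) (y j) (z j)))

variable {w d h : ι → ℝ} {W D H : ℝ}

lemma lp_nil : LP w d h W D H [] := ⟨0, 0, 0, by simp, by simp⟩

lemma lp_single (i : ι) : LP w d h (w i) (d i) (h i) [i] := by
  refine ⟨0, 0, 0, ?_, ?_⟩ <;> simp

lemma lp_subset {L L' : List ι} (hsub : ∀ i ∈ L', i ∈ L) (hL : LP w d h W D H L) :
    LP w d h W D H L' := by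
  obtain ⟨x, y, z, h1, h2⟩ := hL
  exact ⟨x, y, z, fun i hi => h1 i (hsub i hi), fun i hi j hj => h2 i (hsub i hi) j (hsub j hj)⟩

lemma lp_mono {W' D' H' : ℝ} (hW : W ≤ W') (hD : D ≤ D') (hH : H ≤ H')
    (hL : LP w d h W D H L) : LP w d h W' D' H' L := by
  obtain ⟨x, y, z, h1, h2⟩ := hL
  refine ⟨x, y, z, fun i hi => ?_, h2⟩
  obtain ⟨a1, a2, a3, a4, a5, a6⟩ := h1 i hi
  exact ⟨a1, by linarith, a3, by linarith, a5, by linarith⟩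

lemma lp_append_x {W1 W2 : ℝ} {L1 L2 : List ι} (hW1 : 0 ≤ W1) (hW2 : 0 ≤ W2)
    (h1 : LP w d h W1 D H L1) (h2 : LP w d h W2 D H L2) :
    LP w d h (W1 + W2) D H (L1 ++ L2) := by
  classical
  obtain ⟨x1, y1, z1, hin1, hdj1⟩ := h1
  obtain ⟨x2, y2, z2, hin2, hdj2⟩ := h2
  refine ⟨fun i => if i ∈ L1 then x1 i else x2 i + W1,
          fun i => if i ∈ L1 then y1 i else y2 i,
          fun i => if i ∈ L1 then z1 i else z2 i, ?_, ?_⟩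
  · intro i hi
    by_cases hmem : i ∈ L1 <;> simp only [hmem, if_pos, if_neg, if_true, if_false]
    · obtain ⟨a1, a2, a3, a4, a5, a6⟩ := hin1 i hmem
      exact ⟨a1, by linarith, a3, a4, a5, a6⟩
    · have hi2 : i ∈ L2 := (List.mem_append.1 hi).resolve_left hmem
      obtain ⟨a1, a2, a3, a4, a5, a6⟩ := hin2 i hi2
      exact ⟨by linarith, by linarith, a3, a4, a5, a6⟩
  · intro i hi j hj hne
    by_cases hmi : i ∈ L1 <;> by_cases hmj : j ∈ L1 <;>
      simp only [hmi, hmj, if_pos, if_neg, if_true, if_false]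
    · exact hdj1 i hmi j hmj hne
    · -- i ∈ L1, j ∉ L1 : separation in x
      exact disjoint_sep_x (by linarith [(hin1 i hmi).2.1, (hin2 j ((List.mem_append.1 hj).resolve_left hmj)).1])
    · exact (disjoint_sep_x (by linarith [(hin1 j hmj).2.1, (hin2 i ((List.mem_append.1 hi).resolve_left hmi)).1])).symm
    · have hi2 : i ∈ L2 := (List.mem_append.1 hi).resolve_left hmi
      have hj2 : j ∈ L2 := (List.mem_append.1 hj).resolve_left hmj
      have := disjoint_translate (a := W1) (b := 0) (c := 0) (hdj2 i hi2 j hj2 hne)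
      simpa using this


lemma lp_append_y {D1 D2 : ℝ} {L1 L2 : List ι} (hD1 : 0 ≤ D1) (hD2 : 0 ≤ D2)
    (h1 : LP w d h W D1 H L1) (h2 : LP w d h W D2 H L2) :
    LP w d h W (D1 + D2) H (L1 ++ L2) := by
  classical
  obtain ⟨x1, y1, z1, hin1, hdj1⟩ := h1
  obtain ⟨x2, y2, z2, hin2, hdj2⟩ := h2
  refine ⟨fun i => if i ∈ L1 then x1 i else x2 i,
          fun i => if i ∈ L1 then y1 i else y2 i + D1,
          fun i => if i ∈ L1 then z1 i else z2 i, ?_, ?_⟩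
  · intro i hi
    by_cases hmem : i ∈ L1 <;> simp only [hmem, if_pos, if_neg, if_true, if_false]
    · obtain ⟨a1, a2, a3, a4, a5, a6⟩ := hin1 i hmem
      exact ⟨a1, a2, a3, by linarith, a5, a6⟩
    · obtain ⟨a1, a2, a3, a4, a5, a6⟩ := hin2 i ((List.mem_append.1 hi).resolve_left hmem)
      exact ⟨a1, a2, by linarith, by linarith, a5, a6⟩
  · intro i hi j hj hne
    by_cases hmi : i ∈ L1 <;> by_cases hmj : j ∈ L1 <;>
      simp only [hmi, hmj, if_pos, if_neg, if_true, if_false]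
    · exact hdj1 i hmi j hmj hne
    · exact disjoint_sep_y (by linarith [(hin1 i hmi).2.2.2.1,
        (hin2 j ((List.mem_append.1 hj).resolve_left hmj)).2.2.1])
    · exact (disjoint_sep_y (by linarith [(hin1 j hmj).2.2.2.1,
        (hin2 i ((List.mem_append.1 hi).resolve_left hmi)).2.2.1])).symm
    · have := disjoint_translate (a := 0) (b := D1) (c := 0)
        (hdj2 i ((List.mem_append.1 hi).resolve_left hmi) j
          ((List.mem_append.1 hj).resolve_left hmj) hne)
      simpa using this

lemma lp_append_z {H1 H2 : ℝ} {L1 L2 : List ι} (hH1 : 0 ≤ H1) (hH2 : 0 ≤ H2)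
    (h1 : LP w d h W D H1 L1) (h2 : LP w d h W D H2 L2) :
    LP w d h W D (H1 + H2) (L1 ++ L2) := by
  classical
  obtain ⟨x1, y1, z1, hin1, hdj1⟩ := h1
  obtain ⟨x2, y2, z2, hin2, hdj2⟩ := h2
  refine ⟨fun i => if i ∈ L1 then x1 i else x2 i,
          fun i => if i ∈ L1 then y1 i else y2 i,
          fun i => if i ∈ L1 then z1 i else z2 i + H1, ?_, ?_⟩
  · intro i hi
    by_cases hmem : i ∈ L1 <;> simp only [hmem, if_pos, if_neg, if_true, if_false]
    · obtain ⟨a1, a2, a3, a4, a5, a6⟩ := hin1 i hmem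
      exact ⟨a1, a2, a3, a4, a5, by linarith⟩
    · obtain ⟨a1, a2, a3, a4, a5, a6⟩ := hin2 i ((List.mem_append.1 hi).resolve_left hmem)
      exact ⟨a1, a2, a3, a4, by linarith, by linarith⟩
  · intro i hi j hj hne
    by_cases hmi : i ∈ L1 <;> by_cases hmj : j ∈ L1 <;>
      simp only [hmi, hmj, if_pos, if_neg, if_true, if_false]
    · exact hdj1 i hmi j hmj hne
    · exact disjoint_sep_z (by linarith [(hin1 i hmi).2.2.2.2.2,
        (hin2 j ((List.mem_append.1 hj).resolve_left hmj)).2.2.2.2.1])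
    · exact (disjoint_sep_z (by linarith [(hin1 j hmj).2.2.2.2.2,
        (hin2 i ((List.mem_append.1 hi).resolve_left hmi)).2.2.2.2.1])).symm
    · have := disjoint_translate (a := 0) (b := 0) (c := H1)
        (hdj2 i ((List.mem_append.1 hi).resolve_left hmi) j
          ((List.mem_append.1 hj).resolve_left hmj) hne)
      simpa using this


/-! ### sums over lists -/

def SL (f : ι → ℝ) (L : List ι) : ℝ := (L.map f).sum

@[simp] lemma SL_nil (f : ι → ℝ) : SL f ([] : List ι) = 0 := rfl

@[simp] lemma SL_cons (f : ι → ℝ) (i : ι) (t : List ι) : SL f (i :: t) = f i + SL f t := by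
  simp [SL]

@[simp] lemma SL_append (f : ι → ℝ) (L1 L2 : List ι) :
    SL f (L1 ++ L2) = SL f L1 + SL f L2 := by
  simp [SL]

lemma SL_nonneg {f : ι → ℝ} {L : List ι} (hf : ∀ i ∈ L, 0 ≤ f i) : 0 ≤ SL f L := by
  induction L with
  | nil => simp
  | cons i t ih =>
    simp only [SL_cons]
    have := hf i (by simp)
    have := ih (fun j hj => hf j (by simp [hj]))
    linarith

lemma SL_le_SL {f g : ι → ℝ} {L : List ι} (hfg : ∀ i ∈ L, f i ≤ g i) : SL f L ≤ SL g L := by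
  induction L with
  | nil => simp
  | cons i t ih =>
    simp only [SL_cons]
    have := hfg i (by simp)
    have := ih (fun j hj => hfg j (by simp [hj]))
    linarith

lemma SL_mul_right (f : ι → ℝ) (c : ℝ) (L : List ι) :
    SL (fun i => f i * c) L = SL f L * c := by
  simp [SL, List.sum_map_mul_right]

lemma SL_perm {f : ι → ℝ} {L L' : List ι} (hp : L.Perm L') : SL f L = SL f L' :=
  (hp.map f).sum_eq

/-! ### greedy chunking -/

lemma chunk_aux (s : ι → ℝ) :
    ∀ (L : List ι) (cap : ℝ), 0 ≤ cap →
      ∃ c rest : List ι, L = c ++ rest ∧ SL s c ≤ cap ∧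
        ∀ f r', rest = f :: r' → cap < SL s c + s f := by
  intro L
  induction L with
  | nil => exact fun cap hcap => ⟨[], [], by simp, by simpa, by simp⟩
  | cons i t ih =>
    intro cap hcap
    by_cases hfit : s i ≤ cap
    · obtain ⟨c, rest, heq, hsum, hov⟩ := ih (cap - s i) (by linarith)
      refine ⟨i :: c, rest, by simp [heq], by simp; linarith, ?_⟩
      intro f r' hr
      have := hov f r' hr
      simp only [SL_cons]
      linarith
    · exact ⟨[], i :: t, by simp, by simpa, fun f r' hr => by
        cases hr; simp; linarith [not_le.1 hfit]⟩

lemma exists_chunk (s : ι → ℝ) (cap : ℝ) (i : ι) (t : List ι) (hi : s i ≤ cap) :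
    ∃ c rest : List ι, i :: t = (i :: c) ++ rest ∧ SL s (i :: c) ≤ cap ∧
      ∀ f r', rest = f :: r' → cap < SL s (i :: c) + s f := by
  obtain ⟨c, rest, heq, hsum, hov⟩ := chunk_aux s t (cap - s i) (by
    have : 0 ≤ cap - s i ↔ s i ≤ cap := by constructor <;> intro <;> linarith
    exact this.2 hi)
  refine ⟨c, rest, by simp [heq], by simp; linarith, fun f r' hr => by
    have := hov f r' hr; simp only [SL_cons]; linarith⟩

/-! ### sorted permutations -/

lemma exists_sorted_perm (key : ι → ℝ) (L : List ι) :
    ∃ L' : List ι, L'.Perm L ∧ L'.Pairwise (fun i j => key j ≤ key i) := by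
  classical
  refine ⟨L.mergeSort (fun i j => decide (key j ≤ key i)), List.mergeSort_perm _ _, ?_⟩
  have hs := List.pairwise_mergeSort (le := fun i j => decide (key j ≤ key i))
    (fun a b c hab hbc => by simp at hab hbc ⊢; linarith)
    (fun a b => by simp; exact le_total _ _) L
  exact hs.imp (fun {a b} hab => by simpa using hab)

/-! ### rows -/

lemma pack_row_x {L : List ι} (hw : ∀ i ∈ L, 0 ≤ w i) (hd : ∀ i ∈ L, d i ≤ D)
    (hh : ∀ i ∈ L, h i ≤ H) (hD : 0 ≤ D) (hH : 0 ≤ H) :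
    ∀ {W' : ℝ}, SL w L ≤ W' → LP w d h W' D H L := by
  induction L with
  | nil => exact fun _ => lp_nil
  | cons i t ih =>
    intro W' hsum
    have h1 : LP w d h (w i) D H [i] :=
      lp_mono le_rfl (hd i (by simp)) (hh i (by simp)) (lp_single i)
    have hwt : 0 ≤ SL w t := SL_nonneg (fun j hj => hw j (by simp [hj]))
    have h2 : LP w d h (W' - w i) D H t := by
      apply ih (fun j hj => hw j (by simp [hj])) (fun j hj => hd j (by simp [hj]))
        (fun j hj => hh j (by simp [hj]))
      simp only [SL_cons] at hsum; linarith
    have := lp_append_x (hw i (by simp)) (by simp only [SL_cons] at hsum; linarith) h1 h2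
    rw [show w i + (W' - w i) = W' by ring] at this
    simpa using this

lemma pack_row_y {L : List ι} (hdpos : ∀ i ∈ L, 0 ≤ d i) (hw : ∀ i ∈ L, w i ≤ W)
    (hh : ∀ i ∈ L, h i ≤ H) (hW : 0 ≤ W) (hH : 0 ≤ H) :
    ∀ {D' : ℝ}, SL d L ≤ D' → LP w d h W D' H L := by
  induction L with
  | nil => exact fun _ => lp_nil
  | cons i t ih =>
    intro D' hsum
    have h1 : LP w d h W (d i) H [i] :=
      lp_mono (hw i (by simp)) le_rfl (hh i (by simp)) (lp_single i)
    have hdt : 0 ≤ SL d t := SL_nonneg (fun j hj => hdpos j (by simp [hj]))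
    have h2 : LP w d h W (D' - d i) H t := by
      apply ih (fun j hj => hdpos j (by simp [hj])) (fun j hj => hw j (by simp [hj]))
        (fun j hj => hh j (by simp [hj]))
      simp only [SL_cons] at hsum; linarith
    have := lp_append_y (hdpos i (by simp)) (by simp only [SL_cons] at hsum; linarith) h1 h2
    rw [show d i + (D' - d i) = D' by ring] at this
    simpa using this


/-! ### heads -/

def keyHead (f : ι → ℝ) : List ι → ℝ
  | [] => 0
  | i :: _ => f i

@[simp] lemma keyHead_nil (f : ι → ℝ) : keyHead f ([] : List ι) = 0 := rfl

@[simp] lemma keyHead_cons (f : ι → ℝ) (i : ι) (t : List ι) : keyHead f (i :: t) = f i := rfl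

/-! ### layers of small items (NFDH inside a unit square layer) -/

lemma pack_layer : ∀ (n : ℕ) (L : List ι), L.length ≤ n →
    L.Pairwise (fun a b => d b ≤ d a) →
    (∀ i ∈ L, 0 < w i ∧ w i ≤ 1/4 ∧ 0 < d i) →
    (∀ i ∈ L, h i ≤ H) → 0 ≤ H →
    LP w d h 1 (keyHead d L + (4/3) * SL (fun i => w i * d i) L) H L := by
  intro n
  induction n with
  | zero =>
    intro L hlen _ _ _ _
    rw [List.length_eq_zero_iff.1 (Nat.le_zero.1 hlen)]
    exact lp_nil
  | succ n ih =>
    intro L hlen hsort hdim hht hH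
    match L with
    | [] => exact lp_nil
    | i :: t =>
      obtain ⟨hwi, hwi4, hdi⟩ := hdim i (by simp)
      obtain ⟨c, rest, heq, hsum, hov⟩ := exists_chunk w 1 i t (by linarith)
      set c' : List ι := i :: c with hc'
      have hsubc' : ∀ j ∈ c', j ∈ i :: t := by rw [heq]; intro j hj; exact List.mem_append_left _ hj
      have hsubr : ∀ j ∈ rest, j ∈ i :: t := by rw [heq]; intro j hj; exact List.mem_append_right _ hj
      rw [heq] at hsort
      obtain ⟨hsc, hsr, hcross⟩ := List.pairwise_append.1 hsort
      -- the shelf c'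
      have hrow : LP w d h 1 (d i) H c' := by
        apply pack_row_x (fun j hj => le_of_lt (hdim j (hsubc' j hj)).1)
          (fun j hj => ?_) (fun j hj => hht j (hsubc' j hj)) (le_of_lt hdi) hH hsum
        · rcases List.mem_cons.1 hj with rfl | hj
          · exact le_rfl
          · exact (List.pairwise_cons.1 hsc).1 j hj
      -- the rest
      have hlenr : rest.length ≤ n := by
        have h' := congrArg List.length heq
        simp only [List.length_cons, List.length_append] at h'
        simp only [List.length_cons] at hlen
        have hc'len : c'.length = c.length + 1 := by simp [hc']
        omega
      have hrest := ih rest hlenr hsr (fun j hj => hdim j (hsubr j hj))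
        (fun j hj => hht j (hsubr j hj)) hH
      have hnn1 : 0 ≤ keyHead d rest + (4/3) * SL (fun i => w i * d i) rest := by
        have h1 : 0 ≤ SL (fun i => w i * d i) rest := SL_nonneg (fun j hj => by
          obtain ⟨a, _, b⟩ := hdim j (hsubr j hj); positivity)
        have h2 : 0 ≤ keyHead d rest := by
          match rest with
          | [] => simp
          | f :: r' => exact le_of_lt (hdim f (hsubr f (by simp))).2.2
        linarith
      have happ := lp_append_y (le_of_lt hdi) hnn1 hrow hrest
      rw [← heq] at happ
      apply lp_mono le_rfl ?_ le_rfl happ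
      -- arithmetic: d i + (keyHead d rest + 4/3 * SL rest) ≤ keyHead d (i::t) + 4/3 * SL (i::t)
      have hsplit : SL (fun i => w i * d i) (i :: t) =
          SL (fun i => w i * d i) c' + SL (fun i => w i * d i) rest := by
        rw [heq]; simp
      have hkey : keyHead d rest ≤ (4/3) * SL (fun i => w i * d i) c' := by
        match rest with
        | [] =>
          simp only [keyHead_nil]
          have : 0 ≤ SL (fun i => w i * d i) c' := SL_nonneg (fun j hj => by
            obtain ⟨a, _, b⟩ := hdim j (hsubc' j hj); positivity)
          linarith
        | f :: r' =>
          simp only [keyHead_cons]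
          have hdf : 0 < d f := (hdim f (hsubr f (by simp))).2.2
          have hwf : w f ≤ 1/4 := (hdim f (hsubr f (by simp))).2.1
          have hov' := hov f r' rfl
          have hwc : (3:ℝ)/4 ≤ SL w c' := by linarith
          have hmin : ∀ j ∈ c', d f ≤ d j := fun j hj => hcross j hj f (by simp)
          have h1 : SL (fun j => w j * d f) c' ≤ SL (fun j => w j * d j) c' :=
            SL_le_SL (fun j hj => by
              have := hmin j hj
              have := (hdim j (hsubc' j hj)).1
              nlinarith)
          rw [SL_mul_right] at h1
          nlinarith
      simp only [keyHead_cons]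
      linarith [hsplit, hkey]


/-! ### packing small items (w,d ≤ 1/4) into the strip -/

lemma pack_small : ∀ (n : ℕ) (L : List ι), L.length ≤ n →
    L.Pairwise (fun a b => h b ≤ h a) →
    (∀ i ∈ L, 0 < w i ∧ w i ≤ 1/4 ∧ 0 < d i ∧ d i ≤ 1/4 ∧ 0 < h i) →
    LP w d h 1 1 (keyHead h L + (16/5) * SL (fun i => w i * d i * h i) L) L := by
  intro n
  induction n with
  | zero =>
    intro L hlen _ _
    rw [List.length_eq_zero_iff.1 (Nat.le_zero.1 hlen)]
    exact lp_nil
  | succ n ih =>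
    intro L hlen hsort hdim
    match L with
    | [] => exact lp_nil
    | i :: t =>
      obtain ⟨hwi, hwi4, hdi, hdi4, hhi⟩ := hdim i (by simp)
      obtain ⟨c, rest, heq, hsum, hov⟩ := exists_chunk (fun j => w j * d j) (3/8) i t
        (by nlinarith)
      set c' : List ι := i :: c with hc'
      have hsubc' : ∀ j ∈ c', j ∈ i :: t := by rw [heq]; intro j hj; exact List.mem_append_left _ hj
      have hsubr : ∀ j ∈ rest, j ∈ i :: t := by rw [heq]; intro j hj; exact List.mem_append_right _ hj
      rw [heq] at hsort
      obtain ⟨hsc, hsr, hcross⟩ := List.pairwise_append.1 hsort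
      -- pack the layer c' into the unit square with height h i
      have hlayer : LP w d h 1 1 (h i) c' := by
        obtain ⟨c'', hperm, hsort''⟩ := exists_sorted_perm d c'
        have hsub'' : ∀ j ∈ c'', j ∈ c' := fun j hj => hperm.mem_iff.1 hj
        have hlay := pack_layer (w:=w) (d:=d) (h:=h) (H := h i) c''.length c'' le_rfl hsort''
          (fun j hj => by obtain ⟨a1,a2,a3,a4,a5⟩ := hdim j (hsubc' j (hsub'' j hj)); exact ⟨a1,a2,a3⟩)
          (fun j hj => ?_) (le_of_lt hhi)
        · apply lp_subset (fun j hj => (hperm.symm.mem_iff).1 hj)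
          apply lp_mono le_rfl ?_ le_rfl hlay
          have hSeq : SL (fun i => w i * d i) c'' = SL (fun i => w i * d i) c' :=
            SL_perm hperm
          have hkh : keyHead d c'' ≤ 1/4 := by
            match c'' with
            | [] => norm_num
            | f :: r' =>
              exact (hdim f (hsubc' f (hsub'' f (by simp)))).2.2.2.1
          rw [hSeq]
          linarith
        · -- heights within layer ≤ h i
          rcases List.mem_cons.1 (hsub'' j hj) with rfl | hj'
          · exact le_rfl
          · exact (List.pairwise_cons.1 hsc).1 j hj'
      -- the rest
      have hlenr : rest.length ≤ n := by
        have h' := congrArg List.length heq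
        simp only [List.length_cons, List.length_append] at h'
        simp only [List.length_cons] at hlen
        have hc'len : c'.length = c.length + 1 := by simp [hc']
        omega
      have hrest := ih rest hlenr hsr (fun j hj => hdim j (hsubr j hj))
      have hnn1 : 0 ≤ keyHead h rest + (16/5) * SL (fun i => w i * d i * h i) rest := by
        have h1 : 0 ≤ SL (fun i => w i * d i * h i) rest := SL_nonneg (fun j hj => by
          obtain ⟨a1,_,a3,_,a5⟩ := hdim j (hsubr j hj); positivity)
        have h2 : 0 ≤ keyHead h rest := by
          match rest with
          | [] => simp
          | f :: r' => exact le_of_lt (hdim f (hsubr f (by simp))).2.2.2.2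
        linarith
      have happ := lp_append_z (le_of_lt hhi) hnn1 hlayer hrest
      rw [← heq] at happ
      apply lp_mono le_rfl le_rfl ?_ happ
      have hsplit : SL (fun i => w i * d i * h i) (i :: t) =
          SL (fun i => w i * d i * h i) c' + SL (fun i => w i * d i * h i) rest := by
        rw [heq]; simp
      have hkey : keyHead h rest ≤ (16/5) * SL (fun i => w i * d i * h i) c' := by
        match rest with
        | [] =>
          simp only [keyHead_nil]
          have : 0 ≤ SL (fun i => w i * d i * h i) c' := SL_nonneg (fun j hj => by
            obtain ⟨a1,_,a3,_,a5⟩ := hdim j (hsubc' j hj); positivity)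
          linarith
        | f :: r' =>
          simp only [keyHead_cons]
          obtain ⟨hwf, hwf4, hdf, hdf4, hhf⟩ := hdim f (hsubr f (by simp))
          have hov' := hov f r' rfl
          have hwc : (5:ℝ)/16 ≤ SL (fun j => w j * d j) c' := by nlinarith
          have hmin : ∀ j ∈ c', h f ≤ h j := fun j hj => hcross j hj f (by simp)
          have h1 : SL (fun j => (w j * d j) * h f) c' ≤ SL (fun j => w j * d j * h j) c' :=
            SL_le_SL (fun j hj => by
              have h2 := hmin j hj
              obtain ⟨a1,_,a3,_,_⟩ := hdim j (hsubc' j hj)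
              nlinarith [mul_nonneg (mul_nonneg a1.le a3.le) (sub_nonneg.2 h2)])
          rw [SL_mul_right] at h1
          nlinarith
      simp only [keyHead_cons]
      linarith [hsplit, hkey]


/-! ### 2D-style NFDH strip packing for wide / deep items -/

lemma pack_nf2d : ∀ (n : ℕ) (L : List ι), L.length ≤ n →
    L.Pairwise (fun a b => h b ≤ h a) →
    (∀ i ∈ L, 0 < w i ∧ w i ≤ W ∧ 0 < d i ∧ d i ≤ 1 ∧ 0 < h i) → 0 ≤ W →
    LP w d h W 1 (keyHead h L + 2 * SL (fun i => d i * h i) L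
      - keyHead (fun i => d i * h i) L) L := by
  intro n
  induction n with
  | zero =>
    intro L hlen _ _ _
    rw [List.length_eq_zero_iff.1 (Nat.le_zero.1 hlen)]
    exact lp_nil
  | succ n ih =>
    intro L hlen hsort hdim hW
    match L with
    | [] => exact lp_nil
    | i :: t =>
      obtain ⟨hwi, hwiW, hdi, hdi1, hhi⟩ := hdim i (by simp)
      obtain ⟨c, rest, heq, hsum, hov⟩ := exists_chunk d 1 i t hdi1
      set c' : List ι := i :: c with hc'
      have hsubc' : ∀ j ∈ c', j ∈ i :: t := by rw [heq]; intro j hj; exact List.mem_append_left _ hj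
      have hsubr : ∀ j ∈ rest, j ∈ i :: t := by rw [heq]; intro j hj; exact List.mem_append_right _ hj
      rw [heq] at hsort
      obtain ⟨hsc, hsr, hcross⟩ := List.pairwise_append.1 hsort
      have hrow : LP w d h W 1 (h i) c' := by
        apply pack_row_y (fun j hj => (hdim j (hsubc' j hj)).2.2.1.le)
          (fun j hj => (hdim j (hsubc' j hj)).2.1)
          (fun j hj => ?_) hW hhi.le hsum
        rcases List.mem_cons.1 hj with rfl | hj'
        · exact le_rfl
        · exact (List.pairwise_cons.1 hsc).1 j hj'
      have hlenr : rest.length ≤ n := by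
        have h' := congrArg List.length heq
        simp only [List.length_cons, List.length_append] at h'
        simp only [List.length_cons] at hlen
        have hc'len : c'.length = c.length + 1 := by simp [hc']
        omega
      have hrest := ih rest hlenr hsr (fun j hj => hdim j (hsubr j hj)) hW
      have hnn1 : 0 ≤ keyHead h rest + 2 * SL (fun i => d i * h i) rest
          - keyHead (fun i => d i * h i) rest := by
        match rest with
        | [] => simp
        | f :: r' =>
          obtain ⟨_, _, hdf, _, hhf⟩ := hdim f (hsubr f (by simp))
          have h1 : 0 ≤ SL (fun i => d i * h i) r' := SL_nonneg (fun j hj => by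
            obtain ⟨_,_,a3,_,a5⟩ := hdim j (hsubr j (by simp [hj])); positivity)
          simp only [keyHead_cons, SL_cons]
          nlinarith
      have happ := lp_append_z hhi.le hnn1 hrow hrest
      rw [← heq] at happ
      apply lp_mono le_rfl le_rfl ?_ happ
      have hsplit : SL (fun i => d i * h i) (i :: t) =
          SL (fun i => d i * h i) c' + SL (fun i => d i * h i) rest := by
        rw [heq]; simp
      have hSLc_nn : 0 ≤ SL (fun i => d i * h i) c := SL_nonneg (fun j hj => by
        obtain ⟨_,_,a3,_,a5⟩ := hdim j (hsubc' j (by simp [hc', hj])); positivity)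
      have hSLc' : SL (fun i => d i * h i) c' = d i * h i + SL (fun i => d i * h i) c := by
        simp [hc']
      match rest with
      | [] =>
        simp only [keyHead_nil, keyHead_cons, SL_nil] at *
        nlinarith
      | f :: r' =>
        obtain ⟨hwf, hwfW, hdf, hdf1, hhf⟩ := hdim f (hsubr f (by simp))
        have hov' := hov f r' rfl
        have hcross_i : h f ≤ h i := hcross i (by simp [hc']) f (by simp)
        have hdc_nn : 0 ≤ SL d c := SL_nonneg (fun j hj => by
          exact (hdim j (hsubc' j (by simp [hc', hj]))).2.2.1.le)
        have hB : SL d c * h f ≤ SL (fun i => d i * h i) c := by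
          rw [← SL_mul_right]
          apply SL_le_SL
          intro j hj
          have hjc' : j ∈ c' := by simp [hc', hj]
          have h2 : h f ≤ h j := hcross j hjc' f (by simp)
          have h3 := (hdim j (hsubc' j hjc')).2.2.1.le
          nlinarith
        have hdc' : SL d c' = d i + SL d c := by simp [hc']
        have p1 : 0 ≤ d i * (h i - h f) := mul_nonneg hdi.le (by linarith)
        have p2 : 0 ≤ (d i + SL d c + d f - 1) * h f := by
          rw [hdc'] at hov'
          exact mul_nonneg (by linarith) hhf.le
        have p3 : 0 ≤ SL d c * h f := mul_nonneg hdc_nn hhf.le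
        simp only [keyHead_cons]
        simp only [keyHead_cons] at hnn1 ⊢
        rw [hsplit, hSLc']
        nlinarith

lemma pack_nf2d_swap : ∀ (n : ℕ) (L : List ι), L.length ≤ n →
    L.Pairwise (fun a b => h b ≤ h a) →
    (∀ i ∈ L, 0 < w i ∧ w i ≤ 1 ∧ 0 < d i ∧ d i ≤ D ∧ 0 < h i) → 0 ≤ D →
    LP w d h 1 D (keyHead h L + 2 * SL (fun i => w i * h i) L
      - keyHead (fun i => w i * h i) L) L := by
  intro n
  induction n with
  | zero =>
    intro L hlen _ _ _
    rw [List.length_eq_zero_iff.1 (Nat.le_zero.1 hlen)]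
    exact lp_nil
  | succ n ih =>
    intro L hlen hsort hdim hD
    match L with
    | [] => exact lp_nil
    | i :: t =>
      obtain ⟨hwi, hwi1, hdi, hdiD, hhi⟩ := hdim i (by simp)
      obtain ⟨c, rest, heq, hsum, hov⟩ := exists_chunk w 1 i t hwi1
      set c' : List ι := i :: c with hc'
      have hsubc' : ∀ j ∈ c', j ∈ i :: t := by rw [heq]; intro j hj; exact List.mem_append_left _ hj
      have hsubr : ∀ j ∈ rest, j ∈ i :: t := by rw [heq]; intro j hj; exact List.mem_append_right _ hj
      rw [heq] at hsort
      obtain ⟨hsc, hsr, hcross⟩ := List.pairwise_append.1 hsort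
      have hrow : LP w d h 1 D (h i) c' := by
        apply pack_row_x (fun j hj => (hdim j (hsubc' j hj)).1.le)
          (fun j hj => (hdim j (hsubc' j hj)).2.2.2.1)
          (fun j hj => ?_) hD hhi.le hsum
        rcases List.mem_cons.1 hj with rfl | hj'
        · exact le_rfl
        · exact (List.pairwise_cons.1 hsc).1 j hj'
      have hlenr : rest.length ≤ n := by
        have h' := congrArg List.length heq
        simp only [List.length_cons, List.length_append] at h'
        simp only [List.length_cons] at hlen
        have hc'len : c'.length = c.length + 1 := by simp [hc']
        omega
      have hrest := ih rest hlenr hsr (fun j hj => hdim j (hsubr j hj)) hD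
      have hnn1 : 0 ≤ keyHead h rest + 2 * SL (fun i => w i * h i) rest
          - keyHead (fun i => w i * h i) rest := by
        match rest with
        | [] => simp
        | f :: r' =>
          obtain ⟨hwf, _, _, _, hhf⟩ := hdim f (hsubr f (by simp))
          have h1 : 0 ≤ SL (fun i => w i * h i) r' := SL_nonneg (fun j hj => by
            obtain ⟨a1,_,_,_,a5⟩ := hdim j (hsubr j (by simp [hj])); positivity)
          simp only [keyHead_cons, SL_cons]
          nlinarith
      have happ := lp_append_z hhi.le hnn1 hrow hrest
      rw [← heq] at happ
      apply lp_mono le_rfl le_rfl ?_ happ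
      have hsplit : SL (fun i => w i * h i) (i :: t) =
          SL (fun i => w i * h i) c' + SL (fun i => w i * h i) rest := by
        rw [heq]; simp
      have hSLc_nn : 0 ≤ SL (fun i => w i * h i) c := SL_nonneg (fun j hj => by
        obtain ⟨a1,_,_,_,a5⟩ := hdim j (hsubc' j (by simp [hc', hj])); positivity)
      have hSLc' : SL (fun i => w i * h i) c' = w i * h i + SL (fun i => w i * h i) c := by
        simp [hc']
      match rest with
      | [] =>
        simp only [keyHead_nil, keyHead_cons, SL_nil] at *
        nlinarith
      | f :: r' =>
        obtain ⟨hwf, hwf1, hdf, hdfD, hhf⟩ := hdim f (hsubr f (by simp))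
        have hov' := hov f r' rfl
        have hcross_i : h f ≤ h i := hcross i (by simp [hc']) f (by simp)
        have hwc_nn : 0 ≤ SL w c := SL_nonneg (fun j hj => by
          exact (hdim j (hsubc' j (by simp [hc', hj]))).1.le)
        have hB : SL w c * h f ≤ SL (fun i => w i * h i) c := by
          rw [← SL_mul_right]
          apply SL_le_SL
          intro j hj
          have hjc' : j ∈ c' := by simp [hc', hj]
          have h2 : h f ≤ h j := hcross j hjc' f (by simp)
          have h3 := (hdim j (hsubc' j hjc')).1.le
          nlinarith
        have hwc' : SL w c' = w i + SL w c := by simp [hc']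
        have p1 : 0 ≤ w i * (h i - h f) := mul_nonneg hwi.le (by linarith)
        have p2 : 0 ≤ (w i + SL w c + w f - 1) * h f := by
          rw [hwc'] at hov'
          exact mul_nonneg (by linarith) hhf.le
        have p3 : 0 ≤ SL w c * h f := mul_nonneg hwc_nn hhf.le
        simp only [keyHead_cons]
        simp only [keyHead_cons] at hnn1 ⊢
        rw [hsplit, hSLc']
        nlinarith

/-! ### balanced split -/

lemma split_balanced_aux (u : ι → ℝ) (c : ℝ) (hc : 0 ≤ c) :
    ∀ L : List ι, (∀ i ∈ L, 0 ≤ u i ∧ u i ≤ c) →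
      ∃ L1 L2 : List ι, (L1 ++ L2).Perm L ∧ |SL u L1 - SL u L2| ≤ c := by
  intro L
  induction L with
  | nil => exact fun _ => ⟨[], [], by simp, by simp [hc]⟩
  | cons i t ih =>
    intro hb
    obtain ⟨t1, t2, hperm, hd⟩ := ih (fun j hj => hb j (by simp [hj]))
    obtain ⟨hu0, huc⟩ := hb i (by simp)
    rw [abs_le] at hd
    rcases le_total (SL u t1) (SL u t2) with hle | hle
    · refine ⟨i :: t1, t2, ?_, ?_⟩
      · simpa using hperm.cons i
      · rw [abs_le]; constructor <;> simp only [SL_cons] <;> [linarith; linarith]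
    · refine ⟨t1, i :: t2, ?_, ?_⟩
      · exact (List.perm_middle).trans (hperm.cons i)
      · rw [abs_le]; constructor <;> simp only [SL_cons] <;> [linarith; linarith]

lemma split_balanced (u : ι → ℝ) (c : ℝ) (hc : 0 ≤ c) (L : List ι)
    (hb : ∀ i ∈ L, 0 ≤ u i ∧ u i ≤ c) :
    ∃ L1 L2 : List ι, (L1 ++ L2).Perm L ∧ SL u L1 ≤ (SL u L + c) / 2 ∧
      SL u L2 ≤ (SL u L + c) / 2 := by
  obtain ⟨L1, L2, hperm, hd⟩ := split_balanced_aux u c hc L hb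
  have hsum : SL u L1 + SL u L2 = SL u L := by
    have := SL_perm (f := u) hperm
    simpa using this
  rw [abs_le] at hd
  exact ⟨L1, L2, hperm, by linarith, by linarith⟩

/-! ### the five classes -/

section Classes

variable {hmax : ℝ}

lemma pack_wide (hmaxpos : 0 < hmax) (L : List ι)
    (hdim : ∀ i ∈ L, 1/2 < w i ∧ w i ≤ 1 ∧ 0 < d i ∧ d i ≤ 1 ∧ 0 < h i ∧ h i ≤ hmax) :
    LP w d h 1 1 (hmax + 4 * SL (fun i => w i * d i * h i) L) L := by
  obtain ⟨L', hperm, hsort⟩ := exists_sorted_perm h L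
  have hsub : ∀ j ∈ L', j ∈ L := fun j hj => hperm.mem_iff.1 hj
  have hp := pack_nf2d (W := 1) L'.length L' le_rfl hsort
    (fun j hj => by
      obtain ⟨a1, a2, a3, a4, a5, a6⟩ := hdim j (hsub j hj)
      exact ⟨by linarith, a2, a3, a4, a5⟩) (by norm_num)
  apply lp_subset (fun j hj => hperm.symm.mem_iff.1 hj)
  apply lp_mono le_rfl le_rfl ?_ hp
  have hkh : keyHead h L' ≤ hmax := by
    match L' with
    | [] => simpa using hmaxpos.le
    | f :: r' => exact (hdim f (hsub f (by simp))).2.2.2.2.2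
  have hcorr : 0 ≤ keyHead (fun i => d i * h i) L' := by
    match L' with
    | [] => simp
    | f :: r' =>
      obtain ⟨_, _, a3, _, a5, _⟩ := hdim f (hsub f (by simp))
      simp only [keyHead_cons]; positivity
  have h2 : SL (fun i => d i * h i) L' ≤ SL (fun i => w i * d i * h i * 2) L' :=
    SL_le_SL (fun j hj => by
      obtain ⟨a1, a2, a3, a4, a5, a6⟩ := hdim j (hsub j hj)
      nlinarith [mul_nonneg (mul_nonneg a3.le a5.le) (show (0:ℝ) ≤ 2 * w j - 1 by linarith)])
  rw [show (fun i => w i * d i * h i * 2) = (fun i => (fun k => w k * d k * h k) i * 2) from rfl,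
    SL_mul_right] at h2
  have h3 : SL (fun i => w i * d i * h i) L' = SL (fun i => w i * d i * h i) L :=
    SL_perm hperm
  linarith

lemma pack_deep (hmaxpos : 0 < hmax) (L : List ι)
    (hdim : ∀ i ∈ L, 0 < w i ∧ w i ≤ 1 ∧ 1/2 < d i ∧ d i ≤ 1 ∧ 0 < h i ∧ h i ≤ hmax) :
    LP w d h 1 1 (hmax + 4 * SL (fun i => w i * d i * h i) L) L := by
  obtain ⟨L', hperm, hsort⟩ := exists_sorted_perm h L
  have hsub : ∀ j ∈ L', j ∈ L := fun j hj => hperm.mem_iff.1 hj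
  have hp := pack_nf2d_swap (D := 1) L'.length L' le_rfl hsort
    (fun j hj => by
      obtain ⟨a1, a2, a3, a4, a5, a6⟩ := hdim j (hsub j hj)
      exact ⟨a1, a2, by linarith, a4, a5⟩) (by norm_num)
  apply lp_subset (fun j hj => hperm.symm.mem_iff.1 hj)
  apply lp_mono le_rfl le_rfl ?_ hp
  have hkh : keyHead h L' ≤ hmax := by
    match L' with
    | [] => simpa using hmaxpos.le
    | f :: r' => exact (hdim f (hsub f (by simp))).2.2.2.2.2
  have hcorr : 0 ≤ keyHead (fun i => w i * h i) L' := by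
    match L' with
    | [] => simp
    | f :: r' =>
      obtain ⟨a1, _, _, _, a5, _⟩ := hdim f (hsub f (by simp))
      simp only [keyHead_cons]; positivity
  have h2 : SL (fun i => w i * h i) L' ≤ SL (fun i => w i * d i * h i * 2) L' :=
    SL_le_SL (fun j hj => by
      obtain ⟨a1, a2, a3, a4, a5, a6⟩ := hdim j (hsub j hj)
      nlinarith [mul_nonneg (mul_nonneg a1.le a5.le) (show (0:ℝ) ≤ 2 * d j - 1 by linarith)])
  rw [show (fun i => w i * d i * h i * 2) = (fun i => (fun k => w k * d k * h k) i * 2) from rfl,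
    SL_mul_right] at h2
  have h3 : SL (fun i => w i * d i * h i) L' = SL (fun i => w i * d i * h i) L :=
    SL_perm hperm
  linarith

lemma pack_halfwide (hmaxpos : 0 < hmax) (L : List ι)
    (hdim : ∀ i ∈ L, 1/4 < w i ∧ w i ≤ 1/2 ∧ 0 < d i ∧ d i ≤ 1 ∧ 0 < h i ∧ h i ≤ hmax) :
    LP w d h 1 1 (2 * hmax + 4 * SL (fun i => w i * d i * h i) L) L := by
  obtain ⟨L1, L2, hperm, hb1, hb2⟩ := split_balanced (fun i => d i * h i) hmax hmaxpos.le L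
    (fun i hi => by
      obtain ⟨a1, a2, a3, a4, a5, a6⟩ := hdim i hi
      constructor
      · positivity
      · show d i * h i ≤ hmax
        nlinarith [mul_nonneg a5.le (sub_nonneg.2 a4)])
  have hpart : ∀ M : List ι, (∀ j ∈ M, j ∈ L) →
      SL (fun i => d i * h i) M ≤ (SL (fun i => d i * h i) L + hmax) / 2 →
      LP w d h (1/2) 1 (2 * hmax + SL (fun i => d i * h i) L) M := by
    intro M hsubM hSM
    obtain ⟨M', hpermM, hsortM⟩ := exists_sorted_perm h M
    have hsub' : ∀ j ∈ M', j ∈ L := fun j hj => hsubM j (hpermM.mem_iff.1 hj)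
    have hp := pack_nf2d (W := 1/2) M'.length M' le_rfl hsortM
      (fun j hj => by
        obtain ⟨a1, a2, a3, a4, a5, a6⟩ := hdim j (hsub' j hj)
        exact ⟨by linarith, a2, a3, a4, a5⟩) (by norm_num)
    apply lp_subset (fun j hj => hpermM.symm.mem_iff.1 hj)
    apply lp_mono le_rfl le_rfl ?_ hp
    have hkh : keyHead h M' ≤ hmax := by
      match M' with
      | [] => simpa using hmaxpos.le
      | f :: r' => exact (hdim f (hsub' f (by simp))).2.2.2.2.2
    have hcorr : 0 ≤ keyHead (fun i => d i * h i) M' := by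
      match M' with
      | [] => simp
      | f :: r' =>
        obtain ⟨_, _, a3, _, a5, _⟩ := hdim f (hsub' f (by simp))
        simp only [keyHead_cons]; positivity
    have hSeq : SL (fun i => d i * h i) M' = SL (fun i => d i * h i) M := SL_perm hpermM
    linarith
  have hsubL1 : ∀ j ∈ L1, j ∈ L := fun j hj => hperm.mem_iff.1 (List.mem_append_left _ hj)
  have hsubL2 : ∀ j ∈ L2, j ∈ L := fun j hj => hperm.mem_iff.1 (List.mem_append_right _ hj)
  have happ := lp_append_x (by norm_num) (by norm_num)
    (hpart L1 hsubL1 hb1) (hpart L2 hsubL2 hb2)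
  rw [show (1:ℝ)/2 + 1/2 = 1 by norm_num] at happ
  apply lp_subset (fun j hj => hperm.symm.mem_iff.1 hj) at happ
  apply lp_mono le_rfl le_rfl ?_ happ
  have h2 : SL (fun i => d i * h i) L ≤ SL (fun i => w i * d i * h i * 4) L :=
    SL_le_SL (fun j hj => by
      obtain ⟨a1, a2, a3, a4, a5, a6⟩ := hdim j hj
      nlinarith [mul_nonneg (mul_nonneg a3.le a5.le) (show (0:ℝ) ≤ 4 * w j - 1 by linarith)])
  rw [show (fun i => w i * d i * h i * 4) = (fun i => (fun k => w k * d k * h k) i * 4) from rfl,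
    SL_mul_right] at h2
  linarith

lemma pack_halfdeep (hmaxpos : 0 < hmax) (L : List ι)
    (hdim : ∀ i ∈ L, 0 < w i ∧ w i ≤ 1 ∧ 1/4 < d i ∧ d i ≤ 1/2 ∧ 0 < h i ∧ h i ≤ hmax) :
    LP w d h 1 1 (2 * hmax + 4 * SL (fun i => w i * d i * h i) L) L := by
  obtain ⟨L1, L2, hperm, hb1, hb2⟩ := split_balanced (fun i => w i * h i) hmax hmaxpos.le L
    (fun i hi => by
      obtain ⟨a1, a2, a3, a4, a5, a6⟩ := hdim i hi
      constructor
      · positivity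
      · show w i * h i ≤ hmax
        nlinarith [mul_nonneg a5.le (sub_nonneg.2 a2)])
  have hpart : ∀ M : List ι, (∀ j ∈ M, j ∈ L) →
      SL (fun i => w i * h i) M ≤ (SL (fun i => w i * h i) L + hmax) / 2 →
      LP w d h 1 (1/2) (2 * hmax + SL (fun i => w i * h i) L) M := by
    intro M hsubM hSM
    obtain ⟨M', hpermM, hsortM⟩ := exists_sorted_perm h M
    have hsub' : ∀ j ∈ M', j ∈ L := fun j hj => hsubM j (hpermM.mem_iff.1 hj)
    have hp := pack_nf2d_swap (D := 1/2) M'.length M' le_rfl hsortM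
      (fun j hj => by
        obtain ⟨a1, a2, a3, a4, a5, a6⟩ := hdim j (hsub' j hj)
        exact ⟨a1, a2, by linarith, a4, a5⟩) (by norm_num)
    apply lp_subset (fun j hj => hpermM.symm.mem_iff.1 hj)
    apply lp_mono le_rfl le_rfl ?_ hp
    have hkh : keyHead h M' ≤ hmax := by
      match M' with
      | [] => simpa using hmaxpos.le
      | f :: r' => exact (hdim f (hsub' f (by simp))).2.2.2.2.2
    have hcorr : 0 ≤ keyHead (fun i => w i * h i) M' := by
      match M' with
      | [] => simp
      | f :: r' =>
        obtain ⟨a1, _, _, _, a5, _⟩ := hdim f (hsub' f (by simp))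
        simp only [keyHead_cons]; positivity
    have hSeq : SL (fun i => w i * h i) M' = SL (fun i => w i * h i) M := SL_perm hpermM
    linarith
  have hsubL1 : ∀ j ∈ L1, j ∈ L := fun j hj => hperm.mem_iff.1 (List.mem_append_left _ hj)
  have hsubL2 : ∀ j ∈ L2, j ∈ L := fun j hj => hperm.mem_iff.1 (List.mem_append_right _ hj)
  have happ := lp_append_y (by norm_num) (by norm_num)
    (hpart L1 hsubL1 hb1) (hpart L2 hsubL2 hb2)
  rw [show (1:ℝ)/2 + 1/2 = 1 by norm_num] at happ
  apply lp_subset (fun j hj => hperm.symm.mem_iff.1 hj) at happ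
  apply lp_mono le_rfl le_rfl ?_ happ
  have h2 : SL (fun i => w i * h i) L ≤ SL (fun i => w i * d i * h i * 4) L :=
    SL_le_SL (fun j hj => by
      obtain ⟨a1, a2, a3, a4, a5, a6⟩ := hdim j hj
      nlinarith [mul_nonneg (mul_nonneg a1.le a5.le) (show (0:ℝ) ≤ 4 * d j - 1 by linarith)])
  rw [show (fun i => w i * d i * h i * 4) = (fun i => (fun k => w k * d k * h k) i * 4) from rfl,
    SL_mul_right] at h2
  linarith

lemma pack_tiny (hmaxpos : 0 < hmax) (L : List ι)
    (hdim : ∀ i ∈ L, 0 < w i ∧ w i ≤ 1/4 ∧ 0 < d i ∧ d i ≤ 1/4 ∧ 0 < h i ∧ h i ≤ hmax) :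
    LP w d h 1 1 (hmax + 4 * SL (fun i => w i * d i * h i) L) L := by
  obtain ⟨L', hperm, hsort⟩ := exists_sorted_perm h L
  have hsub : ∀ j ∈ L', j ∈ L := fun j hj => hperm.mem_iff.1 hj
  have hp := pack_small L'.length L' le_rfl hsort
    (fun j hj => by
      obtain ⟨a1, a2, a3, a4, a5, a6⟩ := hdim j (hsub j hj)
      exact ⟨a1, a2, a3, a4, a5⟩)
  apply lp_subset (fun j hj => hperm.symm.mem_iff.1 hj)
  apply lp_mono le_rfl le_rfl ?_ hp
  have hkh : keyHead h L' ≤ hmax := by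
    match L' with
    | [] => simpa using hmaxpos.le
    | f :: r' => exact (hdim f (hsub f (by simp))).2.2.2.2.2
  have hnn : 0 ≤ SL (fun i => w i * d i * h i) L' := SL_nonneg (fun j hj => by
    obtain ⟨a1, _, a3, _, a5, _⟩ := hdim j (hsub j hj); positivity)
  have h3 : SL (fun i => w i * d i * h i) L' = SL (fun i => w i * d i * h i) L :=
    SL_perm hperm
  linarith

end Classes


lemma SL_toList (f : ι → ℝ) (s : Finset ι) : SL f s.toList = ∑ i ∈ s, f i := by
  rw [Finset.sum, ← Multiset.coe_toList s.val, Multiset.map_coe, Multiset.sum_coe]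
  rfl

end Stmt0Aux

open Stmt0Aux in
theorem stmt0' {ι : Type*} (T : Finset ι) (w d h : ι → ℝ) (hmax : ℝ)
    (hmax_pos : 0 < hmax) (hmax_le : hmax ≤ 1)
    (hdims : ∀ i ∈ T, 0 < w i ∧ w i ≤ 1 ∧ 0 < d i ∧ d i ≤ 1 ∧
      0 < h i ∧ h i ≤ hmax) :
    ∃ x y z : ι → ℝ,
      (∀ i ∈ T, 0 ≤ x i ∧ x i + w i ≤ 1 ∧ 0 ≤ y i ∧ y i + d i ≤ 1 ∧
          0 ≤ z i ∧ z i + h i ≤ 4 * (∑ i ∈ T, w i * d i * h i) + 8 * hmax) ∧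
      (∀ i ∈ T, ∀ j ∈ T, i ≠ j →
        Disjoint (ItemRegion (w i) (d i) (h i) (x i) (y i) (z i))
                 (ItemRegion (w j) (d j) (h j) (x j) (y j) (z j))) := by
  classical
  set v : ι → ℝ := fun i => w i * d i * h i with hv
  set T1 := T.filter (fun i => 1/2 < w i) with hT1
  set R1 := T.filter (fun i => ¬ (1/2 < w i)) with hR1
  set T2 := R1.filter (fun i => 1/4 < w i) with hT2
  set R2 := R1.filter (fun i => ¬ (1/4 < w i)) with hR2
  set T3 := R2.filter (fun i => 1/2 < d i) with hT3
  set R3 := R2.filter (fun i => ¬ (1/2 < d i)) with hR3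
  set T4 := R3.filter (fun i => 1/4 < d i) with hT4
  set T5 := R3.filter (fun i => ¬ (1/4 < d i)) with hT5
  -- memberships
  have hmemT1 : ∀ j ∈ T1, j ∈ T ∧ 1/2 < w j := fun j hj => Finset.mem_filter.1 hj
  have hmemR1 : ∀ j ∈ R1, j ∈ T ∧ w j ≤ 1/2 := fun j hj => by
    obtain ⟨a, b⟩ := Finset.mem_filter.1 hj; exact ⟨a, not_lt.1 b⟩
  have hmemT2 : ∀ j ∈ T2, j ∈ T ∧ 1/4 < w j ∧ w j ≤ 1/2 := fun j hj => by
    obtain ⟨a, b⟩ := Finset.mem_filter.1 hj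
    obtain ⟨a1, a2⟩ := hmemR1 j a
    exact ⟨a1, b, a2⟩
  have hmemR2 : ∀ j ∈ R2, j ∈ T ∧ w j ≤ 1/4 := fun j hj => by
    obtain ⟨a, b⟩ := Finset.mem_filter.1 hj
    exact ⟨(hmemR1 j a).1, not_lt.1 b⟩
  have hmemT3 : ∀ j ∈ T3, j ∈ T ∧ w j ≤ 1/4 ∧ 1/2 < d j := fun j hj => by
    obtain ⟨a, b⟩ := Finset.mem_filter.1 hj
    obtain ⟨a1, a2⟩ := hmemR2 j a
    exact ⟨a1, a2, b⟩
  have hmemR3 : ∀ j ∈ R3, j ∈ T ∧ w j ≤ 1/4 ∧ d j ≤ 1/2 := fun j hj => by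
    obtain ⟨a, b⟩ := Finset.mem_filter.1 hj
    obtain ⟨a1, a2⟩ := hmemR2 j a
    exact ⟨a1, a2, not_lt.1 b⟩
  have hmemT4 : ∀ j ∈ T4, j ∈ T ∧ w j ≤ 1/4 ∧ 1/4 < d j ∧ d j ≤ 1/2 := fun j hj => by
    obtain ⟨a, b⟩ := Finset.mem_filter.1 hj
    obtain ⟨a1, a2, a3⟩ := hmemR3 j a
    exact ⟨a1, a2, b, a3⟩
  have hmemT5 : ∀ j ∈ T5, j ∈ T ∧ w j ≤ 1/4 ∧ d j ≤ 1/4 := fun j hj => by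
    obtain ⟨a, b⟩ := Finset.mem_filter.1 hj
    obtain ⟨a1, a2, _⟩ := hmemR3 j a
    exact ⟨a1, a2, not_lt.1 b⟩
  -- pack each class
  have h1 : LP w d h 1 1 (hmax + 4 * SL v T1.toList) T1.toList := by
    apply pack_wide hmax_pos
    intro j hj
    obtain ⟨a, b⟩ := hmemT1 j (Finset.mem_toList.1 hj)
    obtain ⟨b1, b2, b3, b4, b5, b6⟩ := hdims j a
    exact ⟨b, b2, b3, b4, b5, b6⟩
  have h2 : LP w d h 1 1 (2 * hmax + 4 * SL v T2.toList) T2.toList := by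
    apply pack_halfwide hmax_pos
    intro j hj
    obtain ⟨a, b, c⟩ := hmemT2 j (Finset.mem_toList.1 hj)
    obtain ⟨b1, b2, b3, b4, b5, b6⟩ := hdims j a
    exact ⟨b, c, b3, b4, b5, b6⟩
  have h3 : LP w d h 1 1 (hmax + 4 * SL v T3.toList) T3.toList := by
    apply pack_deep hmax_pos
    intro j hj
    obtain ⟨a, b, c⟩ := hmemT3 j (Finset.mem_toList.1 hj)
    obtain ⟨b1, b2, b3, b4, b5, b6⟩ := hdims j a
    exact ⟨b1, b2, c, b4, b5, b6⟩
  have h4 : LP w d h 1 1 (2 * hmax + 4 * SL v T4.toList) T4.toList := by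
    apply pack_halfdeep hmax_pos
    intro j hj
    obtain ⟨a, b, c, e⟩ := hmemT4 j (Finset.mem_toList.1 hj)
    obtain ⟨b1, b2, b3, b4, b5, b6⟩ := hdims j a
    exact ⟨b1, b2, c, e, b5, b6⟩
  have h5 : LP w d h 1 1 (hmax + 4 * SL v T5.toList) T5.toList := by
    apply pack_tiny hmax_pos
    intro j hj
    obtain ⟨a, b, c⟩ := hmemT5 j (Finset.mem_toList.1 hj)
    obtain ⟨b1, b2, b3, b4, b5, b6⟩ := hdims j a
    exact ⟨b1, b, b3, c, b5, b6⟩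
  -- nonnegativity of heights
  have hvnn : ∀ (s : Finset ι), (∀ j ∈ s, j ∈ T) → 0 ≤ SL v s.toList := by
    intro s hs
    apply SL_nonneg
    intro j hj
    obtain ⟨b1, _, b3, _, b5, _⟩ := hdims j (hs j (Finset.mem_toList.1 hj))
    have : v j = w j * d j * h j := rfl
    rw [this]; positivity
  have hsub1 : ∀ j ∈ T1, j ∈ T := fun j hj => (hmemT1 j hj).1
  have hsub2 : ∀ j ∈ T2, j ∈ T := fun j hj => (hmemT2 j hj).1
  have hsub3 : ∀ j ∈ T3, j ∈ T := fun j hj => (hmemT3 j hj).1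
  have hsub4 : ∀ j ∈ T4, j ∈ T := fun j hj => (hmemT4 j hj).1
  have hsub5 : ∀ j ∈ T5, j ∈ T := fun j hj => (hmemT5 j hj).1
  have n1 := hvnn T1 hsub1
  have n2 := hvnn T2 hsub2
  have n3 := hvnn T3 hsub3
  have n4 := hvnn T4 hsub4
  have n5 := hvnn T5 hsub5
  -- stack the five regions
  have q45 := lp_append_z (by linarith) (by linarith) h4 h5
  have q345 := lp_append_z (by linarith) (by linarith) h3 q45
  have q2345 := lp_append_z (by linarith) (by linarith) h2 q345
  have q := lp_append_z (by linarith) (by linarith) h1 q2345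
  -- total volume splits
  have e1 : ∑ i ∈ T1, v i + ∑ i ∈ R1, v i = ∑ i ∈ T, v i :=
    Finset.sum_filter_add_sum_filter_not T _ v
  have e2 : ∑ i ∈ T2, v i + ∑ i ∈ R2, v i = ∑ i ∈ R1, v i :=
    Finset.sum_filter_add_sum_filter_not R1 _ v
  have e3 : ∑ i ∈ T3, v i + ∑ i ∈ R3, v i = ∑ i ∈ R2, v i :=
    Finset.sum_filter_add_sum_filter_not R2 _ v
  have e4 : ∑ i ∈ T4, v i + ∑ i ∈ T5, v i = ∑ i ∈ R3, v i :=
    Finset.sum_filter_add_sum_filter_not R3 _ v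
  have hheight : hmax + 4 * SL v T1.toList +
      (2 * hmax + 4 * SL v T2.toList +
        (hmax + 4 * SL v T3.toList +
          (2 * hmax + 4 * SL v T4.toList + (hmax + 4 * SL v T5.toList)))) ≤
      4 * (∑ i ∈ T, v i) + 8 * hmax := by
    rw [SL_toList, SL_toList, SL_toList, SL_toList, SL_toList]
    linarith
  have q' := lp_mono le_rfl le_rfl hheight q
  obtain ⟨x, y, z, hin, hdj⟩ := q'
  have hmem : ∀ i ∈ T, i ∈ T1.toList ++ (T2.toList ++ (T3.toList ++ (T4.toList ++ T5.toList))) := by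
    intro i hi
    simp only [List.mem_append, Finset.mem_toList]
    by_cases c1 : 1/2 < w i
    · exact Or.inl (Finset.mem_filter.2 ⟨hi, c1⟩)
    have m1 : i ∈ R1 := Finset.mem_filter.2 ⟨hi, c1⟩
    by_cases c2 : 1/4 < w i
    · exact Or.inr (Or.inl (Finset.mem_filter.2 ⟨m1, c2⟩))
    have m2 : i ∈ R2 := Finset.mem_filter.2 ⟨m1, c2⟩
    by_cases c3 : 1/2 < d i
    · exact Or.inr (Or.inr (Or.inl (Finset.mem_filter.2 ⟨m2, c3⟩)))
    have m3 : i ∈ R3 := Finset.mem_filter.2 ⟨m2, c3⟩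
    by_cases c4 : 1/4 < d i
    · exact Or.inr (Or.inr (Or.inr (Or.inl (Finset.mem_filter.2 ⟨m3, c4⟩))))
    · exact Or.inr (Or.inr (Or.inr (Or.inr (Finset.mem_filter.2 ⟨m3, c4⟩))))
  exact ⟨x, y, z, fun i hi => hin i (hmem i hi),
    fun i hi j hj hne => hdj i (hmem i hi) j (hmem j hj) hne⟩


/-- Any finite set `T` of 3D items with widths and depths in
`(0,1]` and heights in `(0, hmax]` can be packed into the strip
`[0,1] × [0,1] × [0, 4·v(T) + 8·hmax]`. -/
theorem stmt0 {ι : Type*} (T : Finset ι) (w d h : ι → ℝ) (hmax : ℝ)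
    (hmax_pos : 0 < hmax) (hmax_le : hmax ≤ 1)
    (hdims : ∀ i ∈ T, 0 < w i ∧ w i ≤ 1 ∧ 0 < d i ∧ d i ≤ 1 ∧
      0 < h i ∧ h i ≤ hmax) :
    CanPack T w d h 1 1 (4 * (∑ i ∈ T, w i * d i * h i) + 8 * hmax) := by
  obtain ⟨x, y, z, h1, h2⟩ := stmt0' T w d h hmax hmax_pos hmax_le hdims
  exact ⟨x, y, z, h1, h2⟩
end

section
/- Let T be a finite set of 3D items whose widths and depths all lie in (0,1] and whose heights are all at most h_max, for some h_max ∈ (0,1], and suppose additionally that every item of T has width at most 1/2 or depth at most 1/2 (or both). Then all items of T can be packed into the strip [0,1]×[0,1]×[0, 3·v(T) + 8·h_max]. -/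
/-! ### Auxiliary development -/

open scoped Classical

namespace Stmt1Aux

variable {ι : Type*}

/-- Two items are separated along one of the two axes (2D). -/
def Sep2 (w d x y : ι → ℝ) (i j : ι) : Prop :=
  x i + w i ≤ x j ∨ x j + w j ≤ x i ∨ y i + d i ≤ y j ∨ y j + d j ≤ y i

/-- Two items are separated along one of the three axes (3D). -/
def Sep3 (w d h x y z : ι → ℝ) (i j : ι) : Prop :=
  x i + w i ≤ x j ∨ x j + w j ≤ x i ∨ y i + d i ≤ y j ∨ y j + d j ≤ y i ∨
    z i + h i ≤ z j ∨ z j + h j ≤ z i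

/-- Packing of a finset into `[0,1]×[0,1]×[0,H]`, in separation form. -/
def SPackF (T : Finset ι) (w d h : ι → ℝ) (H : ℝ) : Prop :=
  ∃ x y z : ι → ℝ,
    (∀ i ∈ T, 0 ≤ x i ∧ x i + w i ≤ 1 ∧ 0 ≤ y i ∧ y i + d i ≤ 1 ∧
        0 ≤ z i ∧ z i + h i ≤ H) ∧
    ∀ i ∈ T, ∀ j ∈ T, i ≠ j → Sep3 w d h x y z i j

theorem disjoint_of_sep3 {w d h x y z : ι → ℝ} {i j : ι}
    (hs : Sep3 w d h x y z i j) :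
    Disjoint (ItemRegion (w i) (d i) (h i) (x i) (y i) (z i))
             (ItemRegion (w j) (d j) (h j) (x j) (y j) (z j)) := by
  rw [Set.disjoint_left]
  rintro ⟨px, py, pz⟩ h1 h2
  simp only [ItemRegion, Set.mem_prod, Set.mem_Ioo] at h1 h2
  obtain ⟨⟨a1, a2⟩, ⟨b1, b2⟩, c1, c2⟩ := h1
  obtain ⟨⟨a1', a2'⟩, ⟨b1', b2'⟩, c1', c2'⟩ := h2
  rcases hs with hh | hh | hh | hh | hh | hh <;> linarith

theorem sep2_sep3 {w d h x y z : ι → ℝ} {i j : ι} (hs : Sep2 w d x y i j) :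
    Sep3 w d h x y z i j := by
  rcases hs with hh | hh | hh | hh
  exacts [Or.inl hh, Or.inr (Or.inl hh), Or.inr (Or.inr (Or.inl hh)),
    Or.inr (Or.inr (Or.inr (Or.inl hh)))]

/-- Greedy maximal prefix extraction. -/
theorem greedy_prefix (f : ι → ℝ) :
    ∀ (l : List ι), (∀ i ∈ l, 0 ≤ f i) → ∀ c : ℝ, 0 ≤ c → c < (l.map f).sum →
      ∃ P a R, l = P ++ a :: R ∧ (P.map f).sum ≤ c ∧ c < (P.map f).sum + f a := by
  intro l
  induction l with
  | nil =>
    intro _ c hc hlt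
    simp only [List.map_nil, List.sum_nil] at hlt
    exact absurd hlt (by linarith)
  | cons a t ih =>
    intro hpos c hc hlt
    by_cases hca : c < f a
    · exact ⟨[], a, t, rfl, by simpa using hc, by simpa using hca⟩
    · push_neg at hca
      have h1 : 0 ≤ c - f a := by linarith
      have h2 : c - f a < (t.map f).sum := by
        simp only [List.map_cons, List.sum_cons] at hlt
        linarith
      obtain ⟨P, b, R, heq, hle, hgt⟩ :=
        ih (fun i hi => hpos i (List.mem_cons_of_mem _ hi)) (c - f a) h1 h2
      refine ⟨a :: P, b, R, by rw [heq]; rfl, ?_, ?_⟩ <;>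
        simp only [List.map_cons, List.sum_cons] <;> linarith

/-- Placing a list of items side by side in a row by prefix sums. -/
theorem row_place (w : ι → ℝ) :
    ∀ (l : List ι), l.Nodup → (∀ i ∈ l, 0 ≤ w i) →
      ∃ x : ι → ℝ, (∀ i ∈ l, 0 ≤ x i ∧ x i + w i ≤ (l.map w).sum) ∧
        l.Pairwise fun i j => x i + w i ≤ x j := by
  intro l
  induction l with
  | nil => exact fun _ _ => ⟨fun _ => 0, by simp, List.Pairwise.nil⟩
  | cons a t ih =>
    intro hnd hw
    obtain ⟨x', hb, hp⟩ := ih hnd.of_cons fun i hi => hw i (List.mem_cons_of_mem _ hi)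
    have ha : a ∉ t := (List.nodup_cons.mp hnd).1
    have hwa : 0 ≤ w a := hw a (List.mem_cons_self)
    refine ⟨Function.update (fun i => x' i + w a) a 0, ?_, ?_⟩
    · intro i hi
      rcases List.mem_cons.mp hi with rfl | hi'
      · simp only [Function.update_self, List.map_cons, List.sum_cons]
        have : 0 ≤ (t.map w).sum :=
          List.sum_nonneg (by
            intro q hq
            obtain ⟨u, hu, rfl⟩ := List.mem_map.mp hq
            exact hw u (List.mem_cons_of_mem _ hu))
        constructor <;> linarith
      · have hne : i ≠ a := fun hia => ha (hia ▸ hi')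
        rw [Function.update_of_ne hne]
        have h2 := hb i hi'
        simp only [List.map_cons, List.sum_cons]
        constructor <;> linarith [h2.1, h2.2]
    · rw [List.pairwise_cons]
      constructor
      · intro j hj
        have hne : j ≠ a := fun hja => ha (hja ▸ hj)
        rw [Function.update_self, Function.update_of_ne hne]
        have := (hb j hj).1
        linarith
      · refine List.Pairwise.imp_of_mem ?_ hp
        intro i j hi hj hij
        have hne : i ≠ a := fun hia => ha (hia ▸ hi)
        have hne' : j ≠ a := fun hja => ha (hja ▸ hj)
        rw [Function.update_of_ne hne, Function.update_of_ne hne']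
        linarith

/-- Partition items of total width `≤ (r+2)/2`, each of width `≤ 1/2`,
into `r+1` rows of width 1 each. -/
theorem partition_rows (w : ι → ℝ) :
    ∀ (r : ℕ) (l : List ι), l.Nodup → (∀ i ∈ l, 0 ≤ w i ∧ w i ≤ 1 / 2) →
      (l.map w).sum ≤ (r + 2) / 2 →
      ∃ ρ : ι → ℕ, (∀ i ∈ l, ρ i < r + 1) ∧
        ∀ k : ℕ, ((l.filter fun i => ρ i = k).map w).sum ≤ 1 := by
  intro r
  induction r with
  | zero =>
    intro l _ _ hsum
    refine ⟨fun _ => 0, fun i _ => Nat.zero_lt_one, fun k => ?_⟩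
    cases k with
    | zero =>
      rw [List.filter_eq_self.mpr (by intro a _; simp)]
      norm_num at hsum
      exact hsum
    | succ k =>
      rw [List.filter_eq_nil_iff.mpr (by intro a _; simp)]
      norm_num
  | succ r ih =>
    intro l hnd hw hsum
    by_cases hs : (l.map w).sum ≤ 1
    · refine ⟨fun _ => 0, fun i _ => Nat.succ_pos _, fun k => ?_⟩
      cases k with
      | zero =>
        rw [List.filter_eq_self.mpr (by intro a _; simp)]
        exact hs
      | succ k =>
        rw [List.filter_eq_nil_iff.mpr (by intro a _; simp)]
        norm_num
    · push_neg at hs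
      obtain ⟨P, a, R, heq, hPle, hPgt⟩ :=
        greedy_prefix w l (fun i hi => (hw i hi).1) 1 (by norm_num) hs
      subst heq
      have hwa : w a ≤ 1 / 2 := (hw a (by simp)).2
      have hsplit : ((P ++ a :: R).map w).sum = (P.map w).sum + ((a :: R).map w).sum := by
        rw [List.map_append, List.sum_append]
      obtain ⟨hndP, hndaR, hdisj⟩ := List.nodup_append.mp hnd
      have hsum' : ((a :: R).map w).sum ≤ (r + 2) / 2 := by
        have : (1 : ℝ) / 2 ≤ (P.map w).sum := by linarith
        push_cast at hsum ⊢
        linarith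
      obtain ⟨ρ', hρ'lt, hρ'cap⟩ := ih (a :: R) hndaR
        (fun i hi => hw i (List.mem_append_right _ hi)) hsum'
      refine ⟨fun i => if i ∈ P then 0 else ρ' i + 1, ?_, ?_⟩
      · intro i hi
        by_cases hiP : i ∈ P
        · simp [hiP]
        · simp only [hiP, if_false]
          have hiaR : i ∈ a :: R := by
            rcases List.mem_append.mp hi with h | h
            · exact absurd h hiP
            · exact h
          exact Nat.succ_lt_succ (hρ'lt i hiaR)
      · intro k
        rw [List.filter_append]
        cases k with
        | zero =>
          have e1 : P.filter (fun i => decide ((if i ∈ P then 0 else ρ' i + 1) = 0)) = P :=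
            List.filter_eq_self.mpr (by intro b hb; simp [hb])
          have e2 : (a :: R).filter
              (fun i => decide ((if i ∈ P then 0 else ρ' i + 1) = 0)) = [] :=
            List.filter_eq_nil_iff.mpr (by
              intro b hb
              have hbP : b ∉ P := fun hbP => hdisj _ hbP _ hb rfl
              simp [hbP])
          rw [List.map_append, List.sum_append]
          rw [show (fun i => decide ((if i ∈ P then 0 else ρ' i + 1) = 0)) =
            (fun i => decide ((if i ∈ P then 0 else ρ' i + 1) = 0)) from rfl] at e1 e2
          rw [e1, e2]
          simpa using hPle
        | succ k =>
          have e1 : P.filter (fun i => decide ((if i ∈ P then 0 else ρ' i + 1) = k + 1)) = [] :=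
            List.filter_eq_nil_iff.mpr (by intro b hb; simp [hb])
          have e2 : (a :: R).filter
                (fun i => decide ((if i ∈ P then 0 else ρ' i + 1) = k + 1)) =
              (a :: R).filter (fun i => decide (ρ' i = k)) := by
            refine List.filter_congr ?_
            intro b hb
            have hbP : b ∉ P := fun hbP => hdisj _ hbP _ hb rfl
            simp [hbP]
          rw [List.map_append, List.sum_append, e1, e2]
          simpa using hρ'cap k

/-- Pack items of width `≤ 1/2`, depth `≤ 1/(r+1)`, total width `≤ (r+2)/2`,
into the unit square using `r+1` rows. -/
theorem rows_pack (w d : ι → ℝ) (r : ℕ) (l : List ι) (hnd : l.Nodup)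
    (hw : ∀ i ∈ l, 0 ≤ w i ∧ w i ≤ 1 / 2)
    (hd : ∀ i ∈ l, 0 ≤ d i ∧ d i ≤ 1 / (r + 1))
    (hsum : (l.map w).sum ≤ (r + 2) / 2) :
    ∃ x y : ι → ℝ,
      (∀ i ∈ l, 0 ≤ x i ∧ x i + w i ≤ 1 ∧ 0 ≤ y i ∧ y i + d i ≤ 1) ∧
      ∀ i ∈ l, ∀ j ∈ l, i ≠ j → Sep2 w d x y i j := by
  obtain ⟨ρ, hρlt, hρcap⟩ := partition_rows w r l hnd hw hsum
  have hrow : ∀ k : ℕ, ∃ x : ι → ℝ,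
      (∀ i ∈ l.filter (fun i => ρ i = k),
        0 ≤ x i ∧ x i + w i ≤ ((l.filter (fun i => ρ i = k)).map w).sum) ∧
      (l.filter (fun i => ρ i = k)).Pairwise fun i j => x i + w i ≤ x j :=
    fun k => row_place w _ (hnd.filter _)
      (fun i hi => (hw i (List.mem_of_mem_filter hi)).1)
  choose X hXb hXp using hrow
  have hrpos : (0 : ℝ) < r + 1 := by positivity
  have hmemf : ∀ i ∈ l, ∀ k, ρ i = k → i ∈ l.filter (fun i' => ρ i' = k) := by
    intro i hi k hk
    exact List.mem_filter.mpr ⟨hi, by simp [hk]⟩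
  refine ⟨fun i => X (ρ i) i, fun i => (ρ i : ℝ) / (r + 1), ?_, ?_⟩
  · intro i hi
    have hb := hXb (ρ i) i (hmemf i hi (ρ i) rfl)
    have hcap := hρcap (ρ i)
    have hρle : ((ρ i : ℝ) + 1) ≤ (r : ℝ) + 1 := by
      have := hρlt i hi
      exact_mod_cast this
    refine ⟨hb.1, le_trans hb.2 hcap, by positivity, ?_⟩
    have hdi := (hd i hi).2
    have : (ρ i : ℝ) / (r + 1) + 1 / (r + 1) ≤ 1 := by
      rw [← add_div, div_le_one hrpos]
      exact hρle
    linarith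
  · intro i hi j hj hij
    by_cases hk : ρ i = ρ j
    · -- same row
      have hif : i ∈ l.filter (fun i' => ρ i' = ρ i) := hmemf i hi (ρ i) rfl
      have hjf : j ∈ l.filter (fun i' => ρ i' = ρ i) := hmemf j hj (ρ i) hk.symm
      have hsym := @List.Pairwise.forall _
        (fun a b => X (ρ i) a + w a ≤ X (ρ i) b ∨ X (ρ i) b + w b ≤ X (ρ i) a) _
        ⟨fun a b hab => hab.symm⟩ ((hXp (ρ i)).imp fun h => Or.inl h)
      rcases hsym hif hjf hij with hh | hh
      · refine Or.inl ?_
        show X (ρ i) i + w i ≤ X (ρ j) j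
        rw [hk] at hh ⊢
        exact hh
      · refine Or.inr (Or.inl ?_)
        show X (ρ j) j + w j ≤ X (ρ i) i
        rw [hk] at hh ⊢
        exact hh
    · rcases Nat.lt_or_ge (ρ i) (ρ j) with hlt | hge
      · refine Or.inr (Or.inr (Or.inl ?_))
        show (ρ i : ℝ) / (r + 1) + d i ≤ (ρ j : ℝ) / (r + 1)
        have h1 : (ρ i : ℝ) + 1 ≤ (ρ j : ℝ) := by exact_mod_cast hlt
        have hdi := (hd i hi).2
        have h2 : ((ρ i : ℝ) + 1) / (r + 1) ≤ (ρ j : ℝ) / (r + 1) := by gcongr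
        have e : (ρ i : ℝ) / (r + 1) + 1 / (r + 1) = ((ρ i : ℝ) + 1) / (r + 1) := by
          rw [← add_div]
        linarith
      · have hlt' : ρ j < ρ i := lt_of_le_of_ne hge (fun e => hk e.symm)
        refine Or.inr (Or.inr (Or.inr ?_))
        show (ρ j : ℝ) / (r + 1) + d j ≤ (ρ i : ℝ) / (r + 1)
        have h1 : (ρ j : ℝ) + 1 ≤ (ρ i : ℝ) := by exact_mod_cast hlt'
        have hdj := (hd j hj).2
        have h2 : ((ρ j : ℝ) + 1) / (r + 1) ≤ (ρ i : ℝ) / (r + 1) := by gcongr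
        have e : (ρ j : ℝ) / (r + 1) + 1 / (r + 1) = ((ρ j : ℝ) + 1) / (r + 1) := by
          rw [← add_div]
        linarith

/-- Next-fit-decreasing-depth packing: items of width `≤ 1/2`, sorted by
decreasing depth, fit in the strip of width `1` using total depth at most
`d(head) + 2 · totalarea`. -/
theorem nfdh_pack (w d : ι → ℝ) :
    ∀ (n : ℕ) (l : List ι), l.length ≤ n → l.Nodup →
      l.Pairwise (fun i j => d j ≤ d i) →
      (∀ i ∈ l, 0 ≤ w i ∧ w i ≤ 1 / 2) → (∀ i ∈ l, 0 ≤ d i) →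
      ∃ x y : ι → ℝ,
        (∀ i ∈ l, 0 ≤ x i ∧ x i + w i ≤ 1 ∧ 0 ≤ y i ∧
          y i + d i ≤ (l.map d).headD 0 + 2 * (l.map fun i => w i * d i).sum) ∧
        ∀ i ∈ l, ∀ j ∈ l, i ≠ j → Sep2 w d x y i j := by
  intro n
  induction n with
  | zero =>
    intro l hlen _ _ _ _
    have : l = [] := List.eq_nil_of_length_eq_zero (Nat.le_zero.mp hlen)
    subst this
    exact ⟨fun _ => 0, fun _ => 0, by simp, by simp⟩
  | succ n ih =>
    intro l hlen hnd hsort hw hd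
    cases l with
    | nil => exact ⟨fun _ => 0, fun _ => 0, by simp, by simp⟩
    | cons hd0 tl =>
      have harea_nonneg : ∀ (m : List ι), (∀ i ∈ m, i ∈ hd0 :: tl) →
          0 ≤ (m.map fun i => w i * d i).sum := by
        intro m hm
        refine List.sum_nonneg ?_
        intro q hq
        obtain ⟨u, hu, rfl⟩ := List.mem_map.mp hq
        exact mul_nonneg (hw u (hm u hu)).1 (hd u (hm u hu))
      have hdhd0 : ∀ i ∈ hd0 :: tl, d i ≤ d hd0 := by
        intro i hi
        rcases List.mem_cons.mp hi with rfl | hi'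
        · exact le_refl _
        · exact List.rel_of_pairwise_cons hsort hi'
      by_cases hs : ((hd0 :: tl).map w).sum ≤ 1
      · obtain ⟨x, hxb, hxp⟩ := row_place w (hd0 :: tl) hnd (fun i hi => (hw i hi).1)
        refine ⟨x, fun _ => 0, ?_, ?_⟩
        · intro i hi
          refine ⟨(hxb i hi).1, le_trans (hxb i hi).2 hs, le_refl _, ?_⟩
          have h1 : d i ≤ d hd0 := hdhd0 i hi
          have h2 : (0:ℝ) ≤ ((hd0 :: tl).map fun i => w i * d i).sum :=
            harea_nonneg _ (fun _ h => h)
          simp only [List.map_cons, List.headD_cons, List.sum_cons] at h2 ⊢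
          linarith
        · intro i hi j hj hij
          have hsym := @List.Pairwise.forall _
            (fun a b => x a + w a ≤ x b ∨ x b + w b ≤ x a) _
            ⟨fun a b hab => hab.symm⟩ (hxp.imp fun h => Or.inl h)
          rcases hsym hi hj hij with hh | hh
          · exact Or.inl hh
          · exact Or.inr (Or.inl hh)
      · push_neg at hs
        obtain ⟨P, a, R, heq, hPle, hPgt⟩ :=
          greedy_prefix w (hd0 :: tl) (fun i hi => (hw i hi).1) 1 (by norm_num) hs
        have hmemP : ∀ i ∈ P, i ∈ hd0 :: tl := by
          intro i hi; rw [heq]; exact List.mem_append_left _ hi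
        have hmemaR : ∀ i ∈ a :: R, i ∈ hd0 :: tl := by
          intro i hi; rw [heq]; exact List.mem_append_right _ hi
        have hnd' : (P ++ a :: R).Nodup := heq ▸ hnd
        obtain ⟨hndP, hndaR, hdisj⟩ := List.nodup_append.mp hnd'
        have hsort' : (P ++ a :: R).Pairwise (fun i j => d j ≤ d i) := heq ▸ hsort
        obtain ⟨hsortP, hsortaR, hcross⟩ := List.pairwise_append.mp hsort'
        have hwa : w a ≤ 1 / 2 := (hw a (hmemaR a (List.mem_cons_self))).2
        have hP12 : (1:ℝ) / 2 ≤ (P.map w).sum := by linarith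
        have hPne : P ≠ [] := by
          intro hPnil
          rw [hPnil] at hP12
          norm_num at hP12
        have hlena : (a :: R).length ≤ n := by
          have h1 : (hd0 :: tl).length = P.length + (a :: R).length := by
            rw [heq, List.length_append]
          have h2 : 1 ≤ P.length := List.length_pos_iff.mpr hPne
          have h3 : (hd0 :: tl).length ≤ n + 1 := hlen
          omega
        obtain ⟨x', y', hb', hp'⟩ := ih (a :: R) hlena hndaR hsortaR
          (fun i hi => hw i (hmemaR i hi)) (fun i hi => hd i (hmemaR i hi))
        obtain ⟨xP, hxPb, hxPp⟩ := row_place w P hndP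
          (fun i hi => (hw i (hmemP i hi)).1)
        have hda_nonneg : 0 ≤ d a := hd a (hmemaR a (List.mem_cons_self))
        have hdhd0' : 0 ≤ d hd0 := hd hd0 (List.mem_cons_self)
        -- key volume inequality : d a ≤ 2 * area P
        have hkey : d a ≤ 2 * (P.map fun i => w i * d i).sum := by
          have h1 : (P.map fun i => w i * d a).sum ≤ (P.map fun i => w i * d i).sum := by
            refine List.sum_le_sum ?_
            intro i hi
            have : d a ≤ d i := hcross i hi a (List.mem_cons_self)
            exact mul_le_mul_of_nonneg_left this (hw i (hmemP i hi)).1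
          have h2 : (P.map fun i => w i * d a).sum = (P.map w).sum * d a :=
            List.sum_map_mul_right _ _ _
          nlinarith [hP12, hda_nonneg]
        have harea_split : ((hd0 :: tl).map fun i => w i * d i).sum =
            (P.map fun i => w i * d i).sum + ((a :: R).map fun i => w i * d i).sum := by
          rw [heq, List.map_append, List.sum_append]
        refine ⟨fun i => if i ∈ P then xP i else x' i,
          fun i => if i ∈ P then 0 else y' i + d hd0, ?_, ?_⟩
        · intro i hi
          have hiPR : i ∈ P ∨ i ∈ a :: R := by
            rw [heq] at hi; exact List.mem_append.mp hi
          rcases hiPR with hiP | hiaR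
          · simp only [hiP, if_true]
            refine ⟨(hxPb i hiP).1, le_trans (hxPb i hiP).2 hPle, le_refl _, ?_⟩
            have h1 : d i ≤ d hd0 := hdhd0 i (hmemP i hiP)
            have h2 : 0 ≤ ((hd0 :: tl).map fun i => w i * d i).sum :=
              harea_nonneg _ (fun _ h => h)
            simp only [List.map_cons, List.headD_cons, List.sum_cons] at h2 ⊢
            linarith
          · have hiP : i ∉ P := fun hc => hdisj _ hc _ hiaR rfl
            simp only [hiP, if_false]
            obtain ⟨hb1, hb2, hb3, hb4⟩ := hb' i hiaR
            refine ⟨hb1, hb2, by linarith, ?_⟩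
            simp only [List.map_cons, List.headD_cons] at hb4 ⊢
            have haRn : 0 ≤ ((a :: R).map fun i => w i * d i).sum :=
              harea_nonneg _ hmemaR
            simp only [List.map_cons, List.sum_cons] at harea_split hb4 ⊢
            linarith
        · intro i hi j hj hij
          have hiPR : i ∈ P ∨ i ∈ a :: R := by
            rw [heq] at hi; exact List.mem_append.mp hi
          have hjPR : j ∈ P ∨ j ∈ a :: R := by
            rw [heq] at hj; exact List.mem_append.mp hj
          simp only [Sep2]
          rcases hiPR with hiP | hiaR <;> rcases hjPR with hjP | hjaR
          · -- both in P
            have hjP' : j ∉ P → False := fun hc => hc hjP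
            simp only [hiP, hjP, if_true]
            have hsym := @List.Pairwise.forall _
              (fun a b => xP a + w a ≤ xP b ∨ xP b + w b ≤ xP a) _
              ⟨fun a b hab => hab.symm⟩ (hxPp.imp fun h => Or.inl h)
            rcases hsym hiP hjP hij with hh | hh
            · exact Or.inl hh
            · exact Or.inr (Or.inl hh)
          · -- i ∈ P, j ∈ a :: R : separated in y
            have hjP : j ∉ P := fun hc => hdisj _ hc _ hjaR rfl
            simp only [hiP, hjP, if_true, if_false]
            refine Or.inr (Or.inr (Or.inl ?_))
            have h1 : d i ≤ d hd0 := hdhd0 i (hmemP i hiP)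
            have h2 : 0 ≤ y' j := (hb' j hjaR).2.2.1
            linarith
          · have hiP : i ∉ P := fun hc => hdisj _ hc _ hiaR rfl
            simp only [hiP, hjP, if_true, if_false]
            refine Or.inr (Or.inr (Or.inr ?_))
            have h1 : d j ≤ d hd0 := hdhd0 j (hmemP j hjP)
            have h2 : 0 ≤ y' i := (hb' i hiaR).2.2.1
            linarith
          · -- both in a :: R
            have hiP : i ∉ P := fun hc => hdisj _ hc _ hiaR rfl
            have hjP : j ∉ P := fun hc => hdisj _ hc _ hjaR rfl
            simp only [hiP, hjP, if_false]
            rcases hp' i hiaR j hjaR hij with hh | hh | hh | hh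
            · exact Or.inl hh
            · exact Or.inr (Or.inl hh)
            · exact Or.inr (Or.inr (Or.inl (by linarith)))
            · exact Or.inr (Or.inr (Or.inr (by linarith)))

/-- Generic shelf-packing lemma: items sorted by decreasing height are grouped
greedily by a capacity measure `μ` into shelves; each shelf of capacity `≤ c`
is packable in 2D by the oracle, and a full shelf has base area `≥ 1/3`. -/
theorem shelf_pack (Q : ι → Prop) (w d h μ : ι → ℝ) (c : ℝ)
    (hdims : ∀ i, Q i → 0 ≤ w i ∧ 0 ≤ d i ∧ 0 ≤ h i ∧ 0 ≤ μ i ∧ μ i ≤ c)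
    (oracle : ∀ P : List ι, P.Nodup → (∀ i ∈ P, Q i) → (P.map μ).sum ≤ c →
      ∃ x y : ι → ℝ, (∀ i ∈ P, 0 ≤ x i ∧ x i + w i ≤ 1 ∧ 0 ≤ y i ∧ y i + d i ≤ 1) ∧
        ∀ i ∈ P, ∀ j ∈ P, i ≠ j → Sep2 w d x y i j)
    (guar : ∀ P : List ι, (∀ i ∈ P, Q i) → ∀ a, Q a → c < (P.map μ).sum + μ a →
      1 / 3 ≤ (P.map fun i => w i * d i).sum) :
    ∀ (n : ℕ) (l : List ι), l.length ≤ n → l.Nodup →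
      l.Pairwise (fun i j => h j ≤ h i) → (∀ i ∈ l, Q i) →
      ∃ x y z : ι → ℝ,
        (∀ i ∈ l, 0 ≤ x i ∧ x i + w i ≤ 1 ∧ 0 ≤ y i ∧ y i + d i ≤ 1 ∧ 0 ≤ z i ∧
          z i + h i ≤ 3 * (l.map fun i => w i * d i * h i).sum + (l.map h).headD 0) ∧
        ∀ i ∈ l, ∀ j ∈ l, i ≠ j → Sep3 w d h x y z i j := by
  intro n
  induction n with
  | zero =>
    intro l hlen _ _ _
    have : l = [] := List.eq_nil_of_length_eq_zero (Nat.le_zero.mp hlen)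
    subst this
    exact ⟨fun _ => 0, fun _ => 0, fun _ => 0, by simp, by simp⟩
  | succ n ih =>
    intro l hlen hnd hsort hQ
    cases l with
    | nil => exact ⟨fun _ => 0, fun _ => 0, fun _ => 0, by simp, by simp⟩
    | cons hd0 tl =>
      have hvol_nonneg : ∀ (m : List ι), (∀ i ∈ m, Q i) →
          0 ≤ (m.map fun i => w i * d i * h i).sum := by
        intro m hm
        refine List.sum_nonneg ?_
        intro q hq
        obtain ⟨u, hu, rfl⟩ := List.mem_map.mp hq
        obtain ⟨c1, c2, c3, _, _⟩ := hdims u (hm u hu)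
        positivity
      have hhhd0 : ∀ i ∈ hd0 :: tl, h i ≤ h hd0 := by
        intro i hi
        rcases List.mem_cons.mp hi with rfl | hi'
        · exact le_refl _
        · exact List.rel_of_pairwise_cons hsort hi'
      have hμpos : ∀ i ∈ hd0 :: tl, 0 ≤ μ i := fun i hi => (hdims i (hQ i hi)).2.2.2.1
      by_cases hs : ((hd0 :: tl).map μ).sum ≤ c
      · obtain ⟨x, y, hb, hp⟩ := oracle (hd0 :: tl) hnd hQ hs
        refine ⟨x, y, fun _ => 0, ?_, ?_⟩
        · intro i hi
          obtain ⟨b1, b2, b3, b4⟩ := hb i hi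
          refine ⟨b1, b2, b3, b4, le_refl _, ?_⟩
          have h1 : h i ≤ h hd0 := hhhd0 i hi
          have h2 : 0 ≤ ((hd0 :: tl).map fun i => w i * d i * h i).sum :=
            hvol_nonneg _ hQ
          simp only [List.map_cons, List.headD_cons, List.sum_cons] at h2 ⊢
          linarith
        · intro i hi j hj hij
          exact sep2_sep3 (hp i hi j hj hij)
      · push_neg at hs
        have hc0 : 0 ≤ c := le_trans (hdims hd0 (hQ hd0 (List.mem_cons_self))).2.2.2.1
          (hdims hd0 (hQ hd0 (List.mem_cons_self))).2.2.2.2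
        obtain ⟨P, a, R, heq, hPle, hPgt⟩ :=
          greedy_prefix μ (hd0 :: tl) hμpos c hc0 hs
        have hmemP : ∀ i ∈ P, i ∈ hd0 :: tl := by
          intro i hi; rw [heq]; exact List.mem_append_left _ hi
        have hmemaR : ∀ i ∈ a :: R, i ∈ hd0 :: tl := by
          intro i hi; rw [heq]; exact List.mem_append_right _ hi
        have hnd' : (P ++ a :: R).Nodup := heq ▸ hnd
        obtain ⟨hndP, hndaR, hdisj⟩ := List.nodup_append.mp hnd'
        have hsort' : (P ++ a :: R).Pairwise (fun i j => h j ≤ h i) := heq ▸ hsort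
        obtain ⟨hsortP, hsortaR, hcross⟩ := List.pairwise_append.mp hsort'
        have hQa : Q a := hQ a (hmemaR a (List.mem_cons_self))
        have hμa : μ a ≤ c := (hdims a hQa).2.2.2.2
        have hPpos : 0 < (P.map μ).sum := by linarith
        have hPne : P ≠ [] := by
          intro hPnil
          rw [hPnil] at hPpos
          norm_num at hPpos
        have hlena : (a :: R).length ≤ n := by
          have h1 : (hd0 :: tl).length = P.length + (a :: R).length := by
            rw [heq, List.length_append]
          have h2 : 1 ≤ P.length := List.length_pos_iff.mpr hPne
          have h3 : (hd0 :: tl).length ≤ n + 1 := hlen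
          omega
        obtain ⟨x', y', z', hb', hp'⟩ := ih (a :: R) hlena hndaR hsortaR
          (fun i hi => hQ i (hmemaR i hi))
        obtain ⟨xP, yP, hbP, hpP⟩ := oracle P hndP (fun i hi => hQ i (hmemP i hi)) hPle
        have hha : 0 ≤ h a := (hdims a hQa).2.2.1
        have hhd0 : 0 ≤ h hd0 := (hdims hd0 (hQ hd0 (List.mem_cons_self))).2.2.1
        -- key: h a ≤ 3 · vol P
        have hkey : h a ≤ 3 * (P.map fun i => w i * d i * h i).sum := by
          have hguar : 1 / 3 ≤ (P.map fun i => w i * d i).sum :=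
            guar P (fun i hi => hQ i (hmemP i hi)) a hQa hPgt
          have h1 : (P.map fun i => w i * d i * h a).sum ≤
              (P.map fun i => w i * d i * h i).sum := by
            refine List.sum_le_sum ?_
            intro i hi
            have hha' : h a ≤ h i := hcross i hi a (List.mem_cons_self)
            obtain ⟨c1, c2, _, _, _⟩ := hdims i (hQ i (hmemP i hi))
            have : 0 ≤ w i * d i := mul_nonneg c1 c2
            exact mul_le_mul_of_nonneg_left hha' this
          have h2 : (P.map fun i => w i * d i * h a).sum =
              (P.map fun i => w i * d i).sum * h a :=
            List.sum_map_mul_right _ _ _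
          nlinarith [hguar, hha]
        have hvol_split : ((hd0 :: tl).map fun i => w i * d i * h i).sum =
            (P.map fun i => w i * d i * h i).sum +
            ((a :: R).map fun i => w i * d i * h i).sum := by
          rw [heq, List.map_append, List.sum_append]
        refine ⟨fun i => if i ∈ P then xP i else x' i,
          fun i => if i ∈ P then yP i else y' i,
          fun i => if i ∈ P then 0 else z' i + h hd0, ?_, ?_⟩
        · intro i hi
          have hiPR : i ∈ P ∨ i ∈ a :: R := by
            rw [heq] at hi; exact List.mem_append.mp hi
          rcases hiPR with hiP | hiaR
          · simp only [hiP, if_true]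
            obtain ⟨b1, b2, b3, b4⟩ := hbP i hiP
            refine ⟨b1, b2, b3, b4, le_refl _, ?_⟩
            have h1 : h i ≤ h hd0 := hhhd0 i (hmemP i hiP)
            have h2 : 0 ≤ ((hd0 :: tl).map fun i => w i * d i * h i).sum :=
              hvol_nonneg _ hQ
            simp only [List.map_cons, List.headD_cons, List.sum_cons] at h2 ⊢
            linarith
          · have hiP : i ∉ P := fun hc => hdisj _ hc _ hiaR rfl
            simp only [hiP, if_false]
            obtain ⟨b1, b2, b3, b4, b5, b6⟩ := hb' i hiaR
            refine ⟨b1, b2, b3, b4, by linarith, ?_⟩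
            have hvolaR : 0 ≤ ((a :: R).map fun i => w i * d i * h i).sum :=
              hvol_nonneg _ (fun i hi => hQ i (hmemaR i hi))
            have hvolP : 0 ≤ (P.map fun i => w i * d i * h i).sum :=
              hvol_nonneg _ (fun i hi => hQ i (hmemP i hi))
            simp only [List.map_cons, List.headD_cons, List.sum_cons] at hvol_split b6 ⊢
            linarith
        · intro i hi j hj hij
          have hiPR : i ∈ P ∨ i ∈ a :: R := by
            rw [heq] at hi; exact List.mem_append.mp hi
          have hjPR : j ∈ P ∨ j ∈ a :: R := by
            rw [heq] at hj; exact List.mem_append.mp hj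
          simp only [Sep3]
          rcases hiPR with hiP | hiaR <;> rcases hjPR with hjP | hjaR
          · simp only [hiP, hjP, if_true]
            rcases hpP i hiP j hjP hij with hh | hh | hh | hh
            · exact Or.inl hh
            · exact Or.inr (Or.inl hh)
            · exact Or.inr (Or.inr (Or.inl hh))
            · exact Or.inr (Or.inr (Or.inr (Or.inl hh)))
          · have hjP : j ∉ P := fun hc => hdisj _ hc _ hjaR rfl
            simp only [hiP, hjP, if_true, if_false]
            refine Or.inr (Or.inr (Or.inr (Or.inr (Or.inl ?_))))
            have h1 : h i ≤ h hd0 := hhhd0 i (hmemP i hiP)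
            have h2 : 0 ≤ z' j := (hb' j hjaR).2.2.2.2.1
            linarith
          · have hiP : i ∉ P := fun hc => hdisj _ hc _ hiaR rfl
            simp only [hiP, hjP, if_true, if_false]
            refine Or.inr (Or.inr (Or.inr (Or.inr (Or.inr ?_))))
            have h1 : h j ≤ h hd0 := hhhd0 j (hmemP j hjP)
            have h2 : 0 ≤ z' i := (hb' i hiaR).2.2.2.2.1
            linarith
          · have hiP : i ∉ P := fun hc => hdisj _ hc _ hiaR rfl
            have hjP : j ∉ P := fun hc => hdisj _ hc _ hjaR rfl
            simp only [hiP, hjP, if_false]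
            rcases hp' i hiaR j hjaR hij with hh | hh | hh | hh | hh | hh
            · exact Or.inl hh
            · exact Or.inr (Or.inl hh)
            · exact Or.inr (Or.inr (Or.inl hh))
            · exact Or.inr (Or.inr (Or.inr (Or.inl hh)))
            · exact Or.inr (Or.inr (Or.inr (Or.inr (Or.inl (by linarith)))))
            · exact Or.inr (Or.inr (Or.inr (Or.inr (Or.inr (by linarith)))))

theorem finset_shelf (Q : ι → Prop) (w d h μ : ι → ℝ) (c hmax : ℝ) (hmax0 : 0 ≤ hmax)
    (hdims : ∀ i, Q i → 0 ≤ w i ∧ 0 ≤ d i ∧ 0 ≤ h i ∧ h i ≤ hmax ∧ 0 ≤ μ i ∧ μ i ≤ c)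
    (oracle : ∀ P : List ι, P.Nodup → (∀ i ∈ P, Q i) → (P.map μ).sum ≤ c →
      ∃ x y : ι → ℝ, (∀ i ∈ P, 0 ≤ x i ∧ x i + w i ≤ 1 ∧ 0 ≤ y i ∧ y i + d i ≤ 1) ∧
        ∀ i ∈ P, ∀ j ∈ P, i ≠ j → Sep2 w d x y i j)
    (guar : ∀ P : List ι, (∀ i ∈ P, Q i) → ∀ a, Q a → c < (P.map μ).sum + μ a →
      1 / 3 ≤ (P.map fun i => w i * d i).sum)
    (T : Finset ι) (hT : ∀ i ∈ T, Q i) :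
    SPackF T w d h (3 * (∑ i ∈ T, w i * d i * h i) + hmax) := by
  classical
  let r : ι → ι → Prop := fun i j => h j ≤ h i
  letI : DecidableRel r := fun i j => Classical.propDecidable _
  haveI : IsTotal ι r := ⟨fun i j => le_total (h j) (h i)⟩
  haveI : IsTrans ι r := ⟨fun a b c hab hbc => le_trans hbc hab⟩
  obtain ⟨l, hperm, hsort⟩ : ∃ l : List ι, List.Perm l T.toList ∧ l.Pairwise r :=
    ⟨T.toList.insertionSort r, List.perm_insertionSort r T.toList,
      List.pairwise_insertionSort r T.toList⟩
  have hmem : ∀ i, i ∈ l ↔ i ∈ T := by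
    intro i
    rw [hperm.mem_iff, Finset.mem_toList]
  have hnd : l.Nodup := hperm.nodup_iff.mpr T.nodup_toList
  have hdims' : ∀ i, Q i → 0 ≤ w i ∧ 0 ≤ d i ∧ 0 ≤ h i ∧ 0 ≤ μ i ∧ μ i ≤ c := by
    intro i hQi
    obtain ⟨a1, a2, a3, _, a5, a6⟩ := hdims i hQi
    exact ⟨a1, a2, a3, a5, a6⟩
  obtain ⟨x, y, z, hb, hp⟩ := shelf_pack Q w d h μ c hdims' oracle guar l.length l
    le_rfl hnd hsort (fun i hi => hT i ((hmem i).1 hi))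
  have hsum : (l.map fun i => w i * d i * h i).sum = ∑ i ∈ T, w i * d i * h i := by
    rw [(hperm.map _).sum_eq, Finset.sum_map_toList]
  have hhead : (l.map h).headD 0 ≤ hmax := by
    cases hl' : l with
    | nil => simpa using hmax0
    | cons a t =>
      simp only [List.map_cons, List.headD_cons]
      exact (hdims a (hT a ((hmem a).1 (hl' ▸ List.mem_cons_self)))).2.2.2.1
  refine ⟨x, y, z, ?_, ?_⟩
  · intro i hi
    obtain ⟨b1, b2, b3, b4, b5, b6⟩ := hb i ((hmem i).2 hi)
    refine ⟨b1, b2, b3, b4, b5, le_trans b6 ?_⟩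
    rw [hsum] at *
    linarith
  · intro i hi j hj hij
    exact hp i ((hmem i).2 hi) j ((hmem j).2 hj) hij

theorem SPackF.mono {T : Finset ι} {w d h : ι → ℝ} {H H' : ℝ} (hH : H ≤ H')
    (hs : SPackF T w d h H) : SPackF T w d h H' := by
  obtain ⟨x, y, z, hb, hp⟩ := hs
  refine ⟨x, y, z, fun i hi => ?_, hp⟩
  obtain ⟨b1, b2, b3, b4, b5, b6⟩ := hb i hi
  exact ⟨b1, b2, b3, b4, b5, by linarith⟩

theorem SPackF.union {A B : Finset ι} {w d h : ι → ℝ} {H1 H2 : ℝ}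
    (hH1 : 0 ≤ H1) (hH2 : 0 ≤ H2) (hAB : Disjoint A B)
    (h1 : SPackF A w d h H1) (h2 : SPackF B w d h H2) :
    SPackF (A ∪ B) w d h (H1 + H2) := by
  classical
  obtain ⟨x1, y1, z1, hb1, hp1⟩ := h1
  obtain ⟨x2, y2, z2, hb2, hp2⟩ := h2
  have hnotboth : ∀ i ∈ B, i ∉ A := fun i hiB hiA =>
    Finset.disjoint_left.mp hAB hiA hiB
  refine ⟨fun i => if i ∈ A then x1 i else x2 i,
    fun i => if i ∈ A then y1 i else y2 i,
    fun i => if i ∈ A then z1 i else z2 i + H1, ?_, ?_⟩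
  · intro i hi
    rcases Finset.mem_union.mp hi with hiA | hiB
    · simp only [hiA, if_true]
      obtain ⟨b1, b2, b3, b4, b5, b6⟩ := hb1 i hiA
      exact ⟨b1, b2, b3, b4, b5, by linarith⟩
    · have hiA : i ∉ A := hnotboth i hiB
      simp only [hiA, if_false]
      obtain ⟨b1, b2, b3, b4, b5, b6⟩ := hb2 i hiB
      exact ⟨b1, b2, b3, b4, by linarith, by linarith⟩
  · intro i hi j hj hij
    simp only [Sep3]
    rcases Finset.mem_union.mp hi with hiA | hiB <;>
      rcases Finset.mem_union.mp hj with hjA | hjB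
    · simp only [hiA, hjA, if_true]
      rcases hp1 i hiA j hjA hij with hh | hh | hh | hh | hh | hh
      · exact Or.inl hh
      · exact Or.inr (Or.inl hh)
      · exact Or.inr (Or.inr (Or.inl hh))
      · exact Or.inr (Or.inr (Or.inr (Or.inl hh)))
      · exact Or.inr (Or.inr (Or.inr (Or.inr (Or.inl hh))))
      · exact Or.inr (Or.inr (Or.inr (Or.inr (Or.inr hh))))
    · have hjA : j ∉ A := hnotboth j hjB
      simp only [hiA, hjA, if_true, if_false]
      refine Or.inr (Or.inr (Or.inr (Or.inr (Or.inl ?_))))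
      have b6 := (hb1 i hiA).2.2.2.2.2
      have b5 := (hb2 j hjB).2.2.2.2.1
      linarith
    · have hiA : i ∉ A := hnotboth i hiB
      simp only [hiA, hjA, if_true, if_false]
      refine Or.inr (Or.inr (Or.inr (Or.inr (Or.inr ?_))))
      have b6 := (hb1 j hjA).2.2.2.2.2
      have b5 := (hb2 i hiB).2.2.2.2.1
      linarith
    · have hiA : i ∉ A := hnotboth i hiB
      have hjA : j ∉ A := hnotboth j hjB
      simp only [hiA, hjA, if_false]
      rcases hp2 i hiB j hjB hij with hh | hh | hh | hh | hh | hh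
      · exact Or.inl hh
      · exact Or.inr (Or.inl hh)
      · exact Or.inr (Or.inr (Or.inl hh))
      · exact Or.inr (Or.inr (Or.inr (Or.inl hh)))
      · exact Or.inr (Or.inr (Or.inr (Or.inr (Or.inl (by linarith)))))
      · exact Or.inr (Or.inr (Or.inr (Or.inr (Or.inr (by linarith)))))

/-- Swapping the roles of width and depth. -/
theorem SPackF.swapWD {T : Finset ι} {w d h : ι → ℝ} {H : ℝ}
    (hs : SPackF T d w h H) : SPackF T w d h H := by
  obtain ⟨x, y, z, hb, hp⟩ := hs
  refine ⟨y, x, z, fun i hi => ?_, fun i hi j hj hij => ?_⟩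
  · obtain ⟨b1, b2, b3, b4, b5, b6⟩ := hb i hi
    exact ⟨b3, b4, b1, b2, b5, b6⟩
  · rcases hp i hi j hj hij with hh | hh | hh | hh | hh | hh
    · exact Or.inr (Or.inr (Or.inl hh))
    · exact Or.inr (Or.inr (Or.inr (Or.inl hh)))
    · exact Or.inl hh
    · exact Or.inr (Or.inl hh)
    · exact Or.inr (Or.inr (Or.inr (Or.inr (Or.inl hh))))
    · exact Or.inr (Or.inr (Or.inr (Or.inr (Or.inr hh))))

/-- Volume sums are nonnegative. -/
theorem vol_nonneg (w d h : ι → ℝ) (T : Finset ι)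
    (hT : ∀ i ∈ T, 0 ≤ w i ∧ 0 ≤ d i ∧ 0 ≤ h i) :
    0 ≤ ∑ i ∈ T, w i * d i * h i := by
  refine Finset.sum_nonneg ?_
  intro i hi
  obtain ⟨a, b, c⟩ := hT i hi
  positivity

/-- Classes with `w ≤ 1/2` and `δ < d ≤ 1/(r+1)`, provided `(r+1)/2·δ ≥ 1/3`. -/
theorem classA_rows (w d h : ι → ℝ) (hmax : ℝ) (hmax0 : 0 ≤ hmax) (r : ℕ) (δ : ℝ)
    (hδ0 : 0 ≤ δ) (hkey : 1 / 3 ≤ ((r : ℝ) + 1) / 2 * δ) (T : Finset ι)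
    (hT : ∀ i ∈ T, 0 ≤ w i ∧ w i ≤ 1 / 2 ∧ δ < d i ∧ d i ≤ 1 / ((r : ℝ) + 1) ∧
      0 ≤ h i ∧ h i ≤ hmax) :
    SPackF T w d h (3 * (∑ i ∈ T, w i * d i * h i) + hmax) := by
  have hrpos : (0:ℝ) < (r:ℝ) + 1 := by positivity
  refine finset_shelf
    (fun i => 0 ≤ w i ∧ w i ≤ 1 / 2 ∧ δ < d i ∧ d i ≤ 1 / ((r : ℝ) + 1) ∧
      0 ≤ h i ∧ h i ≤ hmax)
    w d h w (((r : ℝ) + 2) / 2) hmax hmax0 ?_ ?_ ?_ T hT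
  · intro i ⟨a1, a2, a3, a4, a5, a6⟩
    exact ⟨a1, le_trans hδ0 (le_of_lt a3), a5, a6, a1, by linarith⟩
  · intro P hnd hQP hsum
    refine rows_pack w d r P hnd (fun i hi => ⟨(hQP i hi).1, (hQP i hi).2.1⟩)
      (fun i hi => ⟨le_trans hδ0 (le_of_lt (hQP i hi).2.2.1), (hQP i hi).2.2.2.1⟩) hsum
  · intro P hQP a hQa hlt
    have hwa : w a ≤ 1 / 2 := hQa.2.1
    have hsP : ((r : ℝ) + 1) / 2 ≤ (P.map w).sum := by linarith
    have e1 : (P.map fun i => w i * δ).sum ≤ (P.map fun i => w i * d i).sum := by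
      refine List.sum_le_sum ?_
      intro i hi
      exact mul_le_mul_of_nonneg_left (le_of_lt (hQP i hi).2.2.1) (hQP i hi).1
    have e2 : (P.map fun i => w i * δ).sum = (P.map w).sum * δ :=
      List.sum_map_mul_right _ _ _
    nlinarith

/-- Class A1 : `w ≤ 1/3`, `1/2 < d ≤ 1`. -/
theorem classA1 (w d h : ι → ℝ) (hmax : ℝ) (hmax0 : 0 ≤ hmax) (T : Finset ι)
    (hT : ∀ i ∈ T, 0 ≤ w i ∧ w i ≤ 1 / 3 ∧ 1 / 2 < d i ∧ d i ≤ 1 ∧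
      0 ≤ h i ∧ h i ≤ hmax) :
    SPackF T w d h (3 * (∑ i ∈ T, w i * d i * h i) + hmax) := by
  refine finset_shelf
    (fun i => 0 ≤ w i ∧ w i ≤ 1 / 3 ∧ 1 / 2 < d i ∧ d i ≤ 1 ∧ 0 ≤ h i ∧ h i ≤ hmax)
    w d h w 1 hmax hmax0 ?_ ?_ ?_ T hT
  · intro i ⟨a1, a2, a3, a4, a5, a6⟩
    exact ⟨a1, by linarith, a5, a6, a1, by linarith⟩
  · intro P hnd hQP hsum
    refine rows_pack w d 0 P hnd
      (fun i hi => ⟨(hQP i hi).1, by linarith [(hQP i hi).2.1]⟩)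
      (fun i hi => ⟨by linarith [(hQP i hi).2.2.1], ?_⟩) ?_
    · push_cast
      linarith [(hQP i hi).2.2.2.1]
    · push_cast
      linarith
  · intro P hQP a hQa hlt
    have hwa : w a ≤ 1 / 3 := hQa.2.1
    have hsP : (2 : ℝ) / 3 ≤ (P.map w).sum := by linarith
    have e1 : (P.map fun i => w i * (1/2)).sum ≤ (P.map fun i => w i * d i).sum := by
      refine List.sum_le_sum ?_
      intro i hi
      exact mul_le_mul_of_nonneg_left (le_of_lt (hQP i hi).2.2.1) (hQP i hi).1
    have e2 : (P.map fun i => w i * (1/2)).sum = (P.map w).sum * (1/2) :=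
      List.sum_map_mul_right _ _ _
    nlinarith

/-- Class A2 : `1/3 < w ≤ 1/2`, `1/2 < d ≤ 1`. -/
theorem classA2 (w d h : ι → ℝ) (hmax : ℝ) (hmax0 : 0 ≤ hmax) (T : Finset ι)
    (hT : ∀ i ∈ T, 1 / 3 < w i ∧ w i ≤ 1 / 2 ∧ 1 / 2 < d i ∧ d i ≤ 1 ∧
      0 ≤ h i ∧ h i ≤ hmax) :
    SPackF T w d h (3 * (∑ i ∈ T, w i * d i * h i) + hmax) := by
  refine finset_shelf
    (fun i => 1 / 3 < w i ∧ w i ≤ 1 / 2 ∧ 1 / 2 < d i ∧ d i ≤ 1 ∧ 0 ≤ h i ∧ h i ≤ hmax)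
    w d h w 1 hmax hmax0 ?_ ?_ ?_ T hT
  · intro i ⟨a1, a2, a3, a4, a5, a6⟩
    exact ⟨by linarith, by linarith, a5, a6, by linarith, by linarith⟩
  · intro P hnd hQP hsum
    refine rows_pack w d 0 P hnd
      (fun i hi => ⟨by linarith [(hQP i hi).1], (hQP i hi).2.1⟩)
      (fun i hi => ⟨by linarith [(hQP i hi).2.2.1], ?_⟩) ?_
    · push_cast
      linarith [(hQP i hi).2.2.2.1]
    · push_cast
      linarith
  · intro P hQP a hQa hlt
    have hwa : w a ≤ 1 / 2 := hQa.2.1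
    have hsP : (1 : ℝ) / 2 < (P.map w).sum := by linarith
    -- at least two items in P
    have hup : (P.map w).sum ≤ (P.map w).length • ((1:ℝ)/2) := by
      refine List.sum_le_card_nsmul _ _ ?_
      intro q hq
      obtain ⟨u, hu, rfl⟩ := List.mem_map.mp hq
      exact (hQP u hu).2.1
    have hlen2 : 2 ≤ P.length := by
      by_contra hcon
      push_neg at hcon
      interval_cases hP : P.length
      · rw [List.length_eq_zero_iff] at hP
        rw [hP] at hsP
        norm_num at hsP
      · have : (P.map w).length = 1 := by rw [List.length_map, hP]
        rw [this] at hup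
        simp only [one_smul] at hup
        linarith
    have hlow : (P.map fun i => w i * d i).length • ((1:ℝ)/6) ≤
        (P.map fun i => w i * d i).sum := by
      refine List.card_nsmul_le_sum _ _ ?_
      intro q hq
      obtain ⟨u, hu, rfl⟩ := List.mem_map.mp hq
      have h1 := (hQP u hu).1
      have h2 := (hQP u hu).2.2.1
      nlinarith
    rw [List.length_map, nsmul_eq_mul] at hlow
    have h2 : (2:ℝ) ≤ (P.length : ℝ) := by exact_mod_cast hlen2
    linarith

/-- Class A6 : `w ≤ 1/2`, `d ≤ 1/6` (both possibly small) — uses NFDH. -/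
theorem classA6 (w d h : ι → ℝ) (hmax : ℝ) (hmax0 : 0 ≤ hmax) (T : Finset ι)
    (hT : ∀ i ∈ T, 0 ≤ w i ∧ w i ≤ 1 / 2 ∧ 0 ≤ d i ∧ d i ≤ 1 / 6 ∧
      0 ≤ h i ∧ h i ≤ hmax) :
    SPackF T w d h (3 * (∑ i ∈ T, w i * d i * h i) + hmax) := by
  classical
  refine finset_shelf
    (fun i => 0 ≤ w i ∧ w i ≤ 1 / 2 ∧ 0 ≤ d i ∧ d i ≤ 1 / 6 ∧ 0 ≤ h i ∧ h i ≤ hmax)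
    w d h (fun i => w i * d i) (5 / 12) hmax hmax0 ?_ ?_ ?_ T hT
  · intro i ⟨a1, a2, a3, a4, a5, a6⟩
    refine ⟨a1, a3, a5, a6, mul_nonneg a1 a3, ?_⟩
    nlinarith
  · -- NFDH oracle
    intro P hnd hQP hsum
    let r : ι → ι → Prop := fun i j => d j ≤ d i
    letI : DecidableRel r := fun i j => Classical.propDecidable _
    haveI : IsTotal ι r := ⟨fun i j => le_total (d j) (d i)⟩
    haveI : IsTrans ι r := ⟨fun a b c hab hbc => le_trans hbc hab⟩
    obtain ⟨P', hperm, hsort⟩ : ∃ P' : List ι, List.Perm P' P ∧ P'.Pairwise r :=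
      ⟨P.insertionSort r, List.perm_insertionSort r P,
        List.pairwise_insertionSort r P⟩
    have hmem : ∀ i, i ∈ P' ↔ i ∈ P := fun i => hperm.mem_iff
    have hnd' : P'.Nodup := hperm.nodup_iff.mpr hnd
    obtain ⟨x, y, hb, hp⟩ := nfdh_pack w d P'.length P' le_rfl hnd' hsort
      (fun i hi => ⟨(hQP i ((hmem i).1 hi)).1, (hQP i ((hmem i).1 hi)).2.1⟩)
      (fun i hi => (hQP i ((hmem i).1 hi)).2.2.1)
    have hsum' : (P'.map fun i => w i * d i).sum = (P.map fun i => w i * d i).sum :=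
      (hperm.map _).sum_eq
    have hD : (P'.map d).headD 0 + 2 * (P'.map fun i => w i * d i).sum ≤ 1 := by
      have hhead : (P'.map d).headD 0 ≤ 1 / 6 := by
        cases hP' : P' with
        | nil => norm_num
        | cons a t =>
          simp only [List.map_cons, List.headD_cons]
          exact (hQP a ((hmem a).1 (hP' ▸ List.mem_cons_self))).2.2.2.1
      rw [hsum']
      linarith
    refine ⟨x, y, ?_, ?_⟩
    · intro i hi
      obtain ⟨b1, b2, b3, b4⟩ := hb i ((hmem i).2 hi)
      exact ⟨b1, b2, b3, le_trans b4 hD⟩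
    · intro i hi j hj hij
      exact hp i ((hmem i).2 hi) j ((hmem j).2 hj) hij
  · intro P hQP a hQa hlt
    have h1 : w a * d a ≤ 1 / 12 := by
      have := hQa.1
      have := hQa.2.1
      have := hQa.2.2.1
      have := hQa.2.2.2.1
      nlinarith
    linarith

/-- Class B1 : `1/2 < w ≤ 1`, `d ≤ 1/3` — mirror of A1. -/
theorem classB1 (w d h : ι → ℝ) (hmax : ℝ) (hmax0 : 0 ≤ hmax) (T : Finset ι)
    (hT : ∀ i ∈ T, 1 / 2 < w i ∧ w i ≤ 1 ∧ 0 ≤ d i ∧ d i ≤ 1 / 3 ∧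
      0 ≤ h i ∧ h i ≤ hmax) :
    SPackF T w d h (3 * (∑ i ∈ T, w i * d i * h i) + hmax) := by
  have hswap := classA1 d w h hmax hmax0 T (fun i hi => by
    obtain ⟨a1, a2, a3, a4, a5, a6⟩ := hT i hi
    exact ⟨a3, a4, a1, a2, a5, a6⟩)
  have heq : (∑ i ∈ T, d i * w i * h i) = ∑ i ∈ T, w i * d i * h i := by
    refine Finset.sum_congr rfl ?_
    intro i _
    ring
  rw [heq] at hswap
  exact SPackF.swapWD hswap

/-- Class B2 : `1/2 < w ≤ 1`, `1/3 < d ≤ 1/2` — mirror of A2. -/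
theorem classB2 (w d h : ι → ℝ) (hmax : ℝ) (hmax0 : 0 ≤ hmax) (T : Finset ι)
    (hT : ∀ i ∈ T, 1 / 2 < w i ∧ w i ≤ 1 ∧ 1 / 3 < d i ∧ d i ≤ 1 / 2 ∧
      0 ≤ h i ∧ h i ≤ hmax) :
    SPackF T w d h (3 * (∑ i ∈ T, w i * d i * h i) + hmax) := by
  have hswap := classA2 d w h hmax hmax0 T (fun i hi => by
    obtain ⟨a1, a2, a3, a4, a5, a6⟩ := hT i hi
    exact ⟨a3, a4, a1, a2, a5, a6⟩)
  have heq : (∑ i ∈ T, d i * w i * h i) = ∑ i ∈ T, w i * d i * h i := by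
    refine Finset.sum_congr rfl ?_
    intro i _
    ring
  rw [heq] at hswap
  exact SPackF.swapWD hswap

end Stmt1Aux

/-- Any finite set `T` of 3D items with widths and depths in
`(0,1]`, heights in `(0, hmax]`, such that every item has width at most `1/2`
or depth at most `1/2`, can be packed into the strip
`[0,1] × [0,1] × [0, 3·v(T) + 8·hmax]`. -/
theorem stmt1 {ι : Type*} (T : Finset ι) (w d h : ι → ℝ) (hmax : ℝ)
    (hmax_pos : 0 < hmax) (hmax_le : hmax ≤ 1)
    (hdims : ∀ i ∈ T, 0 < w i ∧ w i ≤ 1 ∧ 0 < d i ∧ d i ≤ 1 ∧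
      0 < h i ∧ h i ≤ hmax)
    (hwd : ∀ i ∈ T, w i ≤ 1 / 2 ∨ d i ≤ 1 / 2) :
    CanPack T w d h 1 1 (3 * (∑ i ∈ T, w i * d i * h i) + 8 * hmax) := by
  classical
  have h0 : (0:ℝ) ≤ hmax := le_of_lt hmax_pos
  set TB := T.filter (fun i => 1/2 < w i) with hTBd
  set TA := T.filter (fun i => ¬ 1/2 < w i) with hTAd
  set TB1 := TB.filter (fun i => d i ≤ 1/3) with hTB1d
  set TB2 := TB.filter (fun i => ¬ d i ≤ 1/3) with hTB2d
  set TAD := TA.filter (fun i => 1/2 < d i) with hTADd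
  set TAS := TA.filter (fun i => ¬ 1/2 < d i) with hTASd
  set A1 := TAD.filter (fun i => w i ≤ 1/3) with hA1d
  set A2 := TAD.filter (fun i => ¬ w i ≤ 1/3) with hA2d
  set A3 := TAS.filter (fun i => 1/3 < d i) with hA3d
  set TAS2 := TAS.filter (fun i => ¬ 1/3 < d i) with hTAS2d
  set A4 := TAS2.filter (fun i => 1/4 < d i) with hA4d
  set TAS3 := TAS2.filter (fun i => ¬ 1/4 < d i) with hTAS3d
  set A5 := TAS3.filter (fun i => 1/6 < d i) with hA5d
  set A6 := TAS3.filter (fun i => ¬ 1/6 < d i) with hA6d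
  -- subset relations
  have sTB : TB ⊆ T := Finset.filter_subset _ _
  have sTA : TA ⊆ T := Finset.filter_subset _ _
  have sTB1 : TB1 ⊆ T := (Finset.filter_subset _ _).trans sTB
  have sTB2 : TB2 ⊆ T := (Finset.filter_subset _ _).trans sTB
  have sTAD : TAD ⊆ T := (Finset.filter_subset _ _).trans sTA
  have sTAS : TAS ⊆ T := (Finset.filter_subset _ _).trans sTA
  have sA1 : A1 ⊆ T := (Finset.filter_subset _ _).trans sTAD
  have sA2 : A2 ⊆ T := (Finset.filter_subset _ _).trans sTAD
  have sA3 : A3 ⊆ T := (Finset.filter_subset _ _).trans sTAS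
  have sTAS2 : TAS2 ⊆ T := (Finset.filter_subset _ _).trans sTAS
  have sA4 : A4 ⊆ T := (Finset.filter_subset _ _).trans sTAS2
  have sTAS3 : TAS3 ⊆ T := (Finset.filter_subset _ _).trans sTAS2
  have sA5 : A5 ⊆ T := (Finset.filter_subset _ _).trans sTAS3
  have sA6 : A6 ⊆ T := (Finset.filter_subset _ _).trans sTAS3
  -- volume nonnegativity
  have vnn : ∀ S : Finset ι, S ⊆ T → 0 ≤ ∑ i ∈ S, w i * d i * h i := by
    intro S hS
    refine Stmt1Aux.vol_nonneg w d h S ?_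
    intro i hi
    obtain ⟨b1, _, b3, _, b5, _⟩ := hdims i (hS hi)
    exact ⟨le_of_lt b1, le_of_lt b3, le_of_lt b5⟩
  -- membership conditions for classes
  have mA1 : ∀ i ∈ A1, i ∈ T ∧ w i ≤ 1/2 ∧ 1/2 < d i ∧ w i ≤ 1/3 := by
    intro i hi
    rw [hA1d] at hi
    obtain ⟨hiTAD, hw13⟩ := Finset.mem_filter.mp hi
    rw [hTADd] at hiTAD
    obtain ⟨hiTA, hd12⟩ := Finset.mem_filter.mp hiTAD
    rw [hTAd] at hiTA
    obtain ⟨hiT, hwn⟩ := Finset.mem_filter.mp hiTA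
    exact ⟨hiT, not_lt.mp hwn, hd12, hw13⟩
  have mA2 : ∀ i ∈ A2, i ∈ T ∧ w i ≤ 1/2 ∧ 1/2 < d i ∧ 1/3 < w i := by
    intro i hi
    rw [hA2d] at hi
    obtain ⟨hiTAD, hw13⟩ := Finset.mem_filter.mp hi
    rw [hTADd] at hiTAD
    obtain ⟨hiTA, hd12⟩ := Finset.mem_filter.mp hiTAD
    rw [hTAd] at hiTA
    obtain ⟨hiT, hwn⟩ := Finset.mem_filter.mp hiTA
    exact ⟨hiT, not_lt.mp hwn, hd12, not_le.mp hw13⟩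
  have mA3 : ∀ i ∈ A3, i ∈ T ∧ w i ≤ 1/2 ∧ d i ≤ 1/2 ∧ 1/3 < d i := by
    intro i hi
    rw [hA3d] at hi
    obtain ⟨hiTAS, hd13⟩ := Finset.mem_filter.mp hi
    rw [hTASd] at hiTAS
    obtain ⟨hiTA, hd12⟩ := Finset.mem_filter.mp hiTAS
    rw [hTAd] at hiTA
    obtain ⟨hiT, hwn⟩ := Finset.mem_filter.mp hiTA
    exact ⟨hiT, not_lt.mp hwn, not_lt.mp hd12, hd13⟩
  have mA4 : ∀ i ∈ A4, i ∈ T ∧ w i ≤ 1/2 ∧ d i ≤ 1/3 ∧ 1/4 < d i := by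
    intro i hi
    rw [hA4d] at hi
    obtain ⟨hiTAS2, hd14⟩ := Finset.mem_filter.mp hi
    rw [hTAS2d] at hiTAS2
    obtain ⟨hiTAS, hd13⟩ := Finset.mem_filter.mp hiTAS2
    rw [hTASd] at hiTAS
    obtain ⟨hiTA, _⟩ := Finset.mem_filter.mp hiTAS
    rw [hTAd] at hiTA
    obtain ⟨hiT, hwn⟩ := Finset.mem_filter.mp hiTA
    exact ⟨hiT, not_lt.mp hwn, not_lt.mp hd13, hd14⟩
  have mA5 : ∀ i ∈ A5, i ∈ T ∧ w i ≤ 1/2 ∧ d i ≤ 1/4 ∧ 1/6 < d i := by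
    intro i hi
    rw [hA5d] at hi
    obtain ⟨hiTAS3, hd16⟩ := Finset.mem_filter.mp hi
    rw [hTAS3d] at hiTAS3
    obtain ⟨hiTAS2, hd14⟩ := Finset.mem_filter.mp hiTAS3
    rw [hTAS2d] at hiTAS2
    obtain ⟨hiTAS, _⟩ := Finset.mem_filter.mp hiTAS2
    rw [hTASd] at hiTAS
    obtain ⟨hiTA, _⟩ := Finset.mem_filter.mp hiTAS
    rw [hTAd] at hiTA
    obtain ⟨hiT, hwn⟩ := Finset.mem_filter.mp hiTA
    exact ⟨hiT, not_lt.mp hwn, not_lt.mp hd14, hd16⟩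
  have mA6 : ∀ i ∈ A6, i ∈ T ∧ w i ≤ 1/2 ∧ d i ≤ 1/6 := by
    intro i hi
    rw [hA6d] at hi
    obtain ⟨hiTAS3, hd16⟩ := Finset.mem_filter.mp hi
    rw [hTAS3d] at hiTAS3
    obtain ⟨hiTAS2, _⟩ := Finset.mem_filter.mp hiTAS3
    rw [hTAS2d] at hiTAS2
    obtain ⟨hiTAS, _⟩ := Finset.mem_filter.mp hiTAS2
    rw [hTASd] at hiTAS
    obtain ⟨hiTA, _⟩ := Finset.mem_filter.mp hiTAS
    rw [hTAd] at hiTA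
    obtain ⟨hiT, hwn⟩ := Finset.mem_filter.mp hiTA
    exact ⟨hiT, not_lt.mp hwn, not_lt.mp hd16⟩
  have mB1 : ∀ i ∈ TB1, i ∈ T ∧ 1/2 < w i ∧ d i ≤ 1/3 := by
    intro i hi
    rw [hTB1d] at hi
    obtain ⟨hiTB, hd13⟩ := Finset.mem_filter.mp hi
    rw [hTBd] at hiTB
    obtain ⟨hiT, hw12⟩ := Finset.mem_filter.mp hiTB
    exact ⟨hiT, hw12, hd13⟩
  have mB2 : ∀ i ∈ TB2, i ∈ T ∧ 1/2 < w i ∧ 1/3 < d i := by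
    intro i hi
    rw [hTB2d] at hi
    obtain ⟨hiTB, hd13⟩ := Finset.mem_filter.mp hi
    rw [hTBd] at hiTB
    obtain ⟨hiT, hw12⟩ := Finset.mem_filter.mp hiTB
    exact ⟨hiT, hw12, not_le.mp hd13⟩
  -- class packings
  have p1 : Stmt1Aux.SPackF A1 w d h (3 * (∑ i ∈ A1, w i * d i * h i) + hmax) := by
    refine Stmt1Aux.classA1 w d h hmax h0 A1 ?_
    intro i hi
    obtain ⟨hiT, _, hd12, hw13⟩ := mA1 i hi
    obtain ⟨b1, b2, b3, b4, b5, b6⟩ := hdims i hiT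
    exact ⟨le_of_lt b1, hw13, hd12, b4, le_of_lt b5, b6⟩
  have p2 : Stmt1Aux.SPackF A2 w d h (3 * (∑ i ∈ A2, w i * d i * h i) + hmax) := by
    refine Stmt1Aux.classA2 w d h hmax h0 A2 ?_
    intro i hi
    obtain ⟨hiT, hw12, hd12, hw13⟩ := mA2 i hi
    obtain ⟨b1, b2, b3, b4, b5, b6⟩ := hdims i hiT
    exact ⟨hw13, hw12, hd12, b4, le_of_lt b5, b6⟩
  have p3 : Stmt1Aux.SPackF A3 w d h (3 * (∑ i ∈ A3, w i * d i * h i) + hmax) := by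
    refine Stmt1Aux.classA_rows w d h hmax h0 1 (1/3) (by norm_num) (by norm_num) A3 ?_
    intro i hi
    obtain ⟨hiT, hw12, hd12, hd13⟩ := mA3 i hi
    obtain ⟨b1, b2, b3, b4, b5, b6⟩ := hdims i hiT
    refine ⟨le_of_lt b1, hw12, hd13, by push_cast; linarith, le_of_lt b5, b6⟩
  have p4 : Stmt1Aux.SPackF A4 w d h (3 * (∑ i ∈ A4, w i * d i * h i) + hmax) := by
    refine Stmt1Aux.classA_rows w d h hmax h0 2 (1/4) (by norm_num) (by norm_num) A4 ?_
    intro i hi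
    obtain ⟨hiT, hw12, hd13, hd14⟩ := mA4 i hi
    obtain ⟨b1, b2, b3, b4, b5, b6⟩ := hdims i hiT
    refine ⟨le_of_lt b1, hw12, hd14, by push_cast; linarith, le_of_lt b5, b6⟩
  have p5 : Stmt1Aux.SPackF A5 w d h (3 * (∑ i ∈ A5, w i * d i * h i) + hmax) := by
    refine Stmt1Aux.classA_rows w d h hmax h0 3 (1/6) (by norm_num) (by norm_num) A5 ?_
    intro i hi
    obtain ⟨hiT, hw12, hd14, hd16⟩ := mA5 i hi
    obtain ⟨b1, b2, b3, b4, b5, b6⟩ := hdims i hiT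
    refine ⟨le_of_lt b1, hw12, hd16, by push_cast; linarith, le_of_lt b5, b6⟩
  have p6 : Stmt1Aux.SPackF A6 w d h (3 * (∑ i ∈ A6, w i * d i * h i) + hmax) := by
    refine Stmt1Aux.classA6 w d h hmax h0 A6 ?_
    intro i hi
    obtain ⟨hiT, hw12, hd16⟩ := mA6 i hi
    obtain ⟨b1, b2, b3, b4, b5, b6⟩ := hdims i hiT
    exact ⟨le_of_lt b1, hw12, le_of_lt b3, hd16, le_of_lt b5, b6⟩
  have pb1 : Stmt1Aux.SPackF TB1 w d h (3 * (∑ i ∈ TB1, w i * d i * h i) + hmax) := by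
    refine Stmt1Aux.classB1 w d h hmax h0 TB1 ?_
    intro i hi
    obtain ⟨hiT, hw12, hd13⟩ := mB1 i hi
    obtain ⟨b1, b2, b3, b4, b5, b6⟩ := hdims i hiT
    exact ⟨hw12, b2, le_of_lt b3, hd13, le_of_lt b5, b6⟩
  have pb2 : Stmt1Aux.SPackF TB2 w d h (3 * (∑ i ∈ TB2, w i * d i * h i) + hmax) := by
    refine Stmt1Aux.classB2 w d h hmax h0 TB2 ?_
    intro i hi
    obtain ⟨hiT, hw12, hd13⟩ := mB2 i hi
    obtain ⟨b1, b2, b3, b4, b5, b6⟩ := hdims i hiT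
    have hd12 : d i ≤ 1/2 := (hwd i hiT).resolve_left (not_le.mpr hw12)
    exact ⟨hw12, b2, hd13, hd12, le_of_lt b5, b6⟩
  -- combine
  have e12 : A1 ∪ A2 = TAD := by
    rw [hA1d, hA2d]; exact Finset.filter_union_filter_not_eq _ _
  have dj12 : Disjoint A1 A2 := by
    rw [hA1d, hA2d]; exact Finset.disjoint_filter_filter_not _ _ _
  have pAD := Stmt1Aux.SPackF.union (by linarith [vnn A1 sA1]) (by linarith [vnn A2 sA2])
    dj12 p1 p2
  rw [e12] at pAD
  have e56 : A5 ∪ A6 = TAS3 := by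
    rw [hA5d, hA6d]; exact Finset.filter_union_filter_not_eq _ _
  have dj56 : Disjoint A5 A6 := by
    rw [hA5d, hA6d]; exact Finset.disjoint_filter_filter_not _ _ _
  have pS3 := Stmt1Aux.SPackF.union (by linarith [vnn A5 sA5]) (by linarith [vnn A6 sA6])
    dj56 p5 p6
  rw [e56] at pS3
  have e4 : A4 ∪ TAS3 = TAS2 := by
    rw [hA4d, hTAS3d]; exact Finset.filter_union_filter_not_eq _ _
  have dj4 : Disjoint A4 TAS3 := by
    rw [hA4d, hTAS3d]; exact Finset.disjoint_filter_filter_not _ _ _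
  have pS2 := Stmt1Aux.SPackF.union (by linarith [vnn A4 sA4])
    (by linarith [vnn A5 sA5, vnn A6 sA6]) dj4 p4 pS3
  rw [e4] at pS2
  have e3 : A3 ∪ TAS2 = TAS := by
    rw [hA3d, hTAS2d]; exact Finset.filter_union_filter_not_eq _ _
  have dj3 : Disjoint A3 TAS2 := by
    rw [hA3d, hTAS2d]; exact Finset.disjoint_filter_filter_not _ _ _
  have pS := Stmt1Aux.SPackF.union (by linarith [vnn A3 sA3])
    (by linarith [vnn A4 sA4, vnn A5 sA5, vnn A6 sA6]) dj3 p3 pS2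
  rw [e3] at pS
  have eA : TAD ∪ TAS = TA := by
    rw [hTADd, hTASd]; exact Finset.filter_union_filter_not_eq _ _
  have djA : Disjoint TAD TAS := by
    rw [hTADd, hTASd]; exact Finset.disjoint_filter_filter_not _ _ _
  have pA := Stmt1Aux.SPackF.union (by linarith [vnn A1 sA1, vnn A2 sA2])
    (by linarith [vnn A3 sA3, vnn A4 sA4, vnn A5 sA5, vnn A6 sA6]) djA pAD pS
  rw [eA] at pA
  have eB : TB1 ∪ TB2 = TB := by
    rw [hTB1d, hTB2d]; exact Finset.filter_union_filter_not_eq _ _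
  have djB : Disjoint TB1 TB2 := by
    rw [hTB1d, hTB2d]; exact Finset.disjoint_filter_filter_not _ _ _
  have pB := Stmt1Aux.SPackF.union (by linarith [vnn TB1 sTB1]) (by linarith [vnn TB2 sTB2])
    djB pb1 pb2
  rw [eB] at pB
  have eT : TB ∪ TA = T := by
    rw [hTBd, hTAd]; exact Finset.filter_union_filter_not_eq _ _
  have djT : Disjoint TB TA := by
    rw [hTBd, hTAd]; exact Finset.disjoint_filter_filter_not _ _ _
  have pT := Stmt1Aux.SPackF.union (by linarith [vnn TB1 sTB1, vnn TB2 sTB2])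
    (by linarith [vnn A1 sA1, vnn A2 sA2, vnn A3 sA3, vnn A4 sA4, vnn A5 sA5, vnn A6 sA6])
    djT pB pA
  rw [eT] at pT
  -- volume bookkeeping
  have sv12 : (∑ i ∈ A1, w i * d i * h i) + (∑ i ∈ A2, w i * d i * h i)
      = ∑ i ∈ TAD, w i * d i * h i := by
    rw [hA1d, hA2d]; exact Finset.sum_filter_add_sum_filter_not TAD _ _
  have sv56 : (∑ i ∈ A5, w i * d i * h i) + (∑ i ∈ A6, w i * d i * h i)
      = ∑ i ∈ TAS3, w i * d i * h i := by
    rw [hA5d, hA6d]; exact Finset.sum_filter_add_sum_filter_not TAS3 _ _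
  have sv4 : (∑ i ∈ A4, w i * d i * h i) + (∑ i ∈ TAS3, w i * d i * h i)
      = ∑ i ∈ TAS2, w i * d i * h i := by
    rw [hA4d, hTAS3d]; exact Finset.sum_filter_add_sum_filter_not TAS2 _ _
  have sv3 : (∑ i ∈ A3, w i * d i * h i) + (∑ i ∈ TAS2, w i * d i * h i)
      = ∑ i ∈ TAS, w i * d i * h i := by
    rw [hA3d, hTAS2d]; exact Finset.sum_filter_add_sum_filter_not TAS _ _
  have svA : (∑ i ∈ TAD, w i * d i * h i) + (∑ i ∈ TAS, w i * d i * h i)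
      = ∑ i ∈ TA, w i * d i * h i := by
    rw [hTADd, hTASd]; exact Finset.sum_filter_add_sum_filter_not TA _ _
  have svB : (∑ i ∈ TB1, w i * d i * h i) + (∑ i ∈ TB2, w i * d i * h i)
      = ∑ i ∈ TB, w i * d i * h i := by
    rw [hTB1d, hTB2d]; exact Finset.sum_filter_add_sum_filter_not TB _ _
  have svT : (∑ i ∈ TB, w i * d i * h i) + (∑ i ∈ TA, w i * d i * h i)
      = ∑ i ∈ T, w i * d i * h i := by
    rw [hTBd, hTAd]; exact Finset.sum_filter_add_sum_filter_not T _ _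
  have pT2 : Stmt1Aux.SPackF T w d h (3 * (∑ i ∈ T, w i * d i * h i) + 8 * hmax) := by
    refine Stmt1Aux.SPackF.mono ?_ pT
    linarith
  have pT' := pT2
  obtain ⟨x, y, z, hb, hp⟩ := pT'
  exact ⟨x, y, z, hb, fun i hi j hj hij => Stmt1Aux.disjoint_of_sep3 (hp i hi j hj hij)⟩
end

section
/- Let I be a finite set of 3D items with all dimensions in (0,1] and total volume v(I) ≤ K, for some real K ≥ 1, and let δ ∈ (0,1]. Define μ_0 = δ and μ_j = μ_{j−1}^4 for j ≥ 1, and let N = ⌈3K/δ⌉. Then there exists an index j ∈ {1,…,N} such that the total volume of the items of I that have at least one of their three dimensions in the interval (μ_j, μ_{j−1}] is at most δ. -/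
open scoped Classical

/-- Shifting argument: if the items of `I` have all dimensions
in `(0,1]` and total volume at most `K` (with `K ≥ 1`), `δ ∈ (0,1]`,
`μ₀ = δ`, `μⱼ = μ_{j-1}⁴`, and `N = ⌈3K/δ⌉`, then for some `j ∈ {1,…,N}` the
total volume of the items with at least one dimension in `(μⱼ, μ_{j-1}]` is at
most `δ`. -/
theorem stmt2 {ι : Type*} (I : Finset ι) (w d h : ι → ℝ) (K δ : ℝ)
    (hK : 1 ≤ K) (hδpos : 0 < δ) (hδle : δ ≤ 1)
    (hdims : ∀ i ∈ I, 0 < w i ∧ w i ≤ 1 ∧ 0 < d i ∧ d i ≤ 1 ∧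
      0 < h i ∧ h i ≤ 1)
    (hvol : ∑ i ∈ I, w i * d i * h i ≤ K)
    (μ : ℕ → ℝ) (hμ0 : μ 0 = δ) (hμ : ∀ j, μ (j + 1) = (μ j) ^ 4) :
    ∃ j ∈ Finset.Icc 1 ⌈3 * K / δ⌉₊,
      ∑ i ∈ I.filter (fun i =>
          (μ j < w i ∧ w i ≤ μ (j - 1)) ∨ (μ j < d i ∧ d i ≤ μ (j - 1)) ∨
          (μ j < h i ∧ h i ≤ μ (j - 1))),
        w i * d i * h i ≤ δ := by
  by_contra hcon
  push_neg at hcon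
  set N := ⌈3 * K / δ⌉₊ with hNdef
  set P : ℕ → ι → Prop := fun j i =>
      (μ j < w i ∧ w i ≤ μ (j - 1)) ∨ (μ j < d i ∧ d i ≤ μ (j - 1)) ∨
      (μ j < h i ∧ h i ≤ μ (j - 1)) with hP
  set v : ι → ℝ := fun i => w i * d i * h i with hv
  have hvnn : ∀ i ∈ I, 0 ≤ v i := by
    intro i hi
    obtain ⟨h1, _, h2, _, h3, _⟩ := hdims i hi
    positivity
  have hμbd : ∀ j, 0 < μ j ∧ μ j ≤ 1 := by
    intro j
    induction j with
    | zero => rw [hμ0]; exact ⟨hδpos, hδle⟩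
    | succ n ih =>
      rw [hμ n]
      exact ⟨pow_pos ih.1 4, pow_le_one₀ ih.1.le ih.2⟩
  have hanti : Antitone μ := by
    apply antitone_nat_of_succ_le
    intro n
    rw [hμ n]
    calc μ n ^ 4 ≤ μ n ^ 1 :=
          pow_le_pow_of_le_one (hμbd n).1.le (hμbd n).2 (by norm_num)
      _ = μ n := pow_one _
  -- each real number lies in at most one interval (μ j, μ (j-1)]
  have hone : ∀ x : ℝ,
      ((Finset.Icc 1 N).filter (fun j => μ j < x ∧ x ≤ μ (j - 1))).card ≤ 1 := by
    intro x
    apply Finset.card_le_one.mpr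
    intro a ha b hb
    simp only [Finset.mem_filter, Finset.mem_Icc] at ha hb
    rcases lt_trichotomy a b with hab | hab | hab
    · exfalso
      have h1 : a ≤ b - 1 := by omega
      have := hanti h1
      linarith [ha.2.1, hb.2.2]
    · exact hab
    · exfalso
      have h1 : b ≤ a - 1 := by omega
      have := hanti h1
      linarith [hb.2.1, ha.2.2]
  have hcard3 : ∀ i, ((Finset.Icc 1 N).filter (fun j => P j i)).card ≤ 3 := by
    intro i
    have hsub : (Finset.Icc 1 N).filter (fun j => P j i) ⊆
        ((Finset.Icc 1 N).filter (fun j => μ j < w i ∧ w i ≤ μ (j - 1))) ∪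
        ((Finset.Icc 1 N).filter (fun j => μ j < d i ∧ d i ≤ μ (j - 1))) ∪
        ((Finset.Icc 1 N).filter (fun j => μ j < h i ∧ h i ≤ μ (j - 1))) := by
      intro j hj
      simp only [Finset.mem_filter, Finset.mem_union] at hj ⊢
      rcases hj.2 with h' | h' | h'
      · exact Or.inl (Or.inl ⟨hj.1, h'⟩)
      · exact Or.inl (Or.inr ⟨hj.1, h'⟩)
      · exact Or.inr ⟨hj.1, h'⟩
    calc ((Finset.Icc 1 N).filter (fun j => P j i)).card
        ≤ _ := Finset.card_le_card hsub
      _ ≤ _ + _ := Finset.card_union_le _ _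
      _ ≤ (_ + _) + _ := by gcongr; exact Finset.card_union_le _ _
      _ ≤ 1 + 1 + 1 := by gcongr <;> [exact hone (w i); exact hone (d i); exact hone (h i)]
      _ = 3 := by norm_num
  have key : ∑ j ∈ Finset.Icc 1 N, ∑ i ∈ I.filter (P j), v i ≤ 3 * K := by
    calc ∑ j ∈ Finset.Icc 1 N, ∑ i ∈ I.filter (P j), v i
        = ∑ j ∈ Finset.Icc 1 N, ∑ i ∈ I, if P j i then v i else 0 := by
          refine Finset.sum_congr rfl fun j _ => ?_
          rw [Finset.sum_filter]
      _ = ∑ i ∈ I, ∑ j ∈ Finset.Icc 1 N, if P j i then v i else 0 :=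
          Finset.sum_comm
      _ = ∑ i ∈ I, (((Finset.Icc 1 N).filter (fun j => P j i)).card : ℝ) * v i := by
          refine Finset.sum_congr rfl fun i _ => ?_
          rw [← Finset.sum_filter, Finset.sum_const, nsmul_eq_mul]
      _ ≤ ∑ i ∈ I, 3 * v i := by
          refine Finset.sum_le_sum fun i hi => ?_
          apply mul_le_mul_of_nonneg_right _ (hvnn i hi)
          exact_mod_cast hcard3 i
      _ = 3 * ∑ i ∈ I, v i := by rw [Finset.mul_sum]
      _ ≤ 3 * K := by
          apply mul_le_mul_of_nonneg_left hvol (by norm_num)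
  -- lower bound
  have hNpos : 1 ≤ N := by
    rw [hNdef]
    exact Nat.one_le_ceil_iff.mpr (div_pos (by linarith) hδpos)
  have hne : (Finset.Icc 1 N).Nonempty := by
    rw [Finset.nonempty_Icc]; exact hNpos
  have hlow : (N : ℝ) * δ < ∑ j ∈ Finset.Icc 1 N, ∑ i ∈ I.filter (P j), v i := by
    have := Finset.sum_lt_sum_of_nonempty hne
      (f := fun _ => δ) (g := fun j => ∑ i ∈ I.filter (P j), v i)
      (fun j hj => hcon j hj)
    simpa [Nat.card_Icc, mul_comm] using this
  have hceil : 3 * K / δ ≤ (N : ℝ) := Nat.le_ceil _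
  have h3K : 3 * K ≤ (N : ℝ) * δ := by
    rw [div_le_iff₀ hδpos] at hceil
    linarith
  linarith
end

section
/- Let μ ∈ (0,1/2], let L be a finite set of 3D items each of whose width, depth and height all exceed μ, and let S be a finite set of 3D items each of height at most μ^4, all dimensions lying in (0,1]. Suppose L ∪ S can be packed into the unit cube [0,1]^3. Then there exists a subset S' ⊆ S with v(S∖S') ≤ 2μ and a packing of L ∪ S' into [0,1]^3 in which, for every item ℓ ∈ L, the z-coordinate z_ℓ of ℓ equals a·μ^4 + Σ_{j∈F} h_j for some nonnegative integer a and some subset F ⊆ L∖{ℓ} with |F| ≤ ⌊1/μ⌋. -/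
open scoped Classical
open MeasureTheory

section AuxGeom

/-- membership in an ItemRegion unfolded -/
lemma mem_itemRegion {w d h x y z : ℝ} {p : ℝ × ℝ × ℝ} :
    p ∈ ItemRegion w d h x y z ↔
      (x < p.1 ∧ p.1 < x + w) ∧ (y < p.2.1 ∧ p.2.1 < y + d) ∧ (z < p.2.2 ∧ p.2.2 < z + h) := by
  simp [ItemRegion, Set.mem_prod, Set.mem_Ioo, and_assoc]

lemma disjoint_of_sepx {w1 d1 h1 x1 y1 z1 w2 d2 h2 x2 y2 z2 : ℝ} (hsep : x1 + w1 ≤ x2) :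
    Disjoint (ItemRegion w1 d1 h1 x1 y1 z1) (ItemRegion w2 d2 h2 x2 y2 z2) := by
  rw [Set.disjoint_left]
  intro p hp1 hp2
  rw [mem_itemRegion] at hp1 hp2
  linarith [hp1.1.2, hp2.1.1]

lemma disjoint_of_sepy {w1 d1 h1 x1 y1 z1 w2 d2 h2 x2 y2 z2 : ℝ} (hsep : y1 + d1 ≤ y2) :
    Disjoint (ItemRegion w1 d1 h1 x1 y1 z1) (ItemRegion w2 d2 h2 x2 y2 z2) := by
  rw [Set.disjoint_left]
  intro p hp1 hp2
  rw [mem_itemRegion] at hp1 hp2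
  linarith [hp1.2.1.2, hp2.2.1.1]

lemma disjoint_of_sepz {w1 d1 h1 x1 y1 z1 w2 d2 h2 x2 y2 z2 : ℝ} (hsep : z1 + h1 ≤ z2) :
    Disjoint (ItemRegion w1 d1 h1 x1 y1 z1) (ItemRegion w2 d2 h2 x2 y2 z2) := by
  rw [Set.disjoint_left]
  intro p hp1 hp2
  rw [mem_itemRegion] at hp1 hp2
  linarith [hp1.2.2.2, hp2.2.2.1]

lemma overlaps_of_not_disjoint {w1 d1 h1 x1 y1 z1 w2 d2 h2 x2 y2 z2 : ℝ}
    (hnd : ¬ Disjoint (ItemRegion w1 d1 h1 x1 y1 z1) (ItemRegion w2 d2 h2 x2 y2 z2)) :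
    x1 < x2 + w2 ∧ x2 < x1 + w1 ∧ y1 < y2 + d2 ∧ y2 < y1 + d1 ∧
      z1 < z2 + h2 ∧ z2 < z1 + h1 := by
  obtain ⟨p, hp1, hp2⟩ := Set.not_disjoint_iff.mp hnd
  rw [mem_itemRegion] at hp1 hp2
  refine ⟨?_, ?_, ?_, ?_, ?_, ?_⟩ <;>
    [linarith [hp1.1.1, hp2.1.2]; linarith [hp2.1.1, hp1.1.2];
     linarith [hp1.2.1.1, hp2.2.1.2]; linarith [hp2.2.1.1, hp1.2.1.2];
     linarith [hp1.2.2.1, hp2.2.2.2]; linarith [hp2.2.2.1, hp1.2.2.2]]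

lemma exists_sep {w1 d1 h1 x1 y1 z1 w2 d2 h2 x2 y2 z2 : ℝ}
    (hw1 : 0 < w1) (hd1 : 0 < d1) (hh1 : 0 < h1)
    (hw2 : 0 < w2) (hd2 : 0 < d2) (hh2 : 0 < h2)
    (hdisj : Disjoint (ItemRegion w1 d1 h1 x1 y1 z1) (ItemRegion w2 d2 h2 x2 y2 z2)) :
    x1 + w1 ≤ x2 ∨ x2 + w2 ≤ x1 ∨ y1 + d1 ≤ y2 ∨ y2 + d2 ≤ y1 ∨
      z1 + h1 ≤ z2 ∨ z2 + h2 ≤ z1 := by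
  by_contra hcon
  push_neg at hcon
  obtain ⟨h1', h2', h3', h4', h5', h6'⟩ := hcon
  have hx : max x1 x2 < min (x1 + w1) (x2 + w2) :=
    max_lt (lt_min (by linarith) (by linarith)) (lt_min (by linarith) (by linarith))
  have hy : max y1 y2 < min (y1 + d1) (y2 + d2) :=
    max_lt (lt_min (by linarith) (by linarith)) (lt_min (by linarith) (by linarith))
  have hz : max z1 z2 < min (z1 + h1) (z2 + h2) :=
    max_lt (lt_min (by linarith) (by linarith)) (lt_min (by linarith) (by linarith))
  set px := (max x1 x2 + min (x1 + w1) (x2 + w2)) / 2 with hpx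
  set py := (max y1 y2 + min (y1 + d1) (y2 + d2)) / 2 with hpy
  set pz := (max z1 z2 + min (z1 + h1) (z2 + h2)) / 2 with hpz
  have hpx1 : max x1 x2 < px := by rw [hpx]; linarith
  have hpx2 : px < min (x1 + w1) (x2 + w2) := by rw [hpx]; linarith
  have hpy1 : max y1 y2 < py := by rw [hpy]; linarith
  have hpy2 : py < min (y1 + d1) (y2 + d2) := by rw [hpy]; linarith
  have hpz1 : max z1 z2 < pz := by rw [hpz]; linarith
  have hpz2 : pz < min (z1 + h1) (z2 + h2) := by rw [hpz]; linarith
  have hm1 : (px, py, pz) ∈ ItemRegion w1 d1 h1 x1 y1 z1 := by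
    rw [mem_itemRegion]
    refine ⟨⟨?_, ?_⟩, ⟨?_, ?_⟩, ⟨?_, ?_⟩⟩ <;> simp only []
    · exact lt_of_le_of_lt (le_max_left _ _) hpx1
    · exact lt_of_lt_of_le hpx2 (min_le_left _ _)
    · exact lt_of_le_of_lt (le_max_left _ _) hpy1
    · exact lt_of_lt_of_le hpy2 (min_le_left _ _)
    · exact lt_of_le_of_lt (le_max_left _ _) hpz1
    · exact lt_of_lt_of_le hpz2 (min_le_left _ _)
  have hm2 : (px, py, pz) ∈ ItemRegion w2 d2 h2 x2 y2 z2 := by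
    rw [mem_itemRegion]
    refine ⟨⟨?_, ?_⟩, ⟨?_, ?_⟩, ⟨?_, ?_⟩⟩ <;> simp only []
    · exact lt_of_le_of_lt (le_max_right _ _) hpx1
    · exact lt_of_lt_of_le hpx2 (min_le_right _ _)
    · exact lt_of_le_of_lt (le_max_right _ _) hpy1
    · exact lt_of_lt_of_le hpy2 (min_le_right _ _)
    · exact lt_of_le_of_lt (le_max_right _ _) hpz1
    · exact lt_of_lt_of_le hpz2 (min_le_right _ _)
  exact Set.disjoint_left.mp hdisj hm1 hm2

lemma vol_itemRegion {w d h x y z : ℝ} (hw : 0 ≤ w) (hd : 0 ≤ d) :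
    volume (ItemRegion w d h x y z) = ENNReal.ofReal (w * d * h) := by
  rw [ItemRegion,
    show (volume : Measure (ℝ × ℝ × ℝ)) = (volume : Measure ℝ).prod volume from rfl,
    Measure.prod_prod,
    show (volume : Measure (ℝ × ℝ)) = (volume : Measure ℝ).prod volume from rfl,
    Measure.prod_prod, Real.volume_Ioo, Real.volume_Ioo, Real.volume_Ioo,
    add_sub_cancel_left, add_sub_cancel_left, add_sub_cancel_left,
    ← ENNReal.ofReal_mul hd, ← ENNReal.ofReal_mul hw, mul_assoc]

lemma measurable_itemRegion {w d h x y z : ℝ} : MeasurableSet (ItemRegion w d h x y z) :=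
  measurableSet_Ioo.prod (measurableSet_Ioo.prod measurableSet_Ioo)

/-- disjointly packed items inside a region `A` have total volume at most `volume A`. -/
lemma sum_vol_le {ι : Type*} (T : Finset ι) (w d h x y z : ι → ℝ) (A : Set (ℝ × ℝ × ℝ))
    (hpos : ∀ i ∈ T, 0 ≤ w i ∧ 0 ≤ d i)
    (hsub : ∀ i ∈ T, ItemRegion (w i) (d i) (h i) (x i) (y i) (z i) ⊆ A)
    (hdisj : ∀ i ∈ T, ∀ j ∈ T, i ≠ j →
      Disjoint (ItemRegion (w i) (d i) (h i) (x i) (y i) (z i))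
               (ItemRegion (w j) (d j) (h j) (x j) (y j) (z j))) :
    ∑ i ∈ T, ENNReal.ofReal (w i * d i * h i) ≤ volume A := by
  have heq : ∀ i ∈ T, ENNReal.ofReal (w i * d i * h i)
      = volume (ItemRegion (w i) (d i) (h i) (x i) (y i) (z i)) := by
    intro i hi
    rw [vol_itemRegion (hpos i hi).1 (hpos i hi).2]
  rw [Finset.sum_congr rfl heq]
  have hpd : (T : Set ι).PairwiseDisjoint
      (fun i => ItemRegion (w i) (d i) (h i) (x i) (y i) (z i)) := by
    intro i hi j hj hne
    exact hdisj i hi j hj hne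
  rw [← measure_biUnion_finset hpd (fun i _ => measurable_itemRegion)]
  exact measure_mono (Set.iUnion₂_subset hsub)

end AuxGeom

open scoped Classical

section NewZ

variable {ι : Type*}

/-- the set of "blocking" items below `ℓ` that overlap it in the x-y projection. -/
noncomputable def blockers (L : Finset ι) (w d : ι → ℝ) (h x y z : ι → ℝ) (ℓ : ι) : Finset ι :=
  L.filter (fun j => z j + h j ≤ z ℓ ∧ z j < z ℓ ∧
    x j < x ℓ + w ℓ ∧ x ℓ < x j + w j ∧ y j < y ℓ + d ℓ ∧ y ℓ < y j + d j)

lemma blockers_card_lt (L : Finset ι) (w d h x y z : ι → ℝ) {j ℓ : ι}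
    (hj : j ∈ blockers L w d h x y z ℓ) :
    (L.filter (fun k => z k < z j)).card < (L.filter (fun k => z k < z ℓ)).card := by
  rw [blockers, Finset.mem_filter] at hj
  apply Finset.card_lt_card
  constructor
  · intro k hk
    simp only [Finset.mem_filter] at hk ⊢
    exact ⟨hk.1, hk.2.trans hj.2.2.1⟩
  · intro hsub
    have h1 : j ∈ L.filter (fun k => z k < z j) := by
      apply hsub
      simp only [Finset.mem_filter]
      exact ⟨hj.1, hj.2.2.1⟩
    simp only [Finset.mem_filter] at h1
    exact lt_irrefl _ h1.2

noncomputable def newz (L : Finset ι) (w d h x y z : ι → ℝ) (μ : ℝ) (ℓ : ι) : ℝ :=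
  if hB : (blockers L w d h x y z ℓ).Nonempty then
    ((blockers L w d h x y z ℓ).attach.sup' (by simpa using hB)
        (fun j => newz L w d h x y z μ j.1 + h j.1)) +
      μ^4 * ⌊(z ℓ - ((blockers L w d h x y z ℓ).attach.sup' (by simpa using hB)
        (fun j => newz L w d h x y z μ j.1 + h j.1)))/μ^4⌋₊
  else μ^4 * ⌊(z ℓ)/μ^4⌋₊
termination_by (L.filter (fun k => z k < z ℓ)).card
decreasing_by
  all_goals exact blockers_card_lt L w d h x y z j.2

/-- The recursion, packaged. -/
lemma newz_spec (L : Finset ι) (w d h x y z : ι → ℝ) (μ : ℝ) (ℓ : ι) :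
    ∃ c : ℝ, newz L w d h x y z μ ℓ = c + μ^4 * ⌊(z ℓ - c)/μ^4⌋₊ ∧
      (c = 0 ∨ ∃ j ∈ blockers L w d h x y z ℓ, c = newz L w d h x y z μ j + h j) ∧
      (∀ k ∈ blockers L w d h x y z ℓ, newz L w d h x y z μ k + h k ≤ c) := by
  rw [newz]
  split_ifs with hB
  · refine ⟨_, rfl, ?_, ?_⟩
    · right
      obtain ⟨b, _, hbeq⟩ := Finset.exists_mem_eq_sup'
        (by simpa using hB : (blockers L w d h x y z ℓ).attach.Nonempty)
        (fun j => newz L w d h x y z μ j.1 + h j.1)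
      exact ⟨b.1, b.2, hbeq⟩
    · intro k hk
      exact Finset.le_sup' (f := fun j => newz L w d h x y z μ j.1 + h j.1)
        (Finset.mem_attach _ ⟨k, hk⟩)
  · refine ⟨0, by simp, Or.inl rfl, ?_⟩
    intro k hk
    exact absurd ⟨k, hk⟩ hB

lemma floor_mul_facts {a t : ℝ} (ha : 0 < a) (ht : 0 ≤ t) :
    a * ⌊t/a⌋₊ ≤ t ∧ t < a * ⌊t/a⌋₊ + a := by
  constructor
  · have h1 := Nat.floor_le (div_nonneg ht ha.le)
    have h2 : a * ⌊t/a⌋₊ ≤ a * (t/a) := by nlinarith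
    calc a * ⌊t/a⌋₊ ≤ a * (t/a) := h2
    _ = t := by field_simp
  · have h1 := Nat.lt_floor_add_one (t/a)
    have h2 : t/a * a < ((⌊t/a⌋₊ : ℝ) + 1) * a := by nlinarith
    rw [div_mul_cancel₀ _ ha.ne'] at h2
    nlinarith

/-- The main inductive properties of `newz`. -/
lemma newz_main (L : Finset ι) (w d h x y z : ι → ℝ) (μ : ℝ) (hμ : 0 < μ)
    (hh : ∀ j ∈ L, 0 < h j) (hz0 : ∀ j ∈ L, 0 ≤ z j) :
    ∀ n : ℕ, ∀ ℓ ∈ L, (L.filter (fun k => z k < z ℓ)).card ≤ n →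
      0 ≤ newz L w d h x y z μ ℓ ∧ newz L w d h x y z μ ℓ ≤ z ℓ ∧
      z ℓ < newz L w d h x y z μ ℓ + μ^4 ∧
      ∃ (a : ℕ) (F : Finset ι), F ⊆ L ∧ (∀ f ∈ F, z f + h f ≤ z ℓ) ∧
        newz L w d h x y z μ ℓ = a * μ^4 + ∑ j ∈ F, h j ∧
        ∑ j ∈ F, h j ≤ newz L w d h x y z μ ℓ := by
  intro n
  induction n with
  | zero =>
    intro ℓ hℓ hcard
    obtain ⟨c, heq, hc, _⟩ := newz_spec L w d h x y z μ ℓ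
    have hcz : c = 0 := by
      rcases hc with h0 | ⟨j, hj, _⟩
      · exact h0
      · exfalso
        have := blockers_card_lt L w d h x y z hj
        omega
    subst hcz
    have hμ4 : (0:ℝ) < μ^4 := by positivity
    have ht : (0:ℝ) ≤ z ℓ - 0 := by simpa using hz0 ℓ hℓ
    obtain ⟨hf1, hf2⟩ := floor_mul_facts hμ4 ht
    have hnn : (0:ℝ) ≤ μ^4 * ⌊(z ℓ - 0)/μ^4⌋₊ := by positivity
    refine ⟨by rw [heq]; linarith, by rw [heq]; linarith, by rw [heq]; linarith,
      ⌊(z ℓ - 0)/μ^4⌋₊, ∅, Finset.empty_subset _, by simp, ?_, ?_⟩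
    · rw [heq]; push_cast; ring
    · rw [heq]; simp; positivity
  | succ n ih =>
    intro ℓ hℓ hcard
    obtain ⟨c, heq, hc, hub⟩ := newz_spec L w d h x y z μ ℓ
    have hμ4 : (0:ℝ) < μ^4 := by positivity
    -- bounds on c and the representation of c
    have hkey : 0 ≤ c ∧ c ≤ z ℓ ∧
        ∃ (a : ℕ) (F : Finset ι), F ⊆ L ∧ (∀ f ∈ F, z f + h f ≤ z ℓ) ∧
          c = a * μ^4 + ∑ j ∈ F, h j := by
      rcases hc with h0 | ⟨j, hj, hcj⟩
      · exact ⟨le_of_eq h0.symm, h0 ▸ hz0 ℓ hℓ, 0, ∅, Finset.empty_subset _, by simp,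
          by simp [h0]⟩
      · have hjmem := hj
        rw [blockers, Finset.mem_filter] at hjmem
        obtain ⟨hjL, hjz, hjlt, _⟩ := hjmem
        have hcardj : (L.filter (fun k => z k < z j)).card ≤ n := by
          have := blockers_card_lt L w d h x y z hj
          omega
        obtain ⟨hj0, hjle, _, aj, Fj, hFjL, hFjz, hjrep, _⟩ := ih j hjL hcardj
        have hjF : j ∉ Fj := by
          intro hmem
          have := hFjz j hmem
          have := hh j hjL
          linarith
        refine ⟨by rw [hcj]; have := hh j hjL; linarith,
          by rw [hcj]; linarith, aj, insert j Fj, ?_, ?_, ?_⟩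
        · intro f hf
          rcases Finset.mem_insert.mp hf with rfl | hf'
          · exact hjL
          · exact hFjL hf'
        · intro f hf
          rcases Finset.mem_insert.mp hf with rfl | hf'
          · exact hjz
          · have := hFjz f hf'
            have := hh j hjL
            linarith
        · rw [Finset.sum_insert hjF, hcj, hjrep]; ring
    obtain ⟨hc0, hcz, a0, F0, hF0L, hF0z, hcrep⟩ := hkey
    have ht : (0:ℝ) ≤ z ℓ - c := by linarith
    obtain ⟨hf1, hf2⟩ := floor_mul_facts hμ4 ht
    have hnn : (0:ℝ) ≤ μ^4 * ⌊(z ℓ - c)/μ^4⌋₊ := by positivity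
    refine ⟨by rw [heq]; linarith, by rw [heq]; linarith, by rw [heq]; linarith,
      a0 + ⌊(z ℓ - c)/μ^4⌋₊, F0, hF0L, hF0z, ?_, ?_⟩
    · rw [heq, hcrep]; push_cast; ring
    · have ha0 : (0:ℝ) ≤ a0 * μ^4 := by positivity
      rw [heq]; linarith [hcrep ▸ (le_refl c)]
  
/-- monotonicity: a blocker's top lies below `newz ℓ`. -/
lemma newz_mono (L : Finset ι) (w d h x y z : ι → ℝ) (μ : ℝ) {j ℓ : ι}
    (hj : j ∈ blockers L w d h x y z ℓ) (hμ : 0 < μ) :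
    newz L w d h x y z μ j + h j ≤ newz L w d h x y z μ ℓ := by
  obtain ⟨c, heq, _, hub⟩ := newz_spec L w d h x y z μ ℓ
  have h1 := hub j hj
  have hnn : (0:ℝ) ≤ μ^4 * ⌊(z ℓ - c)/μ^4⌋₊ := by positivity
  rw [heq]; linarith

end NewZ
/-- Discretizing the `z`-positions of large items: if
`L ∪ S` packs into the unit cube, where every item of `L` has all dimensions
exceeding `μ` and every item of `S` has height at most `μ⁴`, then there is a
subset `S' ⊆ S` with `v(S ∖ S') ≤ 2μ` and a packing of `L ∪ S'` into the unit
cube in which every `ℓ ∈ L` sits at a `z`-coordinate of the form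
`a·μ⁴ + Σ_{j ∈ F} h j` for some `a : ℕ` and `F ⊆ L ∖ {ℓ}` with
`|F| ≤ ⌊1/μ⌋`. -/
theorem stmt4 {ι : Type*} [DecidableEq ι] (L S : Finset ι) (w d h : ι → ℝ)
    (μ : ℝ) (hμpos : 0 < μ) (hμle : μ ≤ 1 / 2)
    (hdims : ∀ i ∈ L ∪ S, 0 < w i ∧ w i ≤ 1 ∧ 0 < d i ∧ d i ≤ 1 ∧
      0 < h i ∧ h i ≤ 1)
    (hL : ∀ i ∈ L, μ < w i ∧ μ < d i ∧ μ < h i)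
    (hS : ∀ i ∈ S, h i ≤ μ ^ 4)
    (hpack : CanPack (L ∪ S) w d h 1 1 1) :
    ∃ S' ⊆ S, (∑ i ∈ S \ S', w i * d i * h i) ≤ 2 * μ ∧
      ∃ x y z : ι → ℝ, IsPacking (L ∪ S') w d h 1 1 1 x y z ∧
        ∀ l ∈ L, ∃ a : ℕ, ∃ F ⊆ L.erase l, F.card ≤ ⌊1 / μ⌋₊ ∧
          z l = a * μ ^ 4 + ∑ j ∈ F, h j := by
  classical
  obtain ⟨x, y, z, hbnd, hdisj⟩ := hpack
  have hμ4pos : (0:ℝ) < μ^4 := by positivity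
  have hμ4lt : μ^4 < μ := by nlinarith [pow_le_pow_left₀ hμpos.le hμle 3, pow_pos hμpos 3]
  have hhL : ∀ j ∈ L, 0 < h j := fun j hj =>
    (hdims j (Finset.mem_union_left _ hj)).2.2.2.2.1
  have hz0L : ∀ j ∈ L, 0 ≤ z j := fun j hj =>
    (hbnd j (Finset.mem_union_left _ hj)).2.2.2.2.1
  set N := newz L w d h x y z μ with hNdef
  have hmain : ∀ ℓ ∈ L, 0 ≤ N ℓ ∧ N ℓ ≤ z ℓ ∧ z ℓ < N ℓ + μ^4 ∧
      ∃ (a : ℕ) (F : Finset ι), F ⊆ L ∧ (∀ f ∈ F, z f + h f ≤ z ℓ) ∧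
        N ℓ = a * μ^4 + ∑ j ∈ F, h j ∧ ∑ j ∈ F, h j ≤ N ℓ := by
    intro ℓ hℓ
    have := newz_main L w d h x y z μ hμpos hhL hz0L
      ((L.filter (fun k => z k < z ℓ)).card) ℓ hℓ le_rfl
    rw [← hNdef] at this
    exact this
  have hLS : ∀ i ∈ L, i ∉ S := by
    intro i hi hiS
    have h1 := (hL i hi).2.2
    have h2 := hS i hiS
    linarith
  -- the kept small items: those not hit by any re-placed large item
  set S' := S.filter (fun i => ∀ ℓ ∈ L,
    Disjoint (ItemRegion (w i) (d i) (h i) (x i) (y i) (z i))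
             (ItemRegion (w ℓ) (d ℓ) (h ℓ) (x ℓ) (y ℓ) (N ℓ))) with hS'def
  have hS'sub : S' ⊆ S := Finset.filter_subset _ _
  refine ⟨S', hS'sub, ?_, ?_⟩
  · -- volume bound
    have hremoved : ∀ i ∈ S \ S', ∃ ℓ ∈ L,
        ¬ Disjoint (ItemRegion (w i) (d i) (h i) (x i) (y i) (z i))
                   (ItemRegion (w ℓ) (d ℓ) (h ℓ) (x ℓ) (y ℓ) (N ℓ)) := by
      intro i hi
      rw [Finset.mem_sdiff] at hi
      obtain ⟨hiS, hinot⟩ := hi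
      rw [hS'def, Finset.mem_filter] at hinot
      push_neg at hinot
      exact hinot hiS
    set g : ι → ι := fun i => if hi2 : ∃ ℓ ∈ L,
        ¬ Disjoint (ItemRegion (w i) (d i) (h i) (x i) (y i) (z i))
                   (ItemRegion (w ℓ) (d ℓ) (h ℓ) (x ℓ) (y ℓ) (N ℓ))
      then hi2.choose else i with hgdef
    have hg : ∀ i ∈ S \ S', g i ∈ L ∧
        ¬ Disjoint (ItemRegion (w i) (d i) (h i) (x i) (y i) (z i))
                   (ItemRegion (w (g i)) (d (g i)) (h (g i)) (x (g i)) (y (g i)) (N (g i))) := by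
      intro i hi
      have hex := hremoved i hi
      rw [hgdef]
      simp only [dif_pos hex]
      exact ⟨hex.choose_spec.1, hex.choose_spec.2⟩
    rw [← Finset.sum_fiberwise_of_maps_to (fun i hi => (hg i hi).1)
      (fun i => w i * d i * h i)]
    -- per-fiber bound
    have hfiber : ∀ ℓ ∈ L,
        (∑ i ∈ (S \ S').filter (fun i => g i = ℓ), w i * d i * h i) ≤ 2 * μ^4 := by
      intro ℓ hℓ
      set T := (S \ S').filter (fun i => g i = ℓ) with hTdef
      have hTS : ∀ i ∈ T, i ∈ S := by
        intro i hi
        rw [hTdef, Finset.mem_filter, Finset.mem_sdiff] at hi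
        exact hi.1.1
      have hsum := sum_vol_le T w d h x y z
        (Set.Ioc 0 1 ×ˢ (Set.Ioc 0 1 ×ˢ Set.Ioo (N ℓ - μ^4) (N ℓ + μ^4)))
        (fun i hi => ⟨(hdims i (Finset.mem_union_right _ (hTS i hi))).1.le,
          (hdims i (Finset.mem_union_right _ (hTS i hi))).2.2.1.le⟩)
        ?_ ?_
      · have hvolA : MeasureTheory.volume
            (Set.Ioc (0:ℝ) 1 ×ˢ (Set.Ioc (0:ℝ) 1 ×ˢ Set.Ioo (N ℓ - μ^4) (N ℓ + μ^4)))
            = ENNReal.ofReal (2 * μ^4) := by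
          rw [show (MeasureTheory.volume : MeasureTheory.Measure (ℝ × ℝ × ℝ))
              = (MeasureTheory.volume : MeasureTheory.Measure ℝ).prod MeasureTheory.volume
              from rfl,
            MeasureTheory.Measure.prod_prod,
            show (MeasureTheory.volume : MeasureTheory.Measure (ℝ × ℝ))
              = (MeasureTheory.volume : MeasureTheory.Measure ℝ).prod MeasureTheory.volume
              from rfl,
            MeasureTheory.Measure.prod_prod, Real.volume_Ioc, Real.volume_Ioo]
          norm_num
          congr 1
          ring_nf
          rw [ENNReal.ofReal_mul' (by norm_num), ENNReal.ofReal_ofNat]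
        rw [hvolA, ← ENNReal.ofReal_sum_of_nonneg] at hsum
        · exact (ENNReal.ofReal_le_ofReal_iff (by positivity)).mp hsum
        · intro i hi
          have hd' := hdims i (Finset.mem_union_right _ (hTS i hi))
          exact (mul_pos (mul_pos hd'.1 hd'.2.2.1) hd'.2.2.2.2.1).le
      · -- every item of the fiber lies in the slab
        intro i hi
        have hiS := hTS i hi
        rw [hTdef, Finset.mem_filter] at hi
        obtain ⟨hiR, higi⟩ := hi
        have hnd := (hg i hiR).2
        rw [higi] at hnd
        have hov := overlaps_of_not_disjoint hnd
        have hine : i ≠ ℓ := by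
          intro hEq
          exact hLS ℓ hℓ (hEq ▸ hiS)
        have hdi := hdims i (Finset.mem_union_right _ hiS)
        have hdl := hdims ℓ (Finset.mem_union_left _ hℓ)
        have hsep := exists_sep hdi.1 hdi.2.2.1 hdi.2.2.2.2.1
          hdl.1 hdl.2.2.1 hdl.2.2.2.2.1
          (hdisj i (Finset.mem_union_right _ hiS) ℓ (Finset.mem_union_left _ hℓ) hine)
        have hml := hmain ℓ hℓ
        have hzsep : z i + h i ≤ z ℓ := by
          rcases hsep with hs | hs | hs | hs | hs | hs
          · exfalso; linarith [hov.2.1]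
          · exfalso; linarith [hov.1]
          · exfalso; linarith [hov.2.2.2.1]
          · exfalso; linarith [hov.2.2.1]
          · exact hs
          · exfalso; linarith [hov.2.2.2.2.1, hml.2.1]
        have hbi := hbnd i (Finset.mem_union_right _ hiS)
        have hhiS := hS i hiS
        intro p hp
        rw [mem_itemRegion] at hp
        refine ⟨⟨?_, ?_⟩, ⟨?_, ?_⟩, ⟨?_, ?_⟩⟩
        · linarith [hp.1.1, hbi.1]
        · linarith [hp.1.2, hbi.2.1]
        · linarith [hp.2.1.1, hbi.2.2.1]
        · linarith [hp.2.1.2, hbi.2.2.2.1]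
        · -- N ℓ - μ^4 < p.2.2
          linarith [hp.2.2.1, hov.2.2.2.2.2]
        · -- p.2.2 < N ℓ + μ^4
          linarith [hp.2.2.2, hml.2.2.1]
      · intro i hi j hj hne
        exact hdisj i (Finset.mem_union_right _ (hTS i hi))
          j (Finset.mem_union_right _ (hTS j hj)) hne
    -- total bound
    have hLcard : (L.card : ℝ) * μ^3 ≤ 1 := by
      have hsumL := sum_vol_le L w d h x y z
        (Set.Ioc 0 1 ×ˢ (Set.Ioc 0 1 ×ˢ Set.Ioc 0 1))
        (fun i hi => ⟨(hdims i (Finset.mem_union_left _ hi)).1.le,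
          (hdims i (Finset.mem_union_left _ hi)).2.2.1.le⟩)
        ?_ ?_
      · have hvolC : MeasureTheory.volume
            (Set.Ioc (0:ℝ) 1 ×ˢ (Set.Ioc (0:ℝ) 1 ×ˢ Set.Ioc (0:ℝ) 1))
            = ENNReal.ofReal 1 := by
          rw [show (MeasureTheory.volume : MeasureTheory.Measure (ℝ × ℝ × ℝ))
              = (MeasureTheory.volume : MeasureTheory.Measure ℝ).prod MeasureTheory.volume
              from rfl,
            MeasureTheory.Measure.prod_prod,
            show (MeasureTheory.volume : MeasureTheory.Measure (ℝ × ℝ))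
              = (MeasureTheory.volume : MeasureTheory.Measure ℝ).prod MeasureTheory.volume
              from rfl,
            MeasureTheory.Measure.prod_prod, Real.volume_Ioc]
          norm_num
        rw [hvolC, ← ENNReal.ofReal_sum_of_nonneg] at hsumL
        · have h1 : (∑ i ∈ L, w i * d i * h i) ≤ 1 :=
            (ENNReal.ofReal_le_ofReal_iff (by norm_num)).mp hsumL
          have h2 : ∀ i ∈ L, μ^3 ≤ w i * d i * h i := by
            intro i hi
            obtain ⟨ha, hb, hc⟩ := hL i hi
            have hww : μ * μ ≤ w i * d i := by nlinarith
            nlinarith [hww]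
          have h3 := Finset.card_nsmul_le_sum L (fun i => w i * d i * h i) (μ^3) h2
          rw [nsmul_eq_mul] at h3
          linarith
        · intro i hi
          have hd' := hdims i (Finset.mem_union_left _ hi)
          exact (mul_pos (mul_pos hd'.1 hd'.2.2.1) hd'.2.2.2.2.1).le
      · intro i hi
        have hbi := hbnd i (Finset.mem_union_left _ hi)
        intro p hp
        rw [mem_itemRegion] at hp
        exact ⟨⟨by linarith [hp.1.1, hbi.1], by linarith [hp.1.2, hbi.2.1]⟩,
          ⟨by linarith [hp.2.1.1, hbi.2.2.1], by linarith [hp.2.1.2, hbi.2.2.2.1]⟩,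
          ⟨by linarith [hp.2.2.1, hbi.2.2.2.2.1], by linarith [hp.2.2.2, hbi.2.2.2.2.2]⟩⟩
      · intro i hi j hj hne
        exact hdisj i (Finset.mem_union_left _ hi) j (Finset.mem_union_left _ hj) hne
    calc (∑ ℓ ∈ L, ∑ i ∈ (S \ S').filter (fun i => g i = ℓ), w i * d i * h i)
        ≤ ∑ ℓ ∈ L, 2 * μ^4 := Finset.sum_le_sum hfiber
      _ = (L.card : ℝ) * (2 * μ^4) := by rw [Finset.sum_const, nsmul_eq_mul]
      _ ≤ 2 * μ := by nlinarith [Nat.cast_nonneg (α := ℝ) L.card]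
  · -- the new packing
    set Z : ι → ℝ := fun i => if i ∈ L then N i else z i with hZdef
    have hZL : ∀ i ∈ L, Z i = N i := by
      intro i hi; rw [hZdef]; simp only [if_pos hi]
    have hZS : ∀ i, i ∉ L → Z i = z i := by
      intro i hi; rw [hZdef]; simp only [if_neg hi]
    refine ⟨x, y, Z, ⟨?_, ?_⟩, ?_⟩
    · -- bounds
      intro i hi
      rcases Finset.mem_union.mp hi with hiL | hiS'
      · have hbi := hbnd i (Finset.mem_union_left _ hiL)
        have hmi := hmain i hiL
        rw [hZL i hiL]
        exact ⟨hbi.1, hbi.2.1, hbi.2.2.1, hbi.2.2.2.1, hmi.1,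
          by linarith [hmi.2.1, hbi.2.2.2.2.2]⟩
      · have hiS := hS'sub hiS'
        have hiL : i ∉ L := fun hc => hLS i hc hiS
        rw [hZS i hiL]
        exact hbnd i (Finset.mem_union_right _ hiS)
    · -- disjointness
      intro i hi j hj hne
      by_cases hiL : i ∈ L <;> by_cases hjL : j ∈ L
      · -- both large
        rw [hZL i hiL, hZL j hjL]
        by_contra hnd
        have hov := overlaps_of_not_disjoint hnd
        have hdi := hdims i (Finset.mem_union_left _ hiL)
        have hdj := hdims j (Finset.mem_union_left _ hjL)
        have hsep := exists_sep hdi.1 hdi.2.2.1 hdi.2.2.2.2.1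
          hdj.1 hdj.2.2.1 hdj.2.2.2.2.1
          (hdisj i (Finset.mem_union_left _ hiL) j (Finset.mem_union_left _ hjL) hne)
        rcases hsep with hs | hs | hs | hs | hs | hs
        · linarith [hov.2.1]
        · linarith [hov.1]
        · linarith [hov.2.2.2.1]
        · linarith [hov.2.2.1]
        · -- z i + h i ≤ z j : i blocks j
          have hblock : i ∈ blockers L w d h x y z j := by
            rw [blockers, Finset.mem_filter]
            exact ⟨hiL, hs, by linarith [hhL i hiL], hov.1, hov.2.1,
              hov.2.2.1, hov.2.2.2.1⟩
          have := newz_mono L w d h x y z μ hblock hμpos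
          rw [← hNdef] at this
          linarith [hov.2.2.2.2.2]
        · -- z j + h j ≤ z i : j blocks i
          have hblock : j ∈ blockers L w d h x y z i := by
            rw [blockers, Finset.mem_filter]
            exact ⟨hjL, hs, by linarith [hhL j hjL], hov.2.1, hov.1,
              hov.2.2.2.1, hov.2.2.1⟩
          have := newz_mono L w d h x y z μ hblock hμpos
          rw [← hNdef] at this
          linarith [hov.2.2.2.2.1]
      · -- i large, j small kept
        have hjS' : j ∈ S' := (Finset.mem_union.mp hj).resolve_left hjL
        rw [hS'def, Finset.mem_filter] at hjS'
        rw [hZL i hiL, hZS j hjL]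
        exact (hjS'.2 i hiL).symm
      · -- i small kept, j large
        have hiS' : i ∈ S' := (Finset.mem_union.mp hi).resolve_left hiL
        rw [hS'def, Finset.mem_filter] at hiS'
        rw [hZS i hiL, hZL j hjL]
        exact hiS'.2 j hjL
      · -- both small
        have hiS' : i ∈ S' := (Finset.mem_union.mp hi).resolve_left hiL
        have hjS' : j ∈ S' := (Finset.mem_union.mp hj).resolve_left hjL
        rw [hZS i hiL, hZS j hjL]
        exact hdisj i (Finset.mem_union_right _ (hS'sub hiS'))
          j (Finset.mem_union_right _ (hS'sub hjS')) hne
    · -- the discrete z-coordinates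
      intro l hl
      obtain ⟨hN0, hNle, _, a, F, hFL, hFz, heqN, hsle⟩ := hmain l hl
      refine ⟨a, F, ?_, ?_, ?_⟩
      · intro f hf
        refine Finset.mem_erase.mpr ⟨?_, hFL hf⟩
        intro hEq
        have h1 := hFz f hf
        have h2 := hhL l hl
        rw [hEq] at h1
        linarith
      · have h1 : ∀ f ∈ F, μ ≤ h f := fun f hf => (hL f (hFL hf)).2.2.le
        have h2 := Finset.card_nsmul_le_sum F h μ h1
        rw [nsmul_eq_mul] at h2
        have hbl := hbnd l (Finset.mem_union_left _ hl)
        have hhl := hhL l hl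
        have h3 : (F.card : ℝ) * μ ≤ 1 := by linarith
        refine Nat.le_floor ?_
        rw [le_div_iff₀ hμpos]
        exact h3
      · rw [hZL l hl]
        exact heqN
end

section
/- Let k ≥ 2 be an integer and let α_1, …, α_n ∈ (0,1] satisfy Σ_{i=1}^n α_i ≤ 1. Then Σ_{i=1}^n f_k(α_i) ≤ T_k. -/
/-- The harmonic rounding function of Lee and Lee: `fk k α = 1/q` if
`α ∈ (1/(q+1), 1/q]` for some `q ∈ {1, …, k−1}` (equivalently `q = ⌊1/α⌋`
when `1/k < α ≤ 1`), and `fk k α = α` for `α ≤ 1/k`. -/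
noncomputable def fk (k : ℕ) (α : ℝ) : ℝ :=
  if α ≤ 1 / k then α else 1 / (⌊1 / α⌋₊ : ℝ)

open Classical in
/-- Greedy choice: smallest `q ≥ s` (and `≥ 1`) whose cost `1/(q+1)` fits strictly in budget `B`. -/
noncomputable def qhat (s : ℕ) (B : ℝ) : ℕ := max s (max 1 ⌊1/B⌋₊)

open Classical in
/-- Greedy (Sylvester-type) value function with fuel `n`. -/
noncomputable def Wf (k : ℕ) : ℕ → ℕ → ℝ → ℝ
  | 0, _, _ => 0
  | n+1, s, B =>
    if qhat s B + 1 ≤ k ∧ (1:ℝ)/((qhat s B : ℝ) + 1) < B then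
      1/((qhat s B : ℝ) * ((qhat s B : ℝ) + 1)) +
        Wf k n (qhat s B) (B - 1/((qhat s B : ℝ) + 1))
    else 0

lemma Wf_nonneg (k : ℕ) : ∀ n s B, 0 ≤ Wf k n s B := by
  intro n
  induction n with
  | zero => intro s B; simp [Wf]
  | succ n ih =>
    intro s B
    simp only [Wf]
    split
    · have h1 : (0:ℝ) ≤ 1/((qhat s B : ℝ) * ((qhat s B : ℝ) + 1)) := by positivity
      exact add_nonneg h1 (ih _ _)
    · exact le_refl _

lemma Wf_main (k : ℕ) :
    ∀ n : ℕ, ∀ L : List ℕ, L.Pairwise (·≤·) → ∀ s : ℕ, ∀ B : ℝ,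
      1 ≤ s → (∀ q ∈ L, s ≤ q ∧ q + 1 ≤ k) → L.length ≤ n → 0 < B → B ≤ 1/(s:ℝ) →
      (L.map (fun q : ℕ => 1/((q:ℝ)+1))).sum < B →
      (L.map (fun q : ℕ => 1/((q:ℝ)*((q:ℝ)+1)))).sum ≤ Wf k n s B := by
  intro n
  induction n with
  | zero =>
    intro L _ s B _ _ hlen _ _ _
    have : L = [] := List.length_eq_zero_iff.mp (Nat.le_zero.mp hlen)
    subst this
    simp [Wf]
  | succ n IH =>
    intro L hsort s B hs hmem hlen hB0 hBs hC
    rcases L with _ | ⟨q0, rest⟩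
    · simpa using Wf_nonneg k (n+1) s B
    obtain ⟨hs0, hk0⟩ := hmem q0 List.mem_cons_self
    have h1q0 : 1 ≤ q0 := hs.trans hs0
    have hq0R : (0:ℝ) < (q0:ℝ) := by exact_mod_cast h1q0
    have hrest_nonneg : (0:ℝ) ≤ (rest.map (fun q : ℕ => 1/((q:ℝ)+1))).sum := by
      apply List.sum_nonneg
      intro x hx
      obtain ⟨q, _, rfl⟩ := List.mem_map.mp hx
      positivity
    simp only [List.map_cons, List.sum_cons] at hC
    have hc0B : 1/((q0:ℝ)+1) < B := by linarith
    have hinvB : 1/B < (q0:ℝ)+1 := by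
      rw [div_lt_iff₀ hB0]
      rw [div_lt_iff₀ (by positivity : (0:ℝ) < (q0:ℝ)+1)] at hc0B
      nlinarith
    have hfloor : ⌊1/B⌋₊ ≤ q0 := by
      have h := (Nat.floor_lt (by positivity : (0:ℝ) ≤ 1/B)).mpr
        (by exact_mod_cast hinvB : 1/B < ((q0+1 : ℕ) : ℝ))
      omega
    have hQle : qhat s B ≤ q0 := max_le hs0 (max_le h1q0 hfloor)
    have hQ1 : 1 ≤ qhat s B := le_trans (le_max_left 1 _) (le_max_right s _)
    have hQR : (0:ℝ) < (qhat s B : ℝ) := by exact_mod_cast hQ1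
    have hQreal_le : ((qhat s B : ℕ) : ℝ) ≤ 1/B := by
      have hsle : (s:ℝ) ≤ 1/B := by
        rw [le_div_iff₀ hB0]
        have hsR : (0:ℝ) < (s:ℝ) := by exact_mod_cast hs
        rw [le_div_iff₀ hsR] at hBs
        linarith [hBs]
      have h1le : (1:ℝ) ≤ 1/B := le_trans (by exact_mod_cast hs) hsle
      have hfle : ((⌊1/B⌋₊ : ℕ) : ℝ) ≤ 1/B := Nat.floor_le (by positivity)
      unfold qhat
      push_cast
      exact max_le hsle (max_le h1le hfle)
    have hBQ : B ≤ 1/((qhat s B : ℕ) : ℝ) := by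
      rw [le_div_iff₀ hQR]
      calc B * (qhat s B : ℝ) ≤ B * (1/B) := by
            exact mul_le_mul_of_nonneg_left hQreal_le hB0.le
        _ = 1 := by field_simp
    have hcond : qhat s B + 1 ≤ k ∧ (1:ℝ)/((qhat s B : ℝ) + 1) < B := by
      refine ⟨by omega, ?_⟩
      have h1 : 1/B < ((qhat s B : ℕ) : ℝ) + 1 := by
        calc 1/B < (⌊1/B⌋₊ : ℝ) + 1 := Nat.lt_floor_add_one (1/B)
          _ ≤ ((qhat s B : ℕ) : ℝ) + 1 := by
              have : (⌊1/B⌋₊ : ℕ) ≤ qhat s B := le_trans (le_max_right 1 _) (le_max_right s _)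
              have := (Nat.cast_le (α := ℝ)).mpr this
              linarith
      rw [div_lt_iff₀ (by positivity : (0:ℝ) < (qhat s B : ℝ) + 1)]
      rw [div_lt_iff₀ hB0] at h1
      nlinarith
    have hWeq : Wf k (n+1) s B
        = 1/((qhat s B : ℝ) * ((qhat s B : ℝ) + 1))
          + Wf k n (qhat s B) (B - 1/((qhat s B : ℝ) + 1)) := by
      simp only [Wf]
      rw [if_pos hcond]
    rcases eq_or_lt_of_le hQle with heq | hlt
    · -- case: the minimum q0 equals the greedy choice
      rw [hWeq]
      simp only [List.map_cons, List.sum_cons]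
      have hrestmem : ∀ q ∈ rest, qhat s B ≤ q ∧ q + 1 ≤ k := by
        intro q hq
        refine ⟨heq ▸ (List.pairwise_cons.mp hsort).1 q hq, (hmem q (List.mem_cons_of_mem _ hq)).2⟩
      have hcpos : (0:ℝ) < 1/((qhat s B : ℝ) + 1) := by positivity
      have hIH := IH rest (List.pairwise_cons.mp hsort).2 (qhat s B) (B - 1/((qhat s B : ℝ) + 1))
        hQ1 hrestmem (by simpa using Nat.succ_le_succ_iff.mp hlen)
        (by linarith [hcond.2]) (by linarith [hBQ])
        (by rw [heq]; linarith)
      have hveq : 1/((q0:ℝ)*((q0:ℝ)+1)) = 1/((qhat s B : ℝ) * ((qhat s B : ℝ) + 1)) := by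
        rw [heq]
      linarith [hIH, hveq.le]
    · -- case: all items are strictly bigger than the greedy choice; crude bound suffices
      have hq1R : ((qhat s B : ℕ) : ℝ) + 1 ≤ (q0:ℝ) := by exact_mod_cast hlt
      have hbound : ((q0::rest).map (fun q : ℕ => 1/((q:ℝ)*((q:ℝ)+1)))).sum
          ≤ ((q0::rest).map (fun q : ℕ => (1/(q0:ℝ)) * (1/((q:ℝ)+1)))).sum := by
        apply List.sum_le_sum
        intro q hq
        have hq0q : q0 ≤ q := by
          rcases List.mem_cons.mp hq with rfl | hq'
          · exact le_refl _
          · exact (List.pairwise_cons.mp hsort).1 q hq'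
        have hqR : (0:ℝ) < (q:ℝ) := by
          have : 1 ≤ q := h1q0.trans hq0q
          exact_mod_cast this
        rw [← one_div_mul_one_div]
        gcongr
      have hsum2 : ((q0::rest).map (fun q : ℕ => (1/(q0:ℝ)) * (1/((q:ℝ)+1)))).sum
          = (1/(q0:ℝ)) * ((q0::rest).map (fun q : ℕ => 1/((q:ℝ)+1))).sum := by
        rw [List.sum_map_mul_left]
      have hCfull : ((q0::rest).map (fun q : ℕ => 1/((q:ℝ)+1))).sum < B := by
        simp only [List.map_cons, List.sum_cons]; linarith
      refine le_of_lt ?_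
      calc ((q0::rest).map (fun q : ℕ => 1/((q:ℝ)*((q:ℝ)+1)))).sum
          ≤ (1/(q0:ℝ)) * ((q0::rest).map (fun q : ℕ => 1/((q:ℝ)+1))).sum := by
            rw [← hsum2]; exact hbound
        _ < (1/(q0:ℝ)) * B := by
            apply mul_lt_mul_of_pos_left hCfull (by positivity)
        _ ≤ (1/(((qhat s B : ℕ):ℝ)+1)) * (1/((qhat s B : ℕ):ℝ)) := by
            apply mul_le_mul
            · apply one_div_le_one_div_of_le (by positivity) hq1R
            · exact hBQ
            · exact hB0.le
            · positivity
        _ = 1/((qhat s B : ℝ) * ((qhat s B : ℝ) + 1)) := by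
            rw [one_div_mul_one_div]; ring_nf
        _ ≤ Wf k (n+1) s B := by
            rw [hWeq]
            have := Wf_nonneg k n (qhat s B) (B - 1/((qhat s B : ℝ) + 1))
            linarith

lemma Wf_level (k : ℕ) (hk : 2 ≤ k) (t : ℕ → ℕ)
    (htrec : ∀ i, 1 ≤ i → t (i + 1) = t i * (t i + 1))
    (htpos : ∀ i, 1 ≤ i → 1 ≤ t i)
    (m : ℕ) (hmhi : k < t (m + 1)) :
    ∀ n : ℕ, ∀ j s : ℕ, 1 ≤ j → j ≤ m + 1 → s ≤ t j →
      Wf k n s (1/(t j : ℝ)) ≤ ∑ i ∈ Finset.Icc (j+1) (m+1), (1:ℝ)/(t i : ℝ) := by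
  intro n
  induction n with
  | zero =>
    intro j s _ _ _
    simp only [Wf]
    exact Finset.sum_nonneg (fun i _ => by positivity)
  | succ n IH =>
    intro j s hj1 hjm hstj
    have htj : 1 ≤ t j := htpos j hj1
    have htjR : (0:ℝ) < (t j : ℝ) := by exact_mod_cast htj
    have hqhat : qhat s (1/(t j : ℝ)) = t j := by
      unfold qhat
      rw [one_div_one_div, Nat.floor_natCast, max_eq_right htj, max_eq_right hstj]
    simp only [Wf, hqhat]
    by_cases hcnd : t j + 1 ≤ k ∧ (1:ℝ)/((t j : ℝ)+1) < 1/(t j : ℝ)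
    · rw [if_pos hcnd]
      have hjm' : j ≤ m := by
        rcases Nat.lt_or_ge j (m+1) with h | h
        · omega
        · exfalso
          have : j = m + 1 := by omega
          subst this
          omega
      have hrec : (t (j+1) : ℝ) = (t j : ℝ) * ((t j : ℝ)+1) := by
        exact_mod_cast htrec j hj1
      have htj1R : (0:ℝ) < (t (j+1) : ℝ) := by
        exact_mod_cast htpos (j+1) (by omega)
      have hsub : 1/(t j : ℝ) - 1/((t j : ℝ)+1) = 1/(t (j+1) : ℝ) := by
        rw [hrec]
        field_simp
        ring
      have hval : 1/((t j : ℝ) * ((t j : ℝ)+1)) = 1/(t (j+1) : ℝ) := by rw [hrec]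
      have hstep : t j ≤ t (j+1) := by
        rw [htrec j hj1]
        exact Nat.le_mul_of_pos_right _ (by omega)
      have hIH := IH (j+1) (t j) (by omega) (by omega) hstep
      rw [hsub, hval]
      have hsplit : ∑ i ∈ Finset.Icc (j+1) (m+1), (1:ℝ)/(t i : ℝ)
          = 1/(t (j+1) : ℝ) + ∑ i ∈ Finset.Icc (j+2) (m+1), (1:ℝ)/(t i : ℝ) := by
        have hins : Finset.Icc (j+1) (m+1) = insert (j+1) (Finset.Icc (j+2) (m+1)) := by
          ext x
          simp only [Finset.mem_Icc, Finset.mem_insert]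
          omega
        rw [hins, Finset.sum_insert (by simp only [Finset.mem_Icc]; omega)]
      rw [hsplit]
      linarith
    · rw [if_neg hcnd]
      exact Finset.sum_nonneg (fun i _ => by positivity)


/-- For any integer `k ≥ 2` and reals `α₁, …, αₙ ∈ (0,1]`
with `Σ αᵢ ≤ 1`, we have `Σ fk k (αᵢ) ≤ T_k`, where the harmonic constant is
`T_k = Σ_{q=1}^{m} 1/t_q + k/(t_{m+1}·(k−1))` with `t` the Sylvester-type
sequence (`t 1 = 1`, `t (i+1) = t i · (t i + 1)`) and `m = m(k)` the unique
index with `t m ≤ k < t (m+1)`. -/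
theorem stmt8 (k : ℕ) (hk : 2 ≤ k)
    (t : ℕ → ℕ) (ht1 : t 1 = 1)
    (htrec : ∀ i, 1 ≤ i → t (i + 1) = t i * (t i + 1))
    (m : ℕ) (hm1 : 1 ≤ m) (hmlo : t m ≤ k) (hmhi : k < t (m + 1))
    (n : ℕ) (α : Fin n → ℝ)
    (hα : ∀ i, 0 < α i ∧ α i ≤ 1)
    (hsum : ∑ i, α i ≤ 1) :
    ∑ i, fk k (α i) ≤
      (∑ q ∈ Finset.Icc 1 m, (1 : ℝ) / (t q)) +
        (k : ℝ) / ((t (m + 1) : ℝ) * ((k : ℝ) - 1)) := by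
  classical
  have hkR : (0:ℝ) < (k:ℝ) := by exact_mod_cast (by omega : 0 < k)
  have htpos : ∀ i, 1 ≤ i → 1 ≤ t i := by
    intro i hi
    induction i, hi using Nat.le_induction with
    | base => omega
    | succ i hi ih =>
      rw [htrec i hi]
      exact Nat.one_le_iff_ne_zero.mpr (Nat.mul_ne_zero (by omega) (by omega))
  set qf : Fin n → ℕ := fun i => ⌊1/(α i)⌋₊ with hqf
  set S : Finset (Fin n) := Finset.univ.filter (fun i => 1/(k:ℝ) < α i) with hS
  have hfacts : ∀ i ∈ S, 1 ≤ qf i ∧ qf i + 1 ≤ k ∧ 1/((qf i : ℝ)+1) < α i ∧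
      fk k (α i) = 1/(qf i : ℝ) := by
    intro i hi
    have hαp := (hα i).1
    have hα1 := (hα i).2
    have hbig : 1/(k:ℝ) < α i := (Finset.mem_filter.mp hi).2
    have hinv1 : (1:ℝ) ≤ 1/(α i) := by
      rw [le_div_iff₀ hαp]; linarith
    have hq1 : 1 ≤ qf i := Nat.le_floor (by exact_mod_cast hinv1)
    have hinvk : 1/(α i) < (k:ℝ) := by
      rw [div_lt_iff₀ hkR] at hbig
      rw [div_lt_iff₀ hαp]
      nlinarith
    have hqk : qf i < k := by
      exact_mod_cast (Nat.floor_lt (by positivity)).mpr (by exact_mod_cast hinvk)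
    have hlow : 1/((qf i : ℝ)+1) < α i := by
      have h2 : 1/(α i) < (qf i : ℝ) + 1 := Nat.lt_floor_add_one _
      rw [div_lt_iff₀ hαp] at h2
      rw [div_lt_iff₀ (by positivity : (0:ℝ) < (qf i : ℝ)+1)]
      nlinarith
    exact ⟨hq1, by omega, hlow, by rw [fk, if_neg (not_le.mpr hbig)]⟩
  have hsplitS := Finset.sum_filter_add_sum_filter_not Finset.univ
    (fun i => 1/(k:ℝ) < α i) (fun i => fk k (α i))
  have hsplitα := Finset.sum_filter_add_sum_filter_not Finset.univ
    (fun i => 1/(k:ℝ) < α i) α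
  have hsmall : ∑ i ∈ Finset.univ.filter (fun i => ¬ (1/(k:ℝ) < α i)), fk k (α i)
      = ∑ i ∈ Finset.univ.filter (fun i => ¬ (1/(k:ℝ) < α i)), α i := by
    apply Finset.sum_congr rfl
    intro i hi
    have : ¬ (1/(k:ℝ) < α i) := (Finset.mem_filter.mp hi).2
    rw [fk, if_pos (not_lt.mp this)]
  have hbigle : ∑ i ∈ S, fk k (α i)
      ≤ ∑ i ∈ S, (α i + 1/((qf i : ℝ)*((qf i : ℝ)+1))) := by
    apply Finset.sum_le_sum
    intro i hi
    obtain ⟨hq1, hqk, hlow, hfki⟩ := hfacts i hi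
    have hqR : (1:ℝ) ≤ (qf i : ℝ) := by exact_mod_cast hq1
    have hid : 1/((qf i : ℝ)) - 1/((qf i : ℝ)+1) = 1/((qf i : ℝ)*((qf i : ℝ)+1)) := by
      field_simp
      ring
    rw [hfki]
    linarith
  -- bound on the extra value of big items
  have hPS : ∑ i ∈ S, 1/((qf i : ℝ)*((qf i : ℝ)+1))
      ≤ ∑ i ∈ Finset.Icc 2 (m+1), (1:ℝ)/(t i : ℝ) := by
    rcases S.eq_empty_or_nonempty with hSe | hSe
    · rw [hSe]
      simp only [Finset.sum_empty]
      exact Finset.sum_nonneg (fun i _ => by positivity)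
    · set M : Multiset ℕ := S.val.map qf with hM
      set L : List ℕ := M.sort (·≤·) with hL
      have hsorted : L.Pairwise (·≤·) := Multiset.pairwise_sort _ _
      have hLM : (L : Multiset ℕ) = M := Multiset.sort_eq _ _
      have hsumL : ∀ f : ℕ → ℝ, (L.map f).sum = ∑ i ∈ S, f (qf i) := by
        intro f
        have h1 : ((L : Multiset ℕ).map f).sum = (L.map f).sum := by
          rw [Multiset.map_coe, Multiset.sum_coe]
        rw [← h1, hLM, hM, Multiset.map_map]
        rfl
      have hmemL : ∀ q ∈ L, 1 ≤ q ∧ q + 1 ≤ k := by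
        intro q hq
        have hqM : q ∈ M := by
          rw [← hLM]; exact_mod_cast hq
        obtain ⟨i, hiS, rfl⟩ := Multiset.mem_map.mp hqM
        have hiS' : i ∈ S := hiS
        exact ⟨(hfacts i hiS').1, (hfacts i hiS').2.1⟩
      have hbudget : (L.map (fun q : ℕ => 1/((q:ℝ)+1))).sum < 1 := by
        rw [hsumL]
        have h1 : ∑ i ∈ S, 1/((qf i : ℝ)+1) < ∑ i ∈ S, α i :=
          Finset.sum_lt_sum_of_nonempty hSe (fun i hi => (hfacts i hi).2.2.1)
        have h2 : ∑ i ∈ S, α i ≤ ∑ i, α i :=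
          Finset.sum_le_sum_of_subset_of_nonneg (Finset.filter_subset _ _)
            (fun i _ _ => (hα i).1.le)
        linarith
      have hmain := Wf_main k L.length L hsorted 1 1 (le_refl 1) hmemL (le_refl _)
        one_pos (by norm_num) hbudget
      have hlevel := Wf_level k hk t htrec htpos m hmhi L.length 1 1 (le_refl 1)
        (by omega) (by omega)
      rw [ht1] at hlevel
      simp only [Nat.cast_one, one_div_one] at hlevel
      rw [hsumL] at hmain
      calc ∑ i ∈ S, 1/((qf i : ℝ)*((qf i : ℝ)+1)) ≤ Wf k L.length 1 1 := hmain
        _ ≤ ∑ i ∈ Finset.Icc 2 (m+1), (1:ℝ)/(t i : ℝ) := hlevel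
  -- final arithmetic
  have htm1R : (0:ℝ) < (t (m+1) : ℝ) := by exact_mod_cast htpos (m+1) (by omega)
  have hk1R : (0:ℝ) < (k:ℝ) - 1 := by
    have : (2:ℝ) ≤ (k:ℝ) := by exact_mod_cast hk
    linarith
  have hsplit1 : ∑ q ∈ Finset.Icc 1 m, (1:ℝ)/(t q : ℝ)
      = 1 + ∑ q ∈ Finset.Icc 2 m, (1:ℝ)/(t q : ℝ) := by
    have hins : Finset.Icc 1 m = insert 1 (Finset.Icc 2 m) := by
      ext x
      simp only [Finset.mem_Icc, Finset.mem_insert]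
      omega
    rw [hins, Finset.sum_insert (by simp only [Finset.mem_Icc]; omega), ht1]
    norm_num
  have hsplit2 : ∑ q ∈ Finset.Icc 2 (m+1), (1:ℝ)/(t q : ℝ)
      = 1/(t (m+1) : ℝ) + ∑ q ∈ Finset.Icc 2 m, (1:ℝ)/(t q : ℝ) := by
    have hins : Finset.Icc 2 (m+1) = insert (m+1) (Finset.Icc 2 m) := by
      ext x
      simp only [Finset.mem_Icc, Finset.mem_insert]
      omega
    rw [hins, Finset.sum_insert (by simp only [Finset.mem_Icc]; omega)]
  have hlast : 1/(t (m+1) : ℝ) ≤ (k:ℝ) / ((t (m+1) : ℝ) * ((k:ℝ) - 1)) := by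
    rw [div_le_div_iff₀ htm1R (by positivity)]
    nlinarith
  have hsumα : ∑ i ∈ S, α i + ∑ i ∈ Finset.univ.filter (fun i => ¬ (1/(k:ℝ) < α i)), α i
      = ∑ i, α i := hsplitα
  calc ∑ i, fk k (α i)
      = ∑ i ∈ S, fk k (α i)
        + ∑ i ∈ Finset.univ.filter (fun i => ¬ (1/(k:ℝ) < α i)), fk k (α i) := hsplitS.symm
    _ ≤ (∑ i ∈ S, α i + ∑ i ∈ S, 1/((qf i : ℝ)*((qf i : ℝ)+1)))
        + ∑ i ∈ Finset.univ.filter (fun i => ¬ (1/(k:ℝ) < α i)), α i := by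
        rw [hsmall, ← Finset.sum_add_distrib]
        exact add_le_add_left hbigle _
    _ ≤ 1 + ∑ i ∈ Finset.Icc 2 (m+1), (1:ℝ)/(t i : ℝ) := by
        have := hsumα
        linarith [hPS, hsum]
    _ ≤ (∑ q ∈ Finset.Icc 1 m, (1 : ℝ) / (t q)) +
        (k : ℝ) / ((t (m + 1) : ℝ) * ((k : ℝ) - 1)) := by
        rw [hsplit1, hsplit2]
        linarith
end
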